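/- arXiv:2107.09620 — 6 statements merged into one kernel-verified Lean document; each statement's English description precedes it below -/
import Mathlib

section
/- Let n ≥ 1 be an integer, let k, ℓ be real numbers with 0 ≤ k < n and 0 ≤ ℓ < n, let β > 0 with k + ℓ + β ≥ n and k + ℓ ≠ n, and let δ > 0. Then there exists a constant C > 0 (depending on n, k, ℓ, β, δ) such that for all distinct u₁, u₂ ∈ ℝⁿ: if |u₁−u₂| ≤ 1, then ∫_{ℝⁿ} ⟨z⟩^{−β−δ} |z−u₁|^{−k} |z−u₂|^{−ℓ} dz ≤ C |u₁−u₂|^{−max(0, k+ℓ−n)}; and if |u₁−u₂| > 1, then ∫_{ℝⁿ} ⟨z⟩^{−β−δ} |z−u₁|^{−k} |z−u₂|^{−ℓ} dz ≤ C |u₁−u₂|^{−min(k, ℓ, k+ℓ+β−n)}. -/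
open MeasureTheory Real Set Metric

section toolkit

lemma jap_pos {E : Type*} [NormedAddCommGroup E] (z : E) : 0 < Real.sqrt (1 + ‖z‖ ^ 2) :=
  Real.sqrt_pos.2 (by positivity)

lemma jap_one_le {E : Type*} [NormedAddCommGroup E] (z : E) : 1 ≤ Real.sqrt (1 + ‖z‖ ^ 2) := by
  exact Real.one_le_sqrt.2 (by nlinarith [sq_nonneg ‖z‖])

lemma norm_le_jap {E : Type*} [NormedAddCommGroup E] (z : E) : ‖z‖ ≤ Real.sqrt (1 + ‖z‖ ^ 2) := by
  rw [Real.le_sqrt (norm_nonneg z) (by positivity)]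
  nlinarith [sq_nonneg ‖z‖]

lemma jap_rpow_le_one {E : Type*} [NormedAddCommGroup E] (z : E) {p : ℝ} (hp : 0 ≤ p) :
    Real.sqrt (1 + ‖z‖ ^ 2) ^ (-p) ≤ 1 :=
  Real.rpow_le_one_of_one_le_of_nonpos (jap_one_le z) (by linarith)

lemma jap_rpow_mono {E : Type*} [NormedAddCommGroup E] (z : E) {p q : ℝ} (hpq : p ≤ q) :
    Real.sqrt (1 + ‖z‖ ^ 2) ^ (-q) ≤ Real.sqrt (1 + ‖z‖ ^ 2) ^ (-p) :=
  Real.rpow_le_rpow_of_exponent_le (jap_one_le z) (by linarith)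

lemma jap_eq_rpow {E : Type*} [NormedAddCommGroup E] (z : E) (p : ℝ) :
    Real.sqrt (1 + ‖z‖ ^ 2) ^ (-p) = ((1:ℝ) + ‖z‖ ^ 2) ^ (-p/2) := by
  rw [Real.sqrt_eq_rpow, ← Real.rpow_mul (by positivity : (0:ℝ) ≤ 1 + ‖z‖ ^ 2)]
  congr 1
  ring

lemma amgm_rpow {A B p q : ℝ} (hA : 0 < A) (hB : 0 < B) (hp : 0 ≤ p) (hq : 0 ≤ q) :
    A ^ (-p) * B ^ (-q) ≤ A ^ (-(p+q)) + B ^ (-(p+q)) := by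
  rcases le_total A B with h | h
  · have h1 : B ^ (-q) ≤ A ^ (-q) := Real.rpow_le_rpow_of_nonpos hA h (by linarith)
    have h2 : A ^ (-p) * B ^ (-q) ≤ A ^ (-p) * A ^ (-q) := by
      apply mul_le_mul_of_nonneg_left h1 (Real.rpow_nonneg hA.le _)
    rw [← Real.rpow_add hA] at h2
    have : -p + -q = -(p+q) := by ring
    rw [this] at h2
    exact h2.trans (le_add_of_nonneg_right (Real.rpow_nonneg hB.le _))
  · have h1 : A ^ (-p) ≤ B ^ (-p) := Real.rpow_le_rpow_of_nonpos hB h (by linarith)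
    have h2 : A ^ (-p) * B ^ (-q) ≤ B ^ (-p) * B ^ (-q) := by
      apply mul_le_mul_of_nonneg_right h1 (Real.rpow_nonneg hB.le _)
    rw [← Real.rpow_add hB] at h2
    have : -p + -q = -(p+q) := by ring
    rw [this] at h2
    exact h2.trans (le_add_of_nonneg_left (Real.rpow_nonneg hA.le _))

end toolkit

variable {n : ℕ}

/-- C1: global integrability of the Japanese bracket to power `-p`, `p > n`. -/
lemma jap_integrable (hp : (n : ℝ) < p) :
    Integrable (fun z : EuclideanSpace ℝ (Fin n) => Real.sqrt (1 + ‖z‖ ^ 2) ^ (-p)) := by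
  have h := integrable_rpow_neg_one_add_norm_sq
    (E := EuclideanSpace ℝ (Fin n)) (μ := volume) (r := p) (by rwa [finrank_euclideanSpace_fin])
  exact h.congr (ae_of_all _ fun z => (jap_eq_rpow z p).symm)

lemma jap_measurable (p : ℝ) :
    Measurable (fun z : EuclideanSpace ℝ (Fin n) => Real.sqrt (1 + ‖z‖ ^ 2) ^ (-p)) := by
  fun_prop

lemma norm_rpow_measurable (s : ℝ) (x : EuclideanSpace ℝ (Fin n)) :
    Measurable (fun z : EuclideanSpace ℝ (Fin n) => ‖z - x‖ ^ (-s)) := by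
  fun_prop
variable {n : ℕ}

private lemma nontriv (hn : 1 ≤ n) : Nontrivial (EuclideanSpace ℝ (Fin n)) :=
  Module.nontrivial_of_finrank_pos (R := ℝ) (by simp [finrank_euclideanSpace_fin]; omega)

/-- Ball integral: `∫_{ball x R} ‖z-x‖^{-s} = c R^{n-s}` for `0 ≤ s < n`. -/
lemma ball_int (hn : 1 ≤ n) {s : ℝ} (hs0 : 0 ≤ s) (hsn : s < n) :
    ∃ c > 0, ∀ (x : EuclideanSpace ℝ (Fin n)) (R : ℝ), 0 < R →
      IntegrableOn (fun z => ‖z - x‖ ^ (-s)) (ball x R) ∧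
      ∫ z in ball x R, ‖z - x‖ ^ (-s) = c * R ^ ((n : ℝ) - s) := by
  haveI := nontriv hn
  set E := EuclideanSpace ℝ (Fin n)
  set V : ℝ := (volume (ball (0 : E) 1)).toReal with hV
  have hVpos : 0 < V := ENNReal.toReal_pos (measure_ball_pos volume 0 one_pos).ne'
    measure_ball_lt_top.ne
  have hd : Module.finrank ℝ E = n := finrank_euclideanSpace_fin
  have hns : (0 : ℝ) < (n : ℝ) - s := by linarith
  refine ⟨n * V * ((n : ℝ) - s)⁻¹, by positivity, ?_⟩
  intro x R hR
  set f : ℝ → ℝ := (Ioo 0 R).indicator (fun y => y ^ (-s)) with hf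
  -- key identity for centered version
  have key : ∫ z : E, f ‖z‖ = n * V * (R ^ ((n:ℝ) - s) * ((n:ℝ) - s)⁻¹) := by
    rw [integral_fun_norm_addHaar volume f, hd]
    have h1 : ∫ y in Ioi (0:ℝ), y ^ (n - 1) • f y
        = ∫ y in Ioi (0:ℝ), (Ioo 0 R).indicator (fun y => y ^ (n-1) * y ^ (-s)) y := by
      refine integral_congr_ae (ae_of_all _ fun y => ?_)
      by_cases h : y ∈ Ioo (0:ℝ) R <;> simp [hf, h, smul_eq_mul]
    rw [h1, setIntegral_indicator measurableSet_Ioo]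
    have h2 : Ioi (0:ℝ) ∩ Ioo 0 R = Ioo 0 R := by
      ext y; simp only [mem_inter_iff, mem_Ioi, mem_Ioo]; tauto
    rw [h2]
    have h3 : ∫ y in Ioo (0:ℝ) R, y ^ (n-1) * y ^ (-s)
        = ∫ y in Ioo (0:ℝ) R, y ^ ((n:ℝ) - 1 - s) := by
      refine setIntegral_congr_fun measurableSet_Ioo fun y hy => ?_
      rw [← Real.rpow_natCast y (n-1), ← Real.rpow_add hy.1]
      congr 1
      rw [Nat.cast_sub hn]; ring
    rw [h3, ← integral_Ioc_eq_integral_Ioo, ← intervalIntegral.integral_of_le hR.le,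
      integral_rpow (Or.inl (by linarith))]
    have he : (n:ℝ) - 1 - s + 1 = (n:ℝ) - s := by ring
    have h0 : (0:ℝ) ^ ((n:ℝ) - s) = 0 := Real.zero_rpow (by linarith)
    rw [he, h0, nsmul_eq_mul, smul_eq_mul]
    rw [measureReal_def, ← hV]; ring
  have hint : Integrable (fun z : E => f ‖z‖) := by
    by_contra h
    rw [integral_undef h] at key
    have : 0 < n * V * (R ^ ((n:ℝ) - s) * ((n:ℝ) - s)⁻¹) := by
      have : (0:ℝ) < n := by exact_mod_cast Nat.lt_of_lt_of_le Nat.zero_lt_one hn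
      positivity
    linarith
  -- translate
  have hintx : Integrable (fun z : E => f ‖z - x‖) := hint.comp_sub_right x
  have hvalx : ∫ z : E, f ‖z - x‖ = ∫ z : E, f ‖z‖ :=
    integral_sub_right_eq_self (fun z : E => f ‖z‖) x
  -- identify with indicator of punctured ball
  have hiff : ∀ z : E, f ‖z - x‖ = (ball x R \ {x}).indicator (fun z => ‖z - x‖ ^ (-s)) z := by
    intro z
    by_cases h : z ∈ ball x R \ {x}
    · have h1 : ‖z - x‖ ∈ Ioo (0:ℝ) R := by
        constructor
        · exact norm_pos_iff.2 (sub_ne_zero.2 h.2)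
        · simpa [mem_ball, dist_eq_norm] using h.1
      simp [hf, indicator_of_mem, h, h1]
    · have h1 : ‖z - x‖ ∉ Ioo (0:ℝ) R := by
        intro hc
        apply h
        refine ⟨by simpa [mem_ball, dist_eq_norm] using hc.2, ?_⟩
        simp only [mem_singleton_iff]
        intro hz
        rw [hz] at hc
        simp at hc
      simp [hf, indicator_of_notMem, h, h1]
  have hnull : volume ({x} : Set E) = 0 := measure_singleton x
  have hmb : MeasurableSet (ball x R \ {x}) :=
    measurableSet_ball.diff (measurableSet_singleton x)
  constructor
  · -- integrability on ball
    have h1 : IntegrableOn (fun z : E => ‖z - x‖ ^ (-s)) (ball x R \ {x}) := by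
      rw [← integrable_indicator_iff hmb]
      exact hintx.congr (ae_of_all _ fun z => (hiff z))
    have h2 : IntegrableOn (fun z : E => ‖z - x‖ ^ (-s)) ({x} : Set E) := by
      unfold IntegrableOn
      rw [Measure.restrict_eq_zero.mpr hnull]
      exact integrable_zero_measure
    exact (h1.union h2).mono_set (by intro z hz; by_cases h : z = x <;> simp [h, hz])
  · -- value
    have h1 : ∫ z in ball x R, ‖z - x‖ ^ (-s)
        = ∫ z in ball x R \ {x}, ‖z - x‖ ^ (-s) := by
      refine (setIntegral_congr_set ?_).symm
      exact diff_ae_eq_self.2 (measure_mono_null Set.inter_subset_right hnull)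
    rw [h1, ← integral_indicator hmb, ← integral_congr_ae (ae_of_all _ fun z => (hiff z)),
      hvalx, key]
    ring

lemma compl_int (hn : 1 ≤ n) {s : ℝ} (hsn : (n : ℝ) < s) :
    ∃ c > 0, ∀ (x : EuclideanSpace ℝ (Fin n)) (R : ℝ), 0 < R →
      IntegrableOn (fun z => ‖z - x‖ ^ (-s)) ((ball x R)ᶜ) ∧
      ∫ z in (ball x R)ᶜ, ‖z - x‖ ^ (-s) = c * R ^ ((n : ℝ) - s) := by
  haveI := nontriv hn
  set E := EuclideanSpace ℝ (Fin n)
  set V : ℝ := (volume (ball (0 : E) 1)).toReal with hV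
  have hVpos : 0 < V := ENNReal.toReal_pos (measure_ball_pos volume 0 one_pos).ne'
    measure_ball_lt_top.ne
  have hd : Module.finrank ℝ E = n := finrank_euclideanSpace_fin
  have hns : (0 : ℝ) < s - (n : ℝ) := by linarith
  refine ⟨n * V * (s - (n : ℝ))⁻¹, by positivity, ?_⟩
  intro x R hR
  set f : ℝ → ℝ := (Ici R).indicator (fun y => y ^ (-s)) with hf
  have key : ∫ z : E, f ‖z‖ = n * V * (R ^ ((n:ℝ) - s) * (s - (n:ℝ))⁻¹) := by
    rw [integral_fun_norm_addHaar volume f, hd]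
    have h1 : ∫ y in Ioi (0:ℝ), y ^ (n - 1) • f y
        = ∫ y in Ioi (0:ℝ), (Ici R).indicator (fun y => y ^ (n-1) * y ^ (-s)) y := by
      refine integral_congr_ae (ae_of_all _ fun y => ?_)
      by_cases h : y ∈ Ici R <;> simp [hf, h, smul_eq_mul]
    rw [h1, setIntegral_indicator measurableSet_Ici]
    have h2 : Ioi (0:ℝ) ∩ Ici R = Ici R := by
      ext y; simp only [mem_inter_iff, mem_Ioi, mem_Ici]
      constructor
      · tauto
      · intro h; exact ⟨lt_of_lt_of_le hR h, h⟩
    rw [h2, integral_Ici_eq_integral_Ioi]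
    have h3 : ∫ y in Ioi R, y ^ (n-1) * y ^ (-s)
        = ∫ y in Ioi R, y ^ ((n:ℝ) - 1 - s) := by
      refine setIntegral_congr_fun measurableSet_Ioi fun y hy => ?_
      rw [← Real.rpow_natCast y (n-1), ← Real.rpow_add (lt_trans hR hy)]
      congr 1
      rw [Nat.cast_sub hn]; ring
    rw [h3, integral_Ioi_rpow_of_lt (by linarith) hR]
    have he : (n:ℝ) - 1 - s + 1 = (n:ℝ) - s := by ring
    rw [he, nsmul_eq_mul, smul_eq_mul]
    have hx : -R ^ ((n:ℝ) - s) / ((n:ℝ) - s) = R ^ ((n:ℝ) - s) * (s - (n:ℝ))⁻¹ := by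
      rw [div_eq_iff (by linarith : (n:ℝ) - s ≠ 0)]
      field_simp
      ring
    rw [hx]
    rw [measureReal_def, ← hV]; ring
  have hint : Integrable (fun z : E => f ‖z‖) := by
    by_contra h
    rw [integral_undef h] at key
    have hn0 : (0:ℝ) < n := by exact_mod_cast Nat.lt_of_lt_of_le Nat.zero_lt_one hn
    have h2 : (0:ℝ) < n * V * (R ^ ((n:ℝ) - s) * (s - (n:ℝ))⁻¹) := by positivity
    linarith
  have hintx : Integrable (fun z : E => f ‖z - x‖) := hint.comp_sub_right x
  have hvalx : ∫ z : E, f ‖z - x‖ = ∫ z : E, f ‖z‖ :=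
    integral_sub_right_eq_self (fun z : E => f ‖z‖) x
  have hiff : ∀ z : E, f ‖z - x‖ = ((ball x R)ᶜ).indicator (fun z => ‖z - x‖ ^ (-s)) z := by
    intro z
    have hmem : z ∈ (ball x R)ᶜ ↔ ‖z - x‖ ∈ Ici R := by
      rw [mem_compl_iff, mem_ball_iff_norm, not_lt, mem_Ici]
    by_cases h : z ∈ (ball x R)ᶜ
    · simp [hf, indicator_of_mem, h, hmem.1 h]
    · have : ‖z - x‖ ∉ Ici R := fun hc => h (hmem.2 hc)
      simp [hf, indicator_of_notMem, h, this]
  have hmb : MeasurableSet ((ball x R)ᶜ : Set E) := measurableSet_ball.compl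
  constructor
  · rw [← integrable_indicator_iff hmb]
    exact hintx.congr (ae_of_all _ fun z => (hiff z))
  · rw [← integral_indicator hmb, ← integral_congr_ae (ae_of_all _ fun z => (hiff z)),
      hvalx, key]
    ring

/-- C2: global integrability of `⟨z⟩^{-a} ‖z‖^{-s}` when `s < n < a + s`. -/
lemma jap_norm_integrable (hn : 1 ≤ n) {s a : ℝ} (hs0 : 0 ≤ s) (hsn : s < n)
    (ha : 0 ≤ a) (hna : (n : ℝ) < a + s) :
    Integrable (fun z : EuclideanSpace ℝ (Fin n) =>
      Real.sqrt (1 + ‖z‖ ^ 2) ^ (-a) * ‖z‖ ^ (-s)) := by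
  set E := EuclideanSpace ℝ (Fin n)
  have hmeas : Measurable (fun z : E => Real.sqrt (1 + ‖z‖ ^ 2) ^ (-a) * ‖z‖ ^ (-s)) := by
    fun_prop
  obtain ⟨c, hc, hb⟩ := ball_int hn hs0 hsn
  have h1 : IntegrableOn (fun z : E => Real.sqrt (1 + ‖z‖ ^ 2) ^ (-a) * ‖z‖ ^ (-s))
      (ball (0 : E) 1) := by
    have hb1 := (hb 0 1 one_pos).1
    refine Integrable.mono' (g := fun z => ‖z - 0‖ ^ (-s)) hb1 hmeas.aestronglyMeasurable ?_
    refine ae_of_all _ fun z => ?_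
    simp only [Real.norm_eq_abs, sub_zero]
    rw [abs_of_nonneg (by positivity)]
    exact mul_le_of_le_one_left (Real.rpow_nonneg (norm_nonneg z) _) (jap_rpow_le_one z ha)
  have h2 : IntegrableOn (fun z : E => Real.sqrt (1 + ‖z‖ ^ 2) ^ (-a) * ‖z‖ ^ (-s))
      ((ball (0 : E) 1)ᶜ) := by
    have hint : Integrable (fun z : E =>
        Real.sqrt 2 ^ s * Real.sqrt (1 + ‖z‖ ^ 2) ^ (-(a + s))) :=
      (jap_integrable (by linarith)).const_mul _
    refine Integrable.mono' (g := fun z => Real.sqrt 2 ^ s * Real.sqrt (1 + ‖z‖ ^ 2) ^ (-(a + s)))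
      hint.integrableOn hmeas.aestronglyMeasurable ?_
    filter_upwards [ae_restrict_mem measurableSet_ball.compl] with z hz
    have h1z : (1 : ℝ) ≤ ‖z‖ := by simpa [mem_ball, dist_eq_norm] using hz
    rw [Real.norm_eq_abs, abs_of_nonneg (by positivity)]
    have hjap := jap_pos z
    have hle : Real.sqrt (1 + ‖z‖ ^ 2) / Real.sqrt 2 ≤ ‖z‖ := by
      rw [div_le_iff₀ (by positivity)]
      have h2' : Real.sqrt (1 + ‖z‖ ^ 2) ≤ Real.sqrt (2 * ‖z‖ ^ 2) :=
        Real.sqrt_le_sqrt (by nlinarith)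
      rw [Real.sqrt_mul (by norm_num) _, Real.sqrt_sq (norm_nonneg z)] at h2'
      linarith [h2']
    have hs' : ‖z‖ ^ (-s) ≤ (Real.sqrt (1 + ‖z‖ ^ 2) / Real.sqrt 2) ^ (-s) :=
      Real.rpow_le_rpow_of_nonpos (by positivity) hle (by linarith)
    have heq : (Real.sqrt (1 + ‖z‖ ^ 2) / Real.sqrt 2) ^ (-s)
        = Real.sqrt 2 ^ s * Real.sqrt (1 + ‖z‖ ^ 2) ^ (-s) := by
      rw [Real.div_rpow hjap.le (Real.sqrt_nonneg 2), Real.rpow_neg (Real.sqrt_nonneg 2) s]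
      field_simp
    calc Real.sqrt (1 + ‖z‖ ^ 2) ^ (-a) * ‖z‖ ^ (-s)
        ≤ Real.sqrt (1 + ‖z‖ ^ 2) ^ (-a) * (Real.sqrt 2 ^ s * Real.sqrt (1 + ‖z‖ ^ 2) ^ (-s)) := by
          rw [← heq]
          exact mul_le_mul_of_nonneg_left hs' (Real.rpow_nonneg hjap.le _)
      _ = Real.sqrt 2 ^ s * Real.sqrt (1 + ‖z‖ ^ 2) ^ (-(a + s)) := by
          rw [show -(a+s) = -a + -s by ring, Real.rpow_add hjap]
          ring
  have := h1.union h2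
  rw [union_compl_self] at this
  exact integrableOn_univ.1 this

/-- Lemma G: uniform bound on `∫ ⟨z⟩^{-a} ‖z-x‖^{-s}` for `0 ≤ s < n < a+s`. -/
lemma unif_bound (hn : 1 ≤ n) {s a : ℝ} (hs0 : 0 ≤ s) (hsn : s < n)
    (ha : 0 ≤ a) (hna : (n : ℝ) < a + s) :
    ∃ C > 0, ∀ x : EuclideanSpace ℝ (Fin n),
      Integrable (fun z : EuclideanSpace ℝ (Fin n) =>
        Real.sqrt (1 + ‖z‖ ^ 2) ^ (-a) * ‖z - x‖ ^ (-s)) ∧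
      ∫ z : EuclideanSpace ℝ (Fin n),
        Real.sqrt (1 + ‖z‖ ^ 2) ^ (-a) * ‖z - x‖ ^ (-s) ≤ C := by
  set E := EuclideanSpace ℝ (Fin n)
  obtain ⟨c₁, hc₁, hb₁⟩ := ball_int hn hs0 hsn
  have hI₂int := jap_norm_integrable hn hs0 hsn ha hna
  set I₂ : ℝ := ∫ z : E, Real.sqrt (1 + ‖z‖ ^ 2) ^ (-a) * ‖z‖ ^ (-s) with hI₂
  have hI₂0 : 0 ≤ I₂ := integral_nonneg fun z => by positivity
  have h3s : (1:ℝ) ≤ 3 ^ s := Real.one_le_rpow (by norm_num) hs0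
  refine ⟨(2:ℝ) ^ a * c₁ + 3 ^ s * I₂ + 1, by positivity, fun x => ?_⟩
  have hmeas : Measurable (fun z : E => Real.sqrt (1 + ‖z‖ ^ 2) ^ (-a) * ‖z - x‖ ^ (-s)) := by
    fun_prop
  by_cases hx : x = 0
  · subst hx
    have hEq : (fun z : E => Real.sqrt (1 + ‖z‖ ^ 2) ^ (-a) * ‖z - 0‖ ^ (-s))
        = fun z : E => Real.sqrt (1 + ‖z‖ ^ 2) ^ (-a) * ‖z‖ ^ (-s) := by
      funext z; rw [sub_zero]
    rw [hEq]
    refine ⟨hI₂int, ?_⟩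
    rw [← hI₂]
    nlinarith [mul_pos (Real.rpow_pos_of_pos (by norm_num : (0:ℝ) < 2) a) hc₁]
  · haveI := nontriv hn
    set r : ℝ := ‖x‖ / 2 with hr
    have hxpos : 0 < ‖x‖ := norm_pos_iff.2 hx
    have hrpos : 0 < r := by positivity
    set K₁ : ℝ := Real.sqrt (1 + r ^ 2) ^ (-a) with hK₁
    have hsq : 0 < Real.sqrt (1 + r ^ 2) := Real.sqrt_pos.2 (by positivity)
    have hK₁pos : 0 < K₁ := Real.rpow_pos_of_pos hsq _
    set g : EuclideanSpace ℝ (Fin n) → ℝ := fun z =>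
      (ball x r).indicator (fun z => K₁ * ‖z - x‖ ^ (-s)) z
        + 3 ^ s * (Real.sqrt (1 + ‖z‖ ^ 2) ^ (-a) * ‖z‖ ^ (-s)) with hg
    have hgi1 : Integrable ((ball x r).indicator (fun z : E => K₁ * ‖z - x‖ ^ (-s))) :=
      (integrable_indicator_iff measurableSet_ball).2 (((hb₁ x r hrpos).1).const_mul K₁)
    have hgi2 : Integrable (fun z : E =>
        3 ^ s * (Real.sqrt (1 + ‖z‖ ^ 2) ^ (-a) * ‖z‖ ^ (-s))) := hI₂int.const_mul _
    have hgint : Integrable g := hgi1.add hgi2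
    have hae : ∀ᵐ z : E, Real.sqrt (1 + ‖z‖ ^ 2) ^ (-a) * ‖z - x‖ ^ (-s) ≤ g z := by
      have h0 : ∀ᵐ z : E, z ∉ ({0} : Set E) :=
        (MeasureTheory.measure_eq_zero_iff_ae_notMem).1 (measure_singleton _)
      filter_upwards [h0] with z hz0
      have hz0' : z ≠ 0 := by simpa using hz0
      by_cases hzb : z ∈ ball x r
      · have hnz : r ≤ ‖z‖ := by
          have h1 : ‖z - x‖ < r := by exact mem_ball_iff_norm.1 hzb
          have h2 : ‖x‖ - ‖z‖ ≤ ‖x - z‖ := norm_sub_norm_le x z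
          have h3 : ‖x - z‖ = ‖z - x‖ := norm_sub_rev x z
          simp only [hr]; linarith
        have hKb : Real.sqrt (1 + ‖z‖ ^ 2) ^ (-a) ≤ K₁ := by
          refine Real.rpow_le_rpow_of_nonpos hsq (Real.sqrt_le_sqrt ?_) (by linarith)
          nlinarith
        have h1 : Real.sqrt (1 + ‖z‖ ^ 2) ^ (-a) * ‖z - x‖ ^ (-s) ≤ K₁ * ‖z - x‖ ^ (-s) :=
          mul_le_mul_of_nonneg_right hKb (Real.rpow_nonneg (norm_nonneg _) _)
        rw [hg]
        simp only [indicator_of_mem hzb]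
        have h2 : (0:ℝ) ≤ 3 ^ s * (Real.sqrt (1 + ‖z‖ ^ 2) ^ (-a) * ‖z‖ ^ (-s)) := by positivity
        linarith
      · have hρ : r ≤ ‖z - x‖ := not_lt.1 (mt mem_ball_iff_norm.2 hzb)
        have hzpos : 0 < ‖z‖ := norm_pos_iff.2 hz0'
        have hgeo : ‖z‖ / 3 ≤ ‖z - x‖ := by
          rcases le_or_gt ‖z‖ (3 * r) with h | h
          · linarith
          · have h2 : ‖z‖ - ‖x‖ ≤ ‖z - x‖ := norm_sub_norm_le z x
            have h3 : ‖x‖ = 2 * r := by rw [hr]; ring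
            linarith
        have h1 : ‖z - x‖ ^ (-s) ≤ (‖z‖ / 3) ^ (-s) :=
          Real.rpow_le_rpow_of_nonpos (by positivity) hgeo (by linarith)
        have h2 : (‖z‖ / 3) ^ (-s) = 3 ^ s * ‖z‖ ^ (-s) := by
          rw [Real.div_rpow (norm_nonneg z) (by norm_num : (0:ℝ) ≤ 3),
            Real.rpow_neg (by norm_num : (0:ℝ) ≤ 3) s]
          field_simp
        rw [hg]
        simp only [indicator_of_notMem hzb, zero_add]
        calc Real.sqrt (1 + ‖z‖ ^ 2) ^ (-a) * ‖z - x‖ ^ (-s)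
            ≤ Real.sqrt (1 + ‖z‖ ^ 2) ^ (-a) * (3 ^ s * ‖z‖ ^ (-s)) := by
              rw [← h2]
              exact mul_le_mul_of_nonneg_left h1 (Real.rpow_nonneg (jap_pos z).le _)
          _ = 3 ^ s * (Real.sqrt (1 + ‖z‖ ^ 2) ^ (-a) * ‖z‖ ^ (-s)) := by ring
    have hfint : Integrable (fun z : E => Real.sqrt (1 + ‖z‖ ^ 2) ^ (-a) * ‖z - x‖ ^ (-s)) := by
      refine Integrable.mono' hgint hmeas.aestronglyMeasurable ?_
      filter_upwards [hae] with z hz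
      rw [Real.norm_eq_abs, abs_of_nonneg (by positivity)]
      exact hz
    refine ⟨hfint, ?_⟩
    have hle : ∫ z : E, Real.sqrt (1 + ‖z‖ ^ 2) ^ (-a) * ‖z - x‖ ^ (-s) ≤ ∫ z : E, g z :=
      integral_mono_of_nonneg (ae_of_all _ fun z => by positivity) hgint hae
    have hgval : ∫ z : E, g z = K₁ * (c₁ * r ^ ((n:ℝ) - s)) + 3 ^ s * I₂ := by
      rw [hg, integral_add hgi1 hgi2, integral_indicator measurableSet_ball,
        integral_const_mul, integral_const_mul, (hb₁ x r hrpos).2, hI₂]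
    have hKr : K₁ * (r ^ ((n:ℝ) - s)) ≤ 2 ^ a := by
      have h2a : (1:ℝ) ≤ 2 ^ a := Real.one_le_rpow (by norm_num) ha
      rcases le_or_gt r 1 with h | h
      · have hK1 : K₁ ≤ 1 := Real.rpow_le_one_of_one_le_of_nonpos
          (Real.one_le_sqrt.2 (by nlinarith)) (by linarith)
        have hr1 : r ^ ((n:ℝ) - s) ≤ 1 := Real.rpow_le_one hrpos.le h (by linarith)
        nlinarith [hK₁pos.le, Real.rpow_nonneg hrpos.le ((n:ℝ) - s)]
      · have hsr : r ≤ Real.sqrt (1 + r ^ 2) := by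
          rw [Real.le_sqrt hrpos.le (by positivity)]
          nlinarith
        have hK1 : K₁ ≤ r ^ (-a) :=
          Real.rpow_le_rpow_of_nonpos hrpos hsr (by linarith)
        have hmul : r ^ (-a) * r ^ ((n:ℝ) - s) = r ^ ((n:ℝ) - s - a) := by
          rw [← Real.rpow_add hrpos]; ring_nf
        have hle1 : r ^ ((n:ℝ) - s - a) ≤ 1 :=
          Real.rpow_le_one_of_one_le_of_nonpos h.le (by linarith)
        calc K₁ * r ^ ((n:ℝ) - s) ≤ r ^ (-a) * r ^ ((n:ℝ) - s) :=
              mul_le_mul_of_nonneg_right hK1 (Real.rpow_nonneg hrpos.le _)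
          _ = r ^ ((n:ℝ) - s - a) := hmul
          _ ≤ 1 := hle1
          _ ≤ 2 ^ a := h2a
    have : K₁ * (c₁ * r ^ ((n:ℝ) - s)) ≤ 2 ^ a * c₁ := by
      have := mul_le_mul_of_nonneg_right hKr hc₁.le
      calc K₁ * (c₁ * r ^ ((n:ℝ) - s)) = K₁ * r ^ ((n:ℝ) - s) * c₁ := by ring
        _ ≤ 2 ^ a * c₁ := this
    rw [hgval] at hle
    linarith

/-- Lemma G': uniform bound on the exterior integral `∫_{‖z-x‖≥r} ⟨z⟩^{-a}‖z-x‖^{-s}`,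
for `a + s > n`, `r ≥ 1/2`. -/
lemma exterior_bound (hn : 1 ≤ n) {s a : ℝ} (hs0 : 0 ≤ s) (ha : 0 ≤ a) (hna : (n : ℝ) < a + s) :
    ∃ C > 0, ∀ (x : EuclideanSpace ℝ (Fin n)) (r : ℝ), 1/2 ≤ r →
      IntegrableOn (fun z : EuclideanSpace ℝ (Fin n) =>
        Real.sqrt (1 + ‖z‖ ^ 2) ^ (-a) * ‖z - x‖ ^ (-s)) ((ball x r)ᶜ) ∧
      ∫ z in (ball x r)ᶜ, Real.sqrt (1 + ‖z‖ ^ 2) ^ (-a) * ‖z - x‖ ^ (-s) ≤ C := by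
  set E := EuclideanSpace ℝ (Fin n)
  obtain ⟨c₂, hc₂, hb₂⟩ := compl_int hn (show (n:ℝ) < a + s from hna)
  have hjint : Integrable (fun z : E => Real.sqrt (1 + ‖z‖ ^ 2) ^ (-(a+s))) :=
    jap_integrable hna
  set J : ℝ := ∫ z : E, Real.sqrt (1 + ‖z‖ ^ 2) ^ (-(a+s)) with hJ
  have hJ0 : 0 ≤ J := integral_nonneg fun z => by positivity
  refine ⟨6 ^ s * J + c₂ * 2 ^ (a + s - (n:ℝ)) + 1, by positivity, fun x r hr => ?_⟩
  have hrpos : 0 < r := lt_of_lt_of_le (by norm_num) hr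
  set T : Set E := (ball x r)ᶜ with hT
  have hTmeas : MeasurableSet T := measurableSet_ball.compl
  set g : E → ℝ := fun z => 6 ^ s * Real.sqrt (1 + ‖z‖ ^ 2) ^ (-(a+s)) + ‖z - x‖ ^ (-(a+s))
    with hg
  have hgi1 : Integrable (fun z : E => 6 ^ s * Real.sqrt (1 + ‖z‖ ^ 2) ^ (-(a+s))) :=
    hjint.const_mul _
  have hgi2 : IntegrableOn (fun z : E => ‖z - x‖ ^ (-(a+s))) T := (hb₂ x r hrpos).1
  have hgint : IntegrableOn g T := hgi1.integrableOn.add hgi2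
  have hae : ∀ᵐ z ∂(volume.restrict T),
      Real.sqrt (1 + ‖z‖ ^ 2) ^ (-a) * ‖z - x‖ ^ (-s) ≤ g z := by
    filter_upwards [ae_restrict_mem hTmeas] with z hz
    have hρ : r ≤ ‖z - x‖ := by simpa [hT, mem_ball, dist_eq_norm, not_lt] using hz
    have hρpos : 0 < ‖z - x‖ := lt_of_lt_of_le hrpos hρ
    have hjap := jap_pos z
    rcases le_or_gt (Real.sqrt (1 + ‖z‖ ^ 2)) (6 * ‖z - x‖) with h | h
    · have h1 : Real.sqrt (1 + ‖z‖ ^ 2) / 6 ≤ ‖z - x‖ := by linarith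
      have h2 : ‖z - x‖ ^ (-s) ≤ (Real.sqrt (1 + ‖z‖ ^ 2) / 6) ^ (-s) :=
        Real.rpow_le_rpow_of_nonpos (by positivity) h1 (by linarith)
      have h3 : (Real.sqrt (1 + ‖z‖ ^ 2) / 6) ^ (-s)
          = 6 ^ s * Real.sqrt (1 + ‖z‖ ^ 2) ^ (-s) := by
        rw [Real.div_rpow hjap.le (by norm_num : (0:ℝ) ≤ 6),
          Real.rpow_neg (by norm_num : (0:ℝ) ≤ 6) s]
        field_simp
      have h4 : Real.sqrt (1 + ‖z‖ ^ 2) ^ (-a) * ‖z - x‖ ^ (-s)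
          ≤ 6 ^ s * Real.sqrt (1 + ‖z‖ ^ 2) ^ (-(a+s)) := by
        calc Real.sqrt (1 + ‖z‖ ^ 2) ^ (-a) * ‖z - x‖ ^ (-s)
            ≤ Real.sqrt (1 + ‖z‖ ^ 2) ^ (-a) * (6 ^ s * Real.sqrt (1 + ‖z‖ ^ 2) ^ (-s)) := by
              rw [← h3]
              exact mul_le_mul_of_nonneg_left h2 (Real.rpow_nonneg hjap.le _)
          _ = 6 ^ s * Real.sqrt (1 + ‖z‖ ^ 2) ^ (-(a+s)) := by
              rw [show -(a+s) = -a + -s by ring, Real.rpow_add hjap]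
              ring
      rw [hg]
      have : (0:ℝ) ≤ ‖z - x‖ ^ (-(a+s)) := Real.rpow_nonneg (norm_nonneg _) _
      dsimp only
      linarith
    · have h1 : ‖z - x‖ ≤ Real.sqrt (1 + ‖z‖ ^ 2) := by nlinarith
      have h2 : Real.sqrt (1 + ‖z‖ ^ 2) ^ (-a) ≤ (6 * ‖z - x‖) ^ (-a) :=
        Real.rpow_le_rpow_of_nonpos (by positivity) h.le (by linarith)
      have h3 : (6 * ‖z - x‖) ^ (-a) ≤ ‖z - x‖ ^ (-a) := by
        refine Real.rpow_le_rpow_of_nonpos hρpos (by linarith) (by linarith)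
      have h4 : Real.sqrt (1 + ‖z‖ ^ 2) ^ (-a) * ‖z - x‖ ^ (-s)
          ≤ ‖z - x‖ ^ (-(a+s)) := by
        calc Real.sqrt (1 + ‖z‖ ^ 2) ^ (-a) * ‖z - x‖ ^ (-s)
            ≤ ‖z - x‖ ^ (-a) * ‖z - x‖ ^ (-s) :=
              mul_le_mul_of_nonneg_right (h2.trans h3) (Real.rpow_nonneg (norm_nonneg _) _)
          _ = ‖z - x‖ ^ (-(a+s)) := by
              rw [← Real.rpow_add hρpos]; ring_nf
      rw [hg]
      have : (0:ℝ) ≤ 6 ^ s * Real.sqrt (1 + ‖z‖ ^ 2) ^ (-(a+s)) := by positivity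
      dsimp only
      linarith
  have hmeas : Measurable (fun z : E => Real.sqrt (1 + ‖z‖ ^ 2) ^ (-a) * ‖z - x‖ ^ (-s)) := by
    fun_prop
  have hfint : IntegrableOn (fun z : E =>
      Real.sqrt (1 + ‖z‖ ^ 2) ^ (-a) * ‖z - x‖ ^ (-s)) T := by
    refine Integrable.mono' hgint hmeas.aestronglyMeasurable.restrict ?_
    filter_upwards [hae] with z hz
    rw [Real.norm_eq_abs, abs_of_nonneg (by positivity)]
    exact hz
  refine ⟨hfint, ?_⟩
  have hle : ∫ z in T, Real.sqrt (1 + ‖z‖ ^ 2) ^ (-a) * ‖z - x‖ ^ (-s) ≤ ∫ z in T, g z :=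
    integral_mono_of_nonneg (ae_of_all _ fun z => by positivity) hgint hae
  have hval : ∫ z in T, g z = (∫ z in T, 6 ^ s * Real.sqrt (1 + ‖z‖ ^ 2) ^ (-(a+s)))
      + ∫ z in T, ‖z - x‖ ^ (-(a+s)) := integral_add hgi1.integrableOn hgi2
  have h1 : ∫ z in T, 6 ^ s * Real.sqrt (1 + ‖z‖ ^ 2) ^ (-(a+s)) ≤ 6 ^ s * J := by
    rw [integral_const_mul]
    refine mul_le_mul_of_nonneg_left ?_ (by positivity)
    exact setIntegral_le_integral hjint (ae_of_all _ fun z => by positivity)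
  have h2 : ∫ z in T, ‖z - x‖ ^ (-(a+s)) ≤ c₂ * 2 ^ (a + s - (n:ℝ)) := by
    rw [(hb₂ x r hrpos).2]
    refine mul_le_mul_of_nonneg_left ?_ hc₂.le
    have he : ((n:ℝ) - (a+s)) ≤ 0 := by linarith
    calc r ^ ((n:ℝ) - (a+s)) ≤ (1/2 : ℝ) ^ ((n:ℝ) - (a+s)) :=
          Real.rpow_le_rpow_of_nonpos (by norm_num) hr he
      _ = 2 ^ (a + s - (n:ℝ)) := by
          rw [show (1/2 : ℝ) = 2⁻¹ by norm_num,
            Real.inv_rpow (by norm_num : (0:ℝ) ≤ 2), ← Real.rpow_neg (by norm_num : (0:ℝ) ≤ 2)]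
          congr 1
          ring
  rw [hval] at hle
  linarith

/-- Lemma H: growth bound for `∫_{ball x R} ⟨z⟩^{-a}‖z-x‖^{-s}`, `R ≥ 1/2`. -/
lemma ball_growth (hn : 1 ≤ n) {s a t : ℝ} (hs0 : 0 ≤ s) (hsn : s < n) (ha : 0 < a)
    (ht : 0 < t) :
    ∃ C > 0, ∀ (x : EuclideanSpace ℝ (Fin n)) (R : ℝ), 1/2 ≤ R →
      IntegrableOn (fun z : EuclideanSpace ℝ (Fin n) =>
        Real.sqrt (1 + ‖z‖ ^ 2) ^ (-a) * ‖z - x‖ ^ (-s)) (ball x R) ∧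
      ∫ z in ball x R, Real.sqrt (1 + ‖z‖ ^ 2) ^ (-a) * ‖z - x‖ ^ (-s)
        ≤ C * R ^ (max 0 ((n:ℝ) - s - a + t)) := by
  set E := EuclideanSpace ℝ (Fin n)
  rcases le_or_gt ((n:ℝ) - s - a + t) 0 with hσ | hσ
  · -- bounded case: `a + s ≥ n + t > n`
    have hσeq : max 0 ((n:ℝ) - s - a + t) = 0 := max_eq_left hσ
    obtain ⟨C, hC, hG⟩ := unif_bound hn hs0 hsn ha.le (by linarith : (n:ℝ) < a + s)
    refine ⟨C, hC, fun x R hR => ?_⟩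
    obtain ⟨hint, hval⟩ := hG x
    refine ⟨hint.integrableOn, ?_⟩
    rw [hσeq, Real.rpow_zero, mul_one]
    exact (setIntegral_le_integral hint (ae_of_all _ fun z => by positivity)).trans hval
  · have hσeq : max 0 ((n:ℝ) - s - a + t) = (n:ℝ) - s - a + t := max_eq_right hσ.le
    set σ : ℝ := (n:ℝ) - s - a + t with hσdef
    rcases le_or_gt ((n:ℝ) - s) σ with h2 | h2
    · -- crude case: `σ ≥ n - s`, bound `⟨z⟩^{-a} ≤ 1`
      obtain ⟨c₁, hc₁, hb₁⟩ := ball_int hn hs0 hsn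
      refine ⟨c₁ * 2 ^ σ, by positivity, fun x R hR => ?_⟩
      have hRpos : 0 < R := lt_of_lt_of_le (by norm_num) hR
      obtain ⟨hint₁, hval₁⟩ := hb₁ x R hRpos
      have hmeas : Measurable (fun z : E =>
          Real.sqrt (1 + ‖z‖ ^ 2) ^ (-a) * ‖z - x‖ ^ (-s)) := by fun_prop
      have haeb : ∀ᵐ z ∂(volume.restrict (ball x R)),
          Real.sqrt (1 + ‖z‖ ^ 2) ^ (-a) * ‖z - x‖ ^ (-s) ≤ ‖z - x‖ ^ (-s) :=
        ae_of_all _ fun z => mul_le_of_le_one_left (Real.rpow_nonneg (norm_nonneg _) _)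
          (jap_rpow_le_one z ha.le)
      have hfint : IntegrableOn (fun z : E =>
          Real.sqrt (1 + ‖z‖ ^ 2) ^ (-a) * ‖z - x‖ ^ (-s)) (ball x R) := by
        refine Integrable.mono' hint₁ hmeas.aestronglyMeasurable.restrict ?_
        filter_upwards [haeb] with z hz
        rw [Real.norm_eq_abs, abs_of_nonneg (by positivity)]
        exact hz
      refine ⟨hfint, ?_⟩
      have hle := integral_mono_of_nonneg (ae_of_all _ fun z : E => by positivity) hint₁ haeb
      rw [hval₁] at hle
      refine hle.trans ?_
      rw [hσeq]
      have hre : R ^ ((n:ℝ) - s) ≤ 2 ^ σ * R ^ σ := by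
        have key : R ^ ((n:ℝ) - s) = R ^ ((n:ℝ) - s - σ) * R ^ σ := by
          rw [← Real.rpow_add hRpos]; ring_nf
        rw [key]
        refine mul_le_mul_of_nonneg_right ?_ (Real.rpow_nonneg hRpos.le _)
        calc R ^ ((n:ℝ) - s - σ) ≤ (1/2 : ℝ) ^ ((n:ℝ) - s - σ) :=
              Real.rpow_le_rpow_of_nonpos (by norm_num) hR (by linarith)
          _ = 2 ^ (σ - ((n:ℝ) - s)) := by
              rw [show (1/2 : ℝ) = 2⁻¹ by norm_num,
                Real.inv_rpow (by norm_num : (0:ℝ) ≤ 2),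
                ← Real.rpow_neg (by norm_num : (0:ℝ) ≤ 2)]
              congr 1; ring
          _ ≤ 2 ^ σ := Real.rpow_le_rpow_of_exponent_le (by norm_num) (by linarith)
      calc c₁ * R ^ ((n:ℝ) - s) ≤ c₁ * (2 ^ σ * R ^ σ) :=
            mul_le_mul_of_nonneg_left hre hc₁.le
        _ = c₁ * 2 ^ σ * R ^ σ := by ring
    · -- intermediate case: use weight `‖z‖^{-e}` with `e = n - s - σ ∈ (0, a)`
      set e : ℝ := (n:ℝ) - s - σ with he
      have he0 : 0 < e := by simp only [he]; linarith
      have hea : e < a := by simp only [he, hσdef]; linarith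
      have hse0 : 0 ≤ s + e := by linarith
      have hsen : s + e < (n:ℝ) := by simp only [he]; linarith
      obtain ⟨c₃, hc₃, hb₃⟩ := ball_int hn hse0 hsen
      refine ⟨3 * c₃, by positivity, fun x R hR => ?_⟩
      have hRpos : 0 < R := lt_of_lt_of_le (by norm_num) hR
      obtain ⟨hint₀, hval₀⟩ := hb₃ (0 : E) R hRpos
      obtain ⟨hintx, hvalx⟩ := hb₃ x R hRpos
      have hint₀' : IntegrableOn (fun z : E => ‖z‖ ^ (-(s+e))) (ball (0:E) R) := by
        refine hint₀.congr (ae_of_all _ fun z => by simp)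
      have hval₀' : ∫ z in ball (0:E) R, ‖z‖ ^ (-(s+e)) = c₃ * R ^ ((n:ℝ) - (s+e)) := by
        rw [← hval₀]
        exact setIntegral_congr_fun measurableSet_ball fun z _ => by rw [sub_zero]
      set g : E → ℝ := fun z =>
        (ball (0:E) R).indicator (fun z => ‖z‖ ^ (-(s+e))) z + 2 * ‖z - x‖ ^ (-(s+e)) with hg
      have hgi1 : Integrable ((ball (0:E) R).indicator (fun z : E => ‖z‖ ^ (-(s+e)))) :=
        (integrable_indicator_iff measurableSet_ball).2 hint₀'
      have hgint : IntegrableOn g (ball x R) :=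
        hgi1.integrableOn.add ((hintx.const_mul 2))
      haveI := nontriv hn
      have hae : ∀ᵐ z ∂(volume.restrict (ball x R)),
          Real.sqrt (1 + ‖z‖ ^ 2) ^ (-a) * ‖z - x‖ ^ (-s) ≤ g z := by
        have h0 : ∀ᵐ z : E, z ∉ ({0} : Set E) :=
          (MeasureTheory.measure_eq_zero_iff_ae_notMem).1 (measure_singleton _)
        have h0x : ∀ᵐ z : E, z ∉ ({x} : Set E) :=
          (MeasureTheory.measure_eq_zero_iff_ae_notMem).1 (measure_singleton _)
        filter_upwards [ae_restrict_mem measurableSet_ball, ae_restrict_of_ae h0,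
          ae_restrict_of_ae h0x] with z hzb hz0 hzx
        have hz0' : z ≠ 0 := by simpa using hz0
        have hzx' : z ≠ x := by simpa using hzx
        have hznorm : 0 < ‖z‖ := norm_pos_iff.2 hz0'
        have hρpos : 0 < ‖z - x‖ := by
          rw [norm_pos_iff, sub_ne_zero]; exact hzx'
        have hρR : ‖z - x‖ < R := by exact mem_ball_iff_norm.1 hzb
        have step1 : Real.sqrt (1 + ‖z‖ ^ 2) ^ (-a) ≤ ‖z‖ ^ (-e) := by
          refine (jap_rpow_mono z hea.le).trans ?_
          exact Real.rpow_le_rpow_of_nonpos hznorm (norm_le_jap z) (by linarith)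
        have step2 : Real.sqrt (1 + ‖z‖ ^ 2) ^ (-a) * ‖z - x‖ ^ (-s)
            ≤ ‖z‖ ^ (-e) * ‖z - x‖ ^ (-s) :=
          mul_le_mul_of_nonneg_right step1 (Real.rpow_nonneg (norm_nonneg _) _)
        have step3 : ‖z‖ ^ (-e) * ‖z - x‖ ^ (-s) ≤ ‖z‖ ^ (-(e+s)) + ‖z - x‖ ^ (-(e+s)) :=
          amgm_rpow hznorm hρpos he0.le hs0
        have hes : -(e+s) = -(s+e) := by ring
        have step4 : ‖z‖ ^ (-(s+e)) ≤ (ball (0:E) R).indicator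
            (fun z => ‖z‖ ^ (-(s+e))) z + ‖z - x‖ ^ (-(s+e)) := by
          by_cases hz : z ∈ ball (0:E) R
          · rw [indicator_of_mem hz]
            exact le_add_of_nonneg_right (Real.rpow_nonneg (norm_nonneg _) _)
          · rw [indicator_of_notMem hz, zero_add]
            have hzR : R ≤ ‖z‖ := by simpa [mem_ball, dist_eq_norm, not_lt] using hz
            exact Real.rpow_le_rpow_of_nonpos hρpos (by linarith) (by linarith)
        rw [hg]
        dsimp only
        calc Real.sqrt (1 + ‖z‖ ^ 2) ^ (-a) * ‖z - x‖ ^ (-s)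
            ≤ ‖z‖ ^ (-(s+e)) + ‖z - x‖ ^ (-(s+e)) := by
              rw [show -(s+e) = -(e+s) by ring]
              exact step2.trans step3
          _ ≤ ((ball (0:E) R).indicator (fun z => ‖z‖ ^ (-(s+e))) z + ‖z - x‖ ^ (-(s+e)))
              + ‖z - x‖ ^ (-(s+e)) := by
              exact add_le_add_left step4 _
          _ = (ball (0:E) R).indicator (fun z => ‖z‖ ^ (-(s+e))) z
              + 2 * ‖z - x‖ ^ (-(s+e)) := by ring
      have hmeas : Measurable (fun z : E =>
          Real.sqrt (1 + ‖z‖ ^ 2) ^ (-a) * ‖z - x‖ ^ (-s)) := by fun_prop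
      have hfint : IntegrableOn (fun z : E =>
          Real.sqrt (1 + ‖z‖ ^ 2) ^ (-a) * ‖z - x‖ ^ (-s)) (ball x R) := by
        refine Integrable.mono' hgint hmeas.aestronglyMeasurable.restrict ?_
        filter_upwards [hae] with z hz
        rw [Real.norm_eq_abs, abs_of_nonneg (by positivity)]
        exact hz
      refine ⟨hfint, ?_⟩
      have hle := integral_mono_of_nonneg (ae_of_all _ fun z : E => by positivity) hgint hae
      have hval : ∫ z in ball x R, g z
          = (∫ z in ball x R, (ball (0:E) R).indicator (fun z => ‖z‖ ^ (-(s+e))) z)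
            + ∫ z in ball x R, 2 * ‖z - x‖ ^ (-(s+e)) :=
        integral_add hgi1.integrableOn (hintx.const_mul 2)
      have hpart1 : ∫ z in ball x R, (ball (0:E) R).indicator (fun z => ‖z‖ ^ (-(s+e))) z
          ≤ c₃ * R ^ ((n:ℝ) - (s+e)) := by
        rw [setIntegral_indicator measurableSet_ball]
        rw [← hval₀']
        refine setIntegral_mono_set hint₀' (ae_of_all _ fun z => by positivity) ?_
        exact HasSubset.Subset.eventuallyLE inter_subset_right
      have hpart2 : ∫ z in ball x R, 2 * ‖z - x‖ ^ (-(s+e)) = 2 * (c₃ * R ^ ((n:ℝ) - (s+e))) := by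
        rw [integral_const_mul, hvalx]
      have hfin : ((n:ℝ) - (s+e)) = σ := by simp only [he]; ring
      rw [hval, hpart2, hfin] at hle
      rw [hσeq]
      have h5 := hpart1
      rw [hfin] at h5
      have : (3:ℝ) * c₃ * R ^ σ = c₃ * R ^ σ + 2 * (c₃ * R ^ σ) := by ring
      rw [this]
      linarith

/-- Small separation case. -/
lemma small_case (hn : 1 ≤ n) {k ℓ β δ : ℝ}
    (hk0 : 0 ≤ k) (hkn : k < n) (hl0 : 0 ≤ ℓ) (hln : ℓ < n)
    (hβ : 0 < β) (hsum : (n : ℝ) ≤ k + ℓ + β) (hne : k + ℓ ≠ n) (hδ : 0 < δ) :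
    ∃ C > 0, ∀ u₁ u₂ : EuclideanSpace ℝ (Fin n), u₁ ≠ u₂ → ‖u₁ - u₂‖ ≤ 1 →
      (∫ z : EuclideanSpace ℝ (Fin n),
          Real.sqrt (1 + ‖z‖ ^ 2) ^ (-β - δ) * ‖z - u₁‖ ^ (-k) * ‖z - u₂‖ ^ (-ℓ))
        ≤ C * ‖u₁ - u₂‖ ^ (-(max 0 (k + ℓ - n))) := by
  set E := EuclideanSpace ℝ (Fin n)
  haveI := nontriv hn
  rcases hne.lt_or_gt with hkl | hkl
  · -- `k + ℓ < n` : uniform bound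
    obtain ⟨C₁, hC₁, hG₁⟩ := unif_bound hn (add_nonneg hk0 hl0) hkl
      (by positivity : (0:ℝ) ≤ β + δ) (by linarith : (n:ℝ) < (β+δ) + (k+ℓ))
    refine ⟨2 * C₁, by positivity, fun u₁ u₂ hne12 _ => ?_⟩
    have hmax : max 0 (k + ℓ - (n:ℝ)) = 0 := max_eq_left (by linarith)
    rw [hmax, neg_zero, Real.rpow_zero, mul_one]
    set g : E → ℝ := fun z => Real.sqrt (1 + ‖z‖ ^ 2) ^ (-(β+δ)) * ‖z - u₁‖ ^ (-(k+ℓ))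
        + Real.sqrt (1 + ‖z‖ ^ 2) ^ (-(β+δ)) * ‖z - u₂‖ ^ (-(k+ℓ)) with hg
    have hgint : Integrable g := (hG₁ u₁).1.add (hG₁ u₂).1
    have hae : ∀ᵐ z : E, Real.sqrt (1 + ‖z‖ ^ 2) ^ (-β - δ) * ‖z - u₁‖ ^ (-k)
        * ‖z - u₂‖ ^ (-ℓ) ≤ g z := by
      have h1 : ∀ᵐ z : E, z ∉ ({u₁} : Set E) :=
        (MeasureTheory.measure_eq_zero_iff_ae_notMem).1 (measure_singleton _)
      have h2 : ∀ᵐ z : E, z ∉ ({u₂} : Set E) :=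
        (MeasureTheory.measure_eq_zero_iff_ae_notMem).1 (measure_singleton _)
      filter_upwards [h1, h2] with z hz1 hz2
      have hρ₁ : 0 < ‖z - u₁‖ := by
        rw [norm_pos_iff, sub_ne_zero]; simpa using hz1
      have hρ₂ : 0 < ‖z - u₂‖ := by
        rw [norm_pos_iff, sub_ne_zero]; simpa using hz2
      have hjap := jap_pos z
      have hamgm := amgm_rpow hρ₁ hρ₂ hk0 hl0
      have hnn : (0:ℝ) ≤ Real.sqrt (1 + ‖z‖ ^ 2) ^ (-(β+δ)) := Real.rpow_nonneg hjap.le _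
      have heq : Real.sqrt (1 + ‖z‖ ^ 2) ^ (-β - δ) = Real.sqrt (1 + ‖z‖ ^ 2) ^ (-(β+δ)) := by
        congr 1; ring
      rw [hg]
      dsimp only
      rw [heq, mul_assoc]
      calc Real.sqrt (1 + ‖z‖ ^ 2) ^ (-(β+δ)) * (‖z - u₁‖ ^ (-k) * ‖z - u₂‖ ^ (-ℓ))
          ≤ Real.sqrt (1 + ‖z‖ ^ 2) ^ (-(β+δ)) * (‖z - u₁‖ ^ (-(k+ℓ)) + ‖z - u₂‖ ^ (-(k+ℓ))) :=
            mul_le_mul_of_nonneg_left hamgm hnn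
        _ = Real.sqrt (1 + ‖z‖ ^ 2) ^ (-(β+δ)) * ‖z - u₁‖ ^ (-(k+ℓ))
            + Real.sqrt (1 + ‖z‖ ^ 2) ^ (-(β+δ)) * ‖z - u₂‖ ^ (-(k+ℓ)) := by ring
    have hle := integral_mono_of_nonneg (ae_of_all _ fun z : E => by positivity) hgint hae
    refine hle.trans ?_
    rw [hg, integral_add (hG₁ u₁).1 (hG₁ u₂).1]
    have := (hG₁ u₁).2
    have := (hG₁ u₂).2
    linarith
  · -- `k + ℓ > n`
    obtain ⟨cₖ, hcₖ, hbₖ⟩ := ball_int hn hk0 hkn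
    obtain ⟨cₗ, hcₗ, hbₗ⟩ := ball_int hn hl0 hln
    obtain ⟨c₂, hc₂, hb₂⟩ := compl_int hn (show (n:ℝ) < k + ℓ from hkl)
    refine ⟨(cₖ + cₗ + 3 ^ ℓ * c₂) * 2 ^ (k + ℓ - (n:ℝ)), by positivity,
      fun u₁ u₂ hne12 _ => ?_⟩
    have hmax : max 0 (k + ℓ - (n:ℝ)) = k + ℓ - n := max_eq_right (by linarith)
    rw [hmax]
    set u : ℝ := ‖u₁ - u₂‖ with hu
    have hu0 : 0 < u := norm_pos_iff.2 (sub_ne_zero.2 hne12)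
    set r : ℝ := u / 2 with hrdef
    have hr0 : 0 < r := by positivity
    set A : Set E := ball u₁ r with hA
    set B : Set E := ball u₂ r with hB
    set g : E → ℝ := fun z =>
      A.indicator (fun z => r ^ (-ℓ) * ‖z - u₁‖ ^ (-k)) z
        + (B.indicator (fun z => r ^ (-k) * ‖z - u₂‖ ^ (-ℓ)) z
          + Aᶜ.indicator (fun z => 3 ^ ℓ * ‖z - u₁‖ ^ (-(k+ℓ))) z) with hg
    have hgi1 : Integrable (A.indicator (fun z : E => r ^ (-ℓ) * ‖z - u₁‖ ^ (-k))) :=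
      (integrable_indicator_iff measurableSet_ball).2 (((hbₖ u₁ r hr0).1).const_mul _)
    have hgi2 : Integrable (B.indicator (fun z : E => r ^ (-k) * ‖z - u₂‖ ^ (-ℓ))) :=
      (integrable_indicator_iff measurableSet_ball).2 (((hbₗ u₂ r hr0).1).const_mul _)
    have hgi3 : Integrable (Aᶜ.indicator (fun z : E => 3 ^ ℓ * ‖z - u₁‖ ^ (-(k+ℓ)))) :=
      (integrable_indicator_iff measurableSet_ball.compl).2
        (((hb₂ u₁ r hr0).1).const_mul _)
    have hgi23 : Integrable (fun z : E => B.indicator (fun z => r ^ (-k) * ‖z - u₂‖ ^ (-ℓ)) z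
        + Aᶜ.indicator (fun z => 3 ^ ℓ * ‖z - u₁‖ ^ (-(k+ℓ))) z) := hgi2.add hgi3
    have hgint : Integrable g := hgi1.add hgi23
    have hae : ∀ᵐ z : E, Real.sqrt (1 + ‖z‖ ^ 2) ^ (-β - δ) * ‖z - u₁‖ ^ (-k)
        * ‖z - u₂‖ ^ (-ℓ) ≤ g z := by
      have h1 : ∀ᵐ z : E, z ∉ ({u₁} : Set E) :=
        (MeasureTheory.measure_eq_zero_iff_ae_notMem).1 (measure_singleton _)
      have h2 : ∀ᵐ z : E, z ∉ ({u₂} : Set E) :=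
        (MeasureTheory.measure_eq_zero_iff_ae_notMem).1 (measure_singleton _)
      filter_upwards [h1, h2] with z hz1 hz2
      have hρ₁ : 0 < ‖z - u₁‖ := by rw [norm_pos_iff, sub_ne_zero]; simpa using hz1
      have hρ₂ : 0 < ‖z - u₂‖ := by rw [norm_pos_iff, sub_ne_zero]; simpa using hz2
      have hjle : Real.sqrt (1 + ‖z‖ ^ 2) ^ (-β - δ) ≤ 1 := by
        rw [show -β - δ = -(β + δ) by ring]
        exact jap_rpow_le_one z (by positivity)
      have hf_le : Real.sqrt (1 + ‖z‖ ^ 2) ^ (-β - δ) * ‖z - u₁‖ ^ (-k) * ‖z - u₂‖ ^ (-ℓ)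
          ≤ ‖z - u₁‖ ^ (-k) * ‖z - u₂‖ ^ (-ℓ) := by
        have : (0:ℝ) ≤ ‖z - u₁‖ ^ (-k) * ‖z - u₂‖ ^ (-ℓ) := by positivity
        calc Real.sqrt (1 + ‖z‖ ^ 2) ^ (-β - δ) * ‖z - u₁‖ ^ (-k) * ‖z - u₂‖ ^ (-ℓ)
            = Real.sqrt (1 + ‖z‖ ^ 2) ^ (-β - δ) * (‖z - u₁‖ ^ (-k) * ‖z - u₂‖ ^ (-ℓ)) := by
              ring
          _ ≤ ‖z - u₁‖ ^ (-k) * ‖z - u₂‖ ^ (-ℓ) := mul_le_of_le_one_left this hjle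
      have htri : u ≤ ‖z - u₁‖ + ‖z - u₂‖ := by
        have := dist_triangle u₁ z u₂
        rw [dist_eq_norm, dist_eq_norm, dist_eq_norm] at this
        rw [hu]
        calc ‖u₁ - u₂‖ ≤ ‖u₁ - z‖ + ‖z - u₂‖ := this
          _ = ‖z - u₁‖ + ‖z - u₂‖ := by rw [norm_sub_rev u₁ z]
      rw [hg]; dsimp only
      by_cases hzA : z ∈ A
      · have hz1A : ‖z - u₁‖ < r := by exact mem_ball_iff_norm.1 hzA
        have hρ₂r : r ≤ ‖z - u₂‖ := by
          rw [hrdef]; rw [hrdef] at hz1A; linarith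
        have hb2 : ‖z - u₂‖ ^ (-ℓ) ≤ r ^ (-ℓ) :=
          Real.rpow_le_rpow_of_nonpos hr0 hρ₂r (by linarith)
        have hterm : Real.sqrt (1 + ‖z‖ ^ 2) ^ (-β - δ) * ‖z - u₁‖ ^ (-k) * ‖z - u₂‖ ^ (-ℓ)
            ≤ r ^ (-ℓ) * ‖z - u₁‖ ^ (-k) := by
          refine hf_le.trans ?_
          calc ‖z - u₁‖ ^ (-k) * ‖z - u₂‖ ^ (-ℓ) ≤ ‖z - u₁‖ ^ (-k) * r ^ (-ℓ) :=
                mul_le_mul_of_nonneg_left hb2 (by positivity)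
            _ = r ^ (-ℓ) * ‖z - u₁‖ ^ (-k) := by ring
        rw [indicator_of_mem hzA]
        have t2 : (0:ℝ) ≤ B.indicator (fun z => r ^ (-k) * ‖z - u₂‖ ^ (-ℓ)) z :=
          indicator_nonneg (fun z _ => by positivity) z
        have t3 : (0:ℝ) ≤ Aᶜ.indicator (fun z => 3 ^ ℓ * ‖z - u₁‖ ^ (-(k+ℓ))) z :=
          indicator_nonneg (fun z _ => by positivity) z
        linarith
      · rw [indicator_of_notMem hzA]
        have hρ₁r : r ≤ ‖z - u₁‖ := by
          exact not_lt.1 (mt mem_ball_iff_norm.2 hzA)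
        have hzAc : z ∈ Aᶜ := hzA
        rw [indicator_of_mem hzAc]
        by_cases hzB : z ∈ B
        · have hterm : Real.sqrt (1 + ‖z‖ ^ 2) ^ (-β - δ) * ‖z - u₁‖ ^ (-k) * ‖z - u₂‖ ^ (-ℓ)
              ≤ r ^ (-k) * ‖z - u₂‖ ^ (-ℓ) := by
            refine hf_le.trans ?_
            have hb1 : ‖z - u₁‖ ^ (-k) ≤ r ^ (-k) :=
              Real.rpow_le_rpow_of_nonpos hr0 hρ₁r (by linarith)
            exact mul_le_mul_of_nonneg_right hb1 (by positivity)
          rw [indicator_of_mem hzB]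
          have t3 : (0:ℝ) ≤ 3 ^ ℓ * ‖z - u₁‖ ^ (-(k+ℓ)) := by positivity
          linarith
        · rw [indicator_of_notMem hzB]
          have hρ₂r : r ≤ ‖z - u₂‖ := by
            exact not_lt.1 (mt mem_ball_iff_norm.2 hzB)
          have hgeo : ‖z - u₁‖ / 3 ≤ ‖z - u₂‖ := by
            rcases le_or_gt ‖z - u₁‖ (3 * r) with h | h
            · linarith
            · have h2' : ‖z - u₁‖ - u ≤ ‖z - u₂‖ := by
                have := dist_triangle z u₂ u₁
                rw [dist_eq_norm, dist_eq_norm, dist_eq_norm] at this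
                have h3' : ‖u₂ - u₁‖ = u := by rw [hu, norm_sub_rev]
                linarith [this, h3'.le, h3'.ge]
              have hu2r : u = 2 * r := by rw [hrdef]; ring
              linarith
          have hb2 : ‖z - u₂‖ ^ (-ℓ) ≤ (‖z - u₁‖ / 3) ^ (-ℓ) :=
            Real.rpow_le_rpow_of_nonpos (by positivity) hgeo (by linarith)
          have h3eq : (‖z - u₁‖ / 3) ^ (-ℓ) = 3 ^ ℓ * ‖z - u₁‖ ^ (-ℓ) := by
            rw [Real.div_rpow (norm_nonneg _) (by norm_num : (0:ℝ) ≤ 3),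
              Real.rpow_neg (by norm_num : (0:ℝ) ≤ 3) ℓ]
            field_simp
          have hterm : Real.sqrt (1 + ‖z‖ ^ 2) ^ (-β - δ) * ‖z - u₁‖ ^ (-k) * ‖z - u₂‖ ^ (-ℓ)
              ≤ 3 ^ ℓ * ‖z - u₁‖ ^ (-(k+ℓ)) := by
            refine hf_le.trans ?_
            calc ‖z - u₁‖ ^ (-k) * ‖z - u₂‖ ^ (-ℓ)
                ≤ ‖z - u₁‖ ^ (-k) * (3 ^ ℓ * ‖z - u₁‖ ^ (-ℓ)) := by
                  rw [← h3eq]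
                  exact mul_le_mul_of_nonneg_left hb2 (by positivity)
              _ = 3 ^ ℓ * (‖z - u₁‖ ^ (-k) * ‖z - u₁‖ ^ (-ℓ)) := by ring
              _ = 3 ^ ℓ * ‖z - u₁‖ ^ (-(k+ℓ)) := by
                  rw [← Real.rpow_add hρ₁, show -k + -ℓ = -(k+ℓ) by ring]
          linarith
    have hle := integral_mono_of_nonneg (ae_of_all _ fun z : E => by positivity) hgint hae
    refine hle.trans ?_
    rw [hg, integral_add hgi1 hgi23, integral_add hgi2 hgi3,
      integral_indicator measurableSet_ball, integral_indicator measurableSet_ball,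
      integral_indicator measurableSet_ball.compl,
      integral_const_mul, integral_const_mul, integral_const_mul,
      (hbₖ u₁ r hr0).2, (hbₗ u₂ r hr0).2, (hb₂ u₁ r hr0).2]
    have e1 : r ^ (-ℓ) * (cₖ * r ^ ((n:ℝ) - k)) = cₖ * r ^ ((n:ℝ) - k - ℓ) := by
      rw [mul_comm (r ^ (-ℓ)) _, mul_assoc, ← Real.rpow_add hr0,
        show ((n:ℝ) - k) + -ℓ = (n:ℝ) - k - ℓ by ring]
    have e2 : r ^ (-k) * (cₗ * r ^ ((n:ℝ) - ℓ)) = cₗ * r ^ ((n:ℝ) - k - ℓ) := by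
      rw [mul_comm (r ^ (-k)) _, mul_assoc, ← Real.rpow_add hr0,
        show ((n:ℝ) - ℓ) + -k = (n:ℝ) - k - ℓ by ring]
    have e3 : (n:ℝ) - (k + ℓ) = (n:ℝ) - k - ℓ := by ring
    have e4 : r ^ ((n:ℝ) - k - ℓ) = 2 ^ (k + ℓ - (n:ℝ)) * u ^ (-(k + ℓ - (n:ℝ))) := by
      rw [hrdef, Real.div_rpow hu0.le (by norm_num : (0:ℝ) ≤ 2),
        show -(k + ℓ - (n:ℝ)) = (n:ℝ) - k - ℓ by ring, div_eq_mul_inv,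
        ← Real.rpow_neg (by norm_num : (0:ℝ) ≤ 2),
        show -((n:ℝ) - k - ℓ) = k + ℓ - (n:ℝ) by ring]
      ring
    rw [e1, e2, e3, e4]
    exact le_of_eq (by ring)

/-- Large separation case. -/
lemma large_case (hn : 1 ≤ n) {k ℓ β δ : ℝ}
    (hk0 : 0 ≤ k) (hkn : k < n) (hl0 : 0 ≤ ℓ) (hln : ℓ < n)
    (hβ : 0 < β) (hsum : (n : ℝ) ≤ k + ℓ + β) (hδ : 0 < δ) :
    ∃ C > 0, ∀ u₁ u₂ : EuclideanSpace ℝ (Fin n), u₁ ≠ u₂ → 1 < ‖u₁ - u₂‖ →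
      (∫ z : EuclideanSpace ℝ (Fin n),
          Real.sqrt (1 + ‖z‖ ^ 2) ^ (-β - δ) * ‖z - u₁‖ ^ (-k) * ‖z - u₂‖ ^ (-ℓ))
        ≤ C * ‖u₁ - u₂‖ ^ (-(min k (min ℓ (k + ℓ + β - n)))) := by
  set E := EuclideanSpace ℝ (Fin n)
  haveI := nontriv hn
  set m : ℝ := min k (min ℓ (k + ℓ + β - (n:ℝ))) with hmdef
  have hm0 : 0 ≤ m := le_min hk0 (le_min hl0 (by linarith))
  have hmk : m ≤ k := min_le_left _ _
  have hml : m ≤ ℓ := (min_le_right _ _).trans (min_le_left _ _)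
  have hms : m ≤ k + ℓ + β - (n:ℝ) := (min_le_right _ _).trans (min_le_right _ _)
  obtain ⟨CA, hCA, hHA⟩ := ball_growth hn (s := k) (a := β + δ) (t := δ)
    hk0 hkn (by positivity) hδ
  obtain ⟨CB, hCB, hHB⟩ := ball_growth hn (s := ℓ) (a := β + δ) (t := δ)
    hl0 hln (by positivity) hδ
  obtain ⟨CD, hCD, hGD⟩ := exterior_bound hn (s := k + ℓ - m) (a := β + δ)
    (by linarith : (0:ℝ) ≤ k + ℓ - m) (by positivity) (by linarith : (n:ℝ) < (β+δ) + (k+ℓ-m))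
  set σ₁ : ℝ := max 0 ((n:ℝ) - k - (β + δ) + δ) with hσ₁def
  set σ₂ : ℝ := max 0 ((n:ℝ) - ℓ - (β + δ) + δ) with hσ₂def
  have hσ₁0 : 0 ≤ σ₁ := le_max_left _ _
  have hσ₂0 : 0 ≤ σ₂ := le_max_left _ _
  have hσ₁ : σ₁ ≤ ℓ - m := max_le (by linarith) (by linarith)
  have hσ₂ : σ₂ ≤ k - m := max_le (by linarith) (by linarith)
  refine ⟨CA * 2 ^ ℓ * 2 ^ m + CB * 2 ^ k * 2 ^ m + 3 ^ ℓ * 2 ^ m * CD, by positivity,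
    fun u₁ u₂ hne12 hgt => ?_⟩
  set u : ℝ := ‖u₁ - u₂‖ with hu
  have hu0 : 0 < u := by linarith
  set r : ℝ := u / 2 with hrdef
  have hr : 1/2 ≤ r := by rw [hrdef]; linarith
  have hr0 : 0 < r := by positivity
  set A : Set E := ball u₁ r with hA
  set B : Set E := ball u₂ r with hB
  obtain ⟨hintA, hvalA⟩ := hHA u₁ r hr
  obtain ⟨hintB, hvalB⟩ := hHB u₂ r hr
  obtain ⟨hintD, hvalD⟩ := hGD u₁ r hr
  set g : E → ℝ := fun z =>
    A.indicator (fun z => r ^ (-ℓ) * (Real.sqrt (1 + ‖z‖ ^ 2) ^ (-(β+δ)) * ‖z - u₁‖ ^ (-k))) z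
      + (B.indicator (fun z => r ^ (-k) * (Real.sqrt (1 + ‖z‖ ^ 2) ^ (-(β+δ)) * ‖z - u₂‖ ^ (-ℓ))) z
        + Aᶜ.indicator (fun z => 3 ^ ℓ * r ^ (-m)
            * (Real.sqrt (1 + ‖z‖ ^ 2) ^ (-(β+δ)) * ‖z - u₁‖ ^ (-(k + ℓ - m)))) z) with hg
  have hgi1 : Integrable (A.indicator (fun z : E =>
      r ^ (-ℓ) * (Real.sqrt (1 + ‖z‖ ^ 2) ^ (-(β+δ)) * ‖z - u₁‖ ^ (-k)))) :=
    (integrable_indicator_iff measurableSet_ball).2 (hintA.const_mul _)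
  have hgi2 : Integrable (B.indicator (fun z : E =>
      r ^ (-k) * (Real.sqrt (1 + ‖z‖ ^ 2) ^ (-(β+δ)) * ‖z - u₂‖ ^ (-ℓ)))) :=
    (integrable_indicator_iff measurableSet_ball).2 (hintB.const_mul _)
  have hgi3 : Integrable (Aᶜ.indicator (fun z : E => 3 ^ ℓ * r ^ (-m)
      * (Real.sqrt (1 + ‖z‖ ^ 2) ^ (-(β+δ)) * ‖z - u₁‖ ^ (-(k + ℓ - m))))) :=
    (integrable_indicator_iff measurableSet_ball.compl).2 (hintD.const_mul _)
  have hgi23 : Integrable (fun z : E =>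
      B.indicator (fun z => r ^ (-k) * (Real.sqrt (1 + ‖z‖ ^ 2) ^ (-(β+δ)) * ‖z - u₂‖ ^ (-ℓ))) z
      + Aᶜ.indicator (fun z => 3 ^ ℓ * r ^ (-m)
          * (Real.sqrt (1 + ‖z‖ ^ 2) ^ (-(β+δ)) * ‖z - u₁‖ ^ (-(k + ℓ - m)))) z) :=
    hgi2.add hgi3
  have hgint : Integrable g := hgi1.add hgi23
  have hae : ∀ᵐ z : E, Real.sqrt (1 + ‖z‖ ^ 2) ^ (-β - δ) * ‖z - u₁‖ ^ (-k)
      * ‖z - u₂‖ ^ (-ℓ) ≤ g z := by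
    have h1 : ∀ᵐ z : E, z ∉ ({u₁} : Set E) :=
      (MeasureTheory.measure_eq_zero_iff_ae_notMem).1 (measure_singleton _)
    have h2 : ∀ᵐ z : E, z ∉ ({u₂} : Set E) :=
      (MeasureTheory.measure_eq_zero_iff_ae_notMem).1 (measure_singleton _)
    filter_upwards [h1, h2] with z hz1 hz2
    have hρ₁ : 0 < ‖z - u₁‖ := by rw [norm_pos_iff, sub_ne_zero]; simpa using hz1
    have hρ₂ : 0 < ‖z - u₂‖ := by rw [norm_pos_iff, sub_ne_zero]; simpa using hz2
    have hjap := jap_pos z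
    have hjnn : (0:ℝ) ≤ Real.sqrt (1 + ‖z‖ ^ 2) ^ (-(β+δ)) := Real.rpow_nonneg hjap.le _
    have heq : Real.sqrt (1 + ‖z‖ ^ 2) ^ (-β - δ) = Real.sqrt (1 + ‖z‖ ^ 2) ^ (-(β+δ)) := by
      congr 1; ring
    have htri : u ≤ ‖z - u₁‖ + ‖z - u₂‖ := by
      have := dist_triangle u₁ z u₂
      rw [dist_eq_norm, dist_eq_norm, dist_eq_norm] at this
      rw [hu]
      calc ‖u₁ - u₂‖ ≤ ‖u₁ - z‖ + ‖z - u₂‖ := this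
        _ = ‖z - u₁‖ + ‖z - u₂‖ := by rw [norm_sub_rev u₁ z]
    rw [hg]; dsimp only
    rw [heq]
    by_cases hzA : z ∈ A
    · have hz1A : ‖z - u₁‖ < r := by exact mem_ball_iff_norm.1 hzA
      have hρ₂r : r ≤ ‖z - u₂‖ := by
        have : u = 2 * r := by rw [hrdef]; ring
        linarith
      have hb2 : ‖z - u₂‖ ^ (-ℓ) ≤ r ^ (-ℓ) :=
        Real.rpow_le_rpow_of_nonpos hr0 hρ₂r (by linarith)
      have hterm : Real.sqrt (1 + ‖z‖ ^ 2) ^ (-(β+δ)) * ‖z - u₁‖ ^ (-k) * ‖z - u₂‖ ^ (-ℓ)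
          ≤ r ^ (-ℓ) * (Real.sqrt (1 + ‖z‖ ^ 2) ^ (-(β+δ)) * ‖z - u₁‖ ^ (-k)) := by
        calc Real.sqrt (1 + ‖z‖ ^ 2) ^ (-(β+δ)) * ‖z - u₁‖ ^ (-k) * ‖z - u₂‖ ^ (-ℓ)
            ≤ Real.sqrt (1 + ‖z‖ ^ 2) ^ (-(β+δ)) * ‖z - u₁‖ ^ (-k) * r ^ (-ℓ) := by
              refine mul_le_mul_of_nonneg_left hb2 ?_
              positivity
          _ = r ^ (-ℓ) * (Real.sqrt (1 + ‖z‖ ^ 2) ^ (-(β+δ)) * ‖z - u₁‖ ^ (-k)) := by ring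
      rw [indicator_of_mem hzA]
      have t2 : (0:ℝ) ≤ B.indicator (fun z => r ^ (-k)
          * (Real.sqrt (1 + ‖z‖ ^ 2) ^ (-(β+δ)) * ‖z - u₂‖ ^ (-ℓ))) z :=
        indicator_nonneg (fun z _ => by positivity) z
      have t3 : (0:ℝ) ≤ Aᶜ.indicator (fun z => 3 ^ ℓ * r ^ (-m)
          * (Real.sqrt (1 + ‖z‖ ^ 2) ^ (-(β+δ)) * ‖z - u₁‖ ^ (-(k + ℓ - m)))) z :=
        indicator_nonneg (fun z _ => by positivity) z
      linarith
    · have hzAc : z ∈ Aᶜ := hzA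
      rw [indicator_of_notMem hzA, indicator_of_mem hzAc, zero_add]
      have hρ₁r : r ≤ ‖z - u₁‖ := by
        exact not_lt.1 (mt mem_ball_iff_norm.2 hzA)
      by_cases hzB : z ∈ B
      · rw [indicator_of_mem hzB]
        have hb1 : ‖z - u₁‖ ^ (-k) ≤ r ^ (-k) :=
          Real.rpow_le_rpow_of_nonpos hr0 hρ₁r (by linarith)
        have hterm : Real.sqrt (1 + ‖z‖ ^ 2) ^ (-(β+δ)) * ‖z - u₁‖ ^ (-k) * ‖z - u₂‖ ^ (-ℓ)
            ≤ r ^ (-k) * (Real.sqrt (1 + ‖z‖ ^ 2) ^ (-(β+δ)) * ‖z - u₂‖ ^ (-ℓ)) := by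
          calc Real.sqrt (1 + ‖z‖ ^ 2) ^ (-(β+δ)) * ‖z - u₁‖ ^ (-k) * ‖z - u₂‖ ^ (-ℓ)
              ≤ Real.sqrt (1 + ‖z‖ ^ 2) ^ (-(β+δ)) * r ^ (-k) * ‖z - u₂‖ ^ (-ℓ) := by
                refine mul_le_mul_of_nonneg_right (mul_le_mul_of_nonneg_left hb1 hjnn) ?_
                positivity
            _ = r ^ (-k) * (Real.sqrt (1 + ‖z‖ ^ 2) ^ (-(β+δ)) * ‖z - u₂‖ ^ (-ℓ)) := by ring
        have t3 : (0:ℝ) ≤ 3 ^ ℓ * r ^ (-m)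
            * (Real.sqrt (1 + ‖z‖ ^ 2) ^ (-(β+δ)) * ‖z - u₁‖ ^ (-(k + ℓ - m))) := by positivity
        linarith
      · rw [indicator_of_notMem hzB, zero_add]
        have hρ₂r : r ≤ ‖z - u₂‖ := by
          exact not_lt.1 (mt mem_ball_iff_norm.2 hzB)
        have hgeo : ‖z - u₁‖ / 3 ≤ ‖z - u₂‖ := by
          rcases le_or_gt ‖z - u₁‖ (3 * r) with h | h
          · linarith
          · have h2' : ‖z - u₁‖ - u ≤ ‖z - u₂‖ := by
              have := dist_triangle z u₂ u₁
              rw [dist_eq_norm, dist_eq_norm, dist_eq_norm] at this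
              have h3' : ‖u₂ - u₁‖ = u := by rw [hu, norm_sub_rev]
              linarith [this, h3'.le, h3'.ge]
            have hu2r : u = 2 * r := by rw [hrdef]; ring
            linarith
        have hb2 : ‖z - u₂‖ ^ (-ℓ) ≤ (‖z - u₁‖ / 3) ^ (-ℓ) :=
          Real.rpow_le_rpow_of_nonpos (by positivity) hgeo (by linarith)
        have h3eq : (‖z - u₁‖ / 3) ^ (-ℓ) = 3 ^ ℓ * ‖z - u₁‖ ^ (-ℓ) := by
          rw [Real.div_rpow (norm_nonneg _) (by norm_num : (0:ℝ) ≤ 3),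
            Real.rpow_neg (by norm_num : (0:ℝ) ≤ 3) ℓ]
          field_simp
        have hsplit : ‖z - u₁‖ ^ (-(k+ℓ)) ≤ r ^ (-m) * ‖z - u₁‖ ^ (-(k + ℓ - m)) := by
          have e1 : ‖z - u₁‖ ^ (-(k+ℓ)) = ‖z - u₁‖ ^ (-m) * ‖z - u₁‖ ^ (-(k + ℓ - m)) := by
            rw [← Real.rpow_add hρ₁]
            congr 1
            ring
          rw [e1]
          refine mul_le_mul_of_nonneg_right ?_ (Real.rpow_nonneg (norm_nonneg _) _)
          exact Real.rpow_le_rpow_of_nonpos hr0 hρ₁r (by linarith)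
        have hterm : Real.sqrt (1 + ‖z‖ ^ 2) ^ (-(β+δ)) * ‖z - u₁‖ ^ (-k) * ‖z - u₂‖ ^ (-ℓ)
            ≤ 3 ^ ℓ * r ^ (-m)
              * (Real.sqrt (1 + ‖z‖ ^ 2) ^ (-(β+δ)) * ‖z - u₁‖ ^ (-(k + ℓ - m))) := by
          have hkl : ‖z - u₁‖ ^ (-k) * ‖z - u₂‖ ^ (-ℓ)
              ≤ 3 ^ ℓ * ‖z - u₁‖ ^ (-(k+ℓ)) := by
            calc ‖z - u₁‖ ^ (-k) * ‖z - u₂‖ ^ (-ℓ)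
                ≤ ‖z - u₁‖ ^ (-k) * (3 ^ ℓ * ‖z - u₁‖ ^ (-ℓ)) := by
                  rw [← h3eq]
                  exact mul_le_mul_of_nonneg_left hb2 (by positivity)
              _ = 3 ^ ℓ * (‖z - u₁‖ ^ (-k) * ‖z - u₁‖ ^ (-ℓ)) := by ring
              _ = 3 ^ ℓ * ‖z - u₁‖ ^ (-(k+ℓ)) := by
                  rw [← Real.rpow_add hρ₁, show -k + -ℓ = -(k+ℓ) by ring]
          calc Real.sqrt (1 + ‖z‖ ^ 2) ^ (-(β+δ)) * ‖z - u₁‖ ^ (-k) * ‖z - u₂‖ ^ (-ℓ)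
              = Real.sqrt (1 + ‖z‖ ^ 2) ^ (-(β+δ)) * (‖z - u₁‖ ^ (-k) * ‖z - u₂‖ ^ (-ℓ)) := by
                ring
            _ ≤ Real.sqrt (1 + ‖z‖ ^ 2) ^ (-(β+δ)) * (3 ^ ℓ * ‖z - u₁‖ ^ (-(k+ℓ))) :=
                mul_le_mul_of_nonneg_left hkl hjnn
            _ ≤ Real.sqrt (1 + ‖z‖ ^ 2) ^ (-(β+δ))
                * (3 ^ ℓ * (r ^ (-m) * ‖z - u₁‖ ^ (-(k + ℓ - m)))) := by
                refine mul_le_mul_of_nonneg_left ?_ hjnn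
                refine mul_le_mul_of_nonneg_left hsplit (by positivity)
            _ = 3 ^ ℓ * r ^ (-m)
                * (Real.sqrt (1 + ‖z‖ ^ 2) ^ (-(β+δ)) * ‖z - u₁‖ ^ (-(k + ℓ - m))) := by ring
        exact hterm
  have hle := integral_mono_of_nonneg (ae_of_all _ fun z : E => by positivity) hgint hae
  refine hle.trans ?_
  rw [hg, integral_add hgi1 hgi23, integral_add hgi2 hgi3,
    integral_indicator measurableSet_ball, integral_indicator measurableSet_ball,
    integral_indicator measurableSet_ball.compl,
    integral_const_mul, integral_const_mul, integral_const_mul]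
  -- now bound the three pieces
  have hwbound : ∀ w : ℝ, w ≤ 0 → r ^ w ≤ 2 ^ (-w) := by
    intro w hw
    calc r ^ w ≤ (1/2 : ℝ) ^ w := Real.rpow_le_rpow_of_nonpos (by norm_num) hr hw
      _ = 2 ^ (-w) := by
        rw [show (1/2 : ℝ) = 2⁻¹ by norm_num, Real.inv_rpow (by norm_num : (0:ℝ) ≤ 2),
          ← Real.rpow_neg (by norm_num : (0:ℝ) ≤ 2)]
  have hrm : r ^ (-m) = 2 ^ m * u ^ (-m) := by
    rw [hrdef, Real.div_rpow hu0.le (by norm_num : (0:ℝ) ≤ 2),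
      Real.rpow_neg (by norm_num : (0:ℝ) ≤ 2) m, div_eq_mul_inv, inv_inv]
    ring
  have hupos : (0:ℝ) < u ^ (-m) := Real.rpow_pos_of_pos hu0 _
  have hP1 : r ^ (-ℓ) * ∫ z in A, Real.sqrt (1 + ‖z‖ ^ 2) ^ (-(β+δ)) * ‖z - u₁‖ ^ (-k)
      ≤ CA * 2 ^ ℓ * 2 ^ m * u ^ (-m) := by
    have hnn : (0:ℝ) ≤ r ^ (-ℓ) := Real.rpow_nonneg hr0.le _
    have step := mul_le_mul_of_nonneg_left hvalA hnn
    refine step.trans ?_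
    have e1 : r ^ (-ℓ) * (CA * r ^ σ₁) = CA * (r ^ (σ₁ - ℓ + m) * r ^ (-m)) := by
      rw [← Real.rpow_add hr0, show σ₁ - ℓ + m + -m = -ℓ + σ₁ by ring, Real.rpow_add hr0]
      ring
    rw [e1, hrm]
    have e2 : r ^ (σ₁ - ℓ + m) ≤ 2 ^ ℓ := by
      refine (hwbound _ (by linarith)).trans ?_
      exact Real.rpow_le_rpow_of_exponent_le (by norm_num) (by linarith)
    calc CA * (r ^ (σ₁ - ℓ + m) * (2 ^ m * u ^ (-m)))
        ≤ CA * (2 ^ ℓ * (2 ^ m * u ^ (-m))) := by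
          refine mul_le_mul_of_nonneg_left ?_ hCA.le
          refine mul_le_mul_of_nonneg_right e2 (by positivity)
      _ = CA * 2 ^ ℓ * 2 ^ m * u ^ (-m) := by ring
  have hP2 : r ^ (-k) * ∫ z in B, Real.sqrt (1 + ‖z‖ ^ 2) ^ (-(β+δ)) * ‖z - u₂‖ ^ (-ℓ)
      ≤ CB * 2 ^ k * 2 ^ m * u ^ (-m) := by
    have hnn : (0:ℝ) ≤ r ^ (-k) := Real.rpow_nonneg hr0.le _
    have step := mul_le_mul_of_nonneg_left hvalB hnn
    refine step.trans ?_
    have e1 : r ^ (-k) * (CB * r ^ σ₂) = CB * (r ^ (σ₂ - k + m) * r ^ (-m)) := by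
      rw [← Real.rpow_add hr0, show σ₂ - k + m + -m = -k + σ₂ by ring, Real.rpow_add hr0]
      ring
    rw [e1, hrm]
    have e2 : r ^ (σ₂ - k + m) ≤ 2 ^ k := by
      refine (hwbound _ (by linarith)).trans ?_
      exact Real.rpow_le_rpow_of_exponent_le (by norm_num) (by linarith)
    calc CB * (r ^ (σ₂ - k + m) * (2 ^ m * u ^ (-m)))
        ≤ CB * (2 ^ k * (2 ^ m * u ^ (-m))) := by
          refine mul_le_mul_of_nonneg_left ?_ hCB.le
          refine mul_le_mul_of_nonneg_right e2 (by positivity)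
      _ = CB * 2 ^ k * 2 ^ m * u ^ (-m) := by ring
  have hP3 : 3 ^ ℓ * r ^ (-m)
      * ∫ z in Aᶜ, Real.sqrt (1 + ‖z‖ ^ 2) ^ (-(β+δ)) * ‖z - u₁‖ ^ (-(k + ℓ - m))
      ≤ 3 ^ ℓ * 2 ^ m * CD * u ^ (-m) := by
    have hnn : (0:ℝ) ≤ 3 ^ ℓ * r ^ (-m) := by positivity
    have step := mul_le_mul_of_nonneg_left hvalD hnn
    refine step.trans ?_
    rw [hrm]
    exact le_of_eq (by ring)
  linarith

theorem stmt_1 (n : ℕ) (hn : 1 ≤ n) (k ℓ β δ : ℝ)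
    (hk0 : 0 ≤ k) (hkn : k < n) (hl0 : 0 ≤ ℓ) (hln : ℓ < n)
    (hβ : 0 < β) (hsum : (n : ℝ) ≤ k + ℓ + β) (hne : k + ℓ ≠ n) (hδ : 0 < δ) :
    ∃ C > 0, ∀ u₁ u₂ : EuclideanSpace ℝ (Fin n), u₁ ≠ u₂ →
      (‖u₁ - u₂‖ ≤ 1 →
        (∫ z : EuclideanSpace ℝ (Fin n),
            Real.sqrt (1 + ‖z‖ ^ 2) ^ (-β - δ) * ‖z - u₁‖ ^ (-k) * ‖z - u₂‖ ^ (-ℓ))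
          ≤ C * ‖u₁ - u₂‖ ^ (-(max 0 (k + ℓ - n)))) ∧
      (1 < ‖u₁ - u₂‖ →
        (∫ z : EuclideanSpace ℝ (Fin n),
            Real.sqrt (1 + ‖z‖ ^ 2) ^ (-β - δ) * ‖z - u₁‖ ^ (-k) * ‖z - u₂‖ ^ (-ℓ))
          ≤ C * ‖u₁ - u₂‖ ^ (-(min k (min ℓ (k + ℓ + β - n))))) := by
  obtain ⟨C₁, hC₁, hsmall⟩ := small_case hn hk0 hkn hl0 hln hβ hsum hne hδ
  obtain ⟨C₂, hC₂, hlarge⟩ := large_case hn hk0 hkn hl0 hln hβ hsum hδ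
  refine ⟨C₁ + C₂, by positivity, fun u₁ u₂ hne12 => ⟨fun hle => ?_, fun hgt => ?_⟩⟩
  · refine (hsmall u₁ u₂ hne12 hle).trans ?_
    refine mul_le_mul_of_nonneg_right (by linarith) ?_
    exact Real.rpow_nonneg (norm_nonneg _) _
  · refine (hlarge u₁ u₂ hne12 hgt).trans ?_
    refine mul_le_mul_of_nonneg_right (by linarith) ?_
    exact Real.rpow_nonneg (norm_nonneg _) _
end

section
/- Let n ≥ 1 be an integer and ε > 0. Then there exists C > 0 (depending only on n and ε) such that for every y ∈ ℝⁿ, ∫_{ℝⁿ} ⟨x⟩^{−(n−1)/2} ⟨y⟩^{−(n−1)/2} ⟨|x|−|y|⟩^{−(n+1)/2−ε} dx ≤ C. -/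
open MeasureTheory Real Set

private lemma aux_sqrt_pos (a : ℝ) : 0 < Real.sqrt (1 + a ^ 2) :=
  Real.sqrt_pos.2 (by positivity)

private lemma aux_peetre_sqrt (a b : ℝ) :
    Real.sqrt (1 + a ^ 2) ≤
      (Real.sqrt 2 * Real.sqrt (1 + (a - b) ^ 2)) * Real.sqrt (1 + b ^ 2) := by
  have h1 : (0:ℝ) ≤ 2 := by norm_num
  have h2 : (0:ℝ) ≤ 1 + (a - b) ^ 2 := by positivity
  rw [← Real.sqrt_mul h1, ← Real.sqrt_mul (by positivity)]
  apply Real.sqrt_le_sqrt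
  nlinarith [sq_nonneg (b - (a - b)), sq_nonneg (b * (a - b))]

/-- if `0 < s`, `s ≤ c * t`, `0 ≤ p` then `t ^ (-p) ≤ c ^ p * s ^ (-p)`. -/
private lemma aux_rpow_bound {s t c p : ℝ} (hs : 0 < s) (hc : 0 < c)
    (h : s ≤ c * t) (hp : 0 ≤ p) : t ^ (-p) ≤ c ^ p * s ^ (-p) := by
  have ht : 0 < t := by nlinarith
  have h2 : s / c ≤ t := (div_le_iff₀ hc).2 (by linarith [mul_comm c t])
  calc t ^ (-p) ≤ (s / c) ^ (-p) :=
        Real.rpow_le_rpow_of_nonpos (by positivity) h2 (neg_nonpos.2 hp)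
    _ = c ^ p * s ^ (-p) := by
        rw [Real.div_rpow hs.le hc.le, Real.rpow_neg hc.le, div_eq_mul_inv, inv_inv, mul_comm]

private lemma aux_sqrt_rpow (u c : ℝ) (hu : 0 ≤ u) :
    Real.sqrt u ^ c = u ^ (c / 2) := by
  rw [Real.sqrt_eq_rpow, ← Real.rpow_mul hu]
  ring_nf

theorem stmt_4 (n : ℕ) (hn : 1 ≤ n) (ε : ℝ) (hε : 0 < ε) :
    ∃ C > 0, ∀ y : EuclideanSpace ℝ (Fin n),
      (∫ x : EuclideanSpace ℝ (Fin n),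
          Real.sqrt (1 + ‖x‖ ^ 2) ^ (-(((n : ℝ) - 1) / 2)) *
            Real.sqrt (1 + ‖y‖ ^ 2) ^ (-(((n : ℝ) - 1) / 2)) *
              Real.sqrt (1 + (‖x‖ - ‖y‖) ^ 2) ^ (-(((n : ℝ) + 1) / 2 + ε)))
        ≤ C := by
  set E := EuclideanSpace ℝ (Fin n)
  haveI : Nontrivial E := Module.nontrivial_of_finrank_pos
    (R := ℝ) (by rw [finrank_euclideanSpace_fin]; omega)
  set p : ℝ := ((n : ℝ) - 1) / 2 with hp_def
  have hp : 0 ≤ p := by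
    have : (1:ℝ) ≤ (n:ℝ) := by exact_mod_cast hn
    unfold p; linarith
  set q : ℝ := ((n : ℝ) + 1) / 2 + ε with hq_def
  set K : ℝ := Real.sqrt 2 ^ p with hK_def
  have hK : 0 < K := Real.rpow_pos_of_pos (by positivity) _
  -- the 1D integrable profile
  set h : ℝ → ℝ := fun u => (1 + u ^ 2) ^ (-(1 + ε) / 2) with hh_def
  have hh_nonneg : ∀ u, 0 ≤ h u := fun u => Real.rpow_nonneg (by positivity) _
  have hh_int : Integrable h := by
    have h0 := integrable_rpow_neg_one_add_norm_sq (E := ℝ) (μ := volume)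
      (r := 1 + ε) (by rw [Module.finrank_self]; norm_num; linarith)
    have he : h = fun x : ℝ => (1 + ‖x‖ ^ 2) ^ (-(1 + ε) / 2) := by
      funext u; rw [Real.norm_eq_abs, sq_abs]
    rw [he]; exact h0
  set I : ℝ := ∫ u, h u with hI_def
  have hI_nonneg : 0 ≤ I := integral_nonneg hh_nonneg
  set vol : ℝ := (volume (Metric.ball (0 : E) 1)).toReal with hvol_def
  have hvol_nonneg : 0 ≤ vol := ENNReal.toReal_nonneg
  refine ⟨(n : ℝ) * (vol * (K * I)) + 1, by positivity, fun y => ?_⟩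
  set b : ℝ := ‖y‖ with hb_def
  have hb : 0 ≤ b := norm_nonneg _
  -- the radial dominating function
  set G : ℝ → ℝ := fun r => K * (Real.sqrt (1 + r ^ 2) ^ (-((n : ℝ) - 1)) *
    Real.sqrt (1 + (r - b) ^ 2) ^ (-(1 + ε))) with hG_def
  have hG_nonneg : ∀ r, 0 ≤ G r := by
    intro r
    have := (aux_sqrt_pos r).le
    exact mul_nonneg hK.le (mul_nonneg (Real.rpow_nonneg (Real.sqrt_nonneg _) _)
      (Real.rpow_nonneg (Real.sqrt_nonneg _) _))
  -- pointwise bound for the integrand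
  have hpt : ∀ a : ℝ, 0 ≤ a →
      Real.sqrt (1 + a ^ 2) ^ (-p) * Real.sqrt (1 + b ^ 2) ^ (-p) *
        Real.sqrt (1 + (a - b) ^ 2) ^ (-q) ≤ G a := by
    intro a _
    set s1 := Real.sqrt (1 + a ^ 2) with hs1
    set s2 := Real.sqrt (1 + b ^ 2) with hs2
    set s3 := Real.sqrt (1 + (a - b) ^ 2) with hs3
    have h1 : 0 < s1 := aux_sqrt_pos a
    have h2 : 0 < s2 := aux_sqrt_pos b
    have h3 : 0 < s3 := aux_sqrt_pos (a - b)
    have key : s2 ^ (-p) ≤ (Real.sqrt 2 * s3) ^ p * s1 ^ (-p) :=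
      aux_rpow_bound h1 (by positivity) (aux_peetre_sqrt a b) hp
    have step : s1 ^ (-p) * s2 ^ (-p) * s3 ^ (-q)
        ≤ s1 ^ (-p) * ((Real.sqrt 2 * s3) ^ p * s1 ^ (-p)) * s3 ^ (-q) := by
      have hnn : 0 ≤ s1 ^ (-p) := Real.rpow_nonneg h1.le _
      have hnn3 : 0 ≤ s3 ^ (-q) := Real.rpow_nonneg h3.le _
      exact mul_le_mul_of_nonneg_right (mul_le_mul_of_nonneg_left key hnn) hnn3
    refine step.trans_eq ?_
    rw [Real.mul_rpow (Real.sqrt_nonneg 2) h3.le]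
    have e1 : s1 ^ (-p) * (Real.sqrt 2 ^ p * s3 ^ p * s1 ^ (-p)) * s3 ^ (-q)
        = K * ((s1 ^ (-p) * s1 ^ (-p)) * (s3 ^ p * s3 ^ (-q))) := by
      rw [hK_def]; ring
    rw [e1, ← Real.rpow_add h1, ← Real.rpow_add h3]
    have e2 : -p + -p = -((n : ℝ) - 1) := by rw [hp_def]; ring
    have e3 : p + -q = -(1 + ε) := by rw [hp_def, hq_def]; ring
    rw [e2, e3]
  -- integrability of the radial dominating function
  have hGb : ∀ r : ℝ, G r ≤ (K * (Real.sqrt 2 * Real.sqrt (1 + b ^ 2)) ^ (1 + ε)) *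
      (1 + r ^ 2) ^ (-((n : ℝ) + ε) / 2) := by
    intro r
    have h1 : 0 < Real.sqrt (1 + r ^ 2) := aux_sqrt_pos r
    have h2 : 0 < Real.sqrt (1 + b ^ 2) := aux_sqrt_pos b
    have hpe : Real.sqrt (1 + r ^ 2) ≤
        (Real.sqrt 2 * Real.sqrt (1 + b ^ 2)) * Real.sqrt (1 + (r - b) ^ 2) := by
      have := aux_peetre_sqrt r b
      linarith [this, mul_comm ((Real.sqrt 2 * Real.sqrt (1 + (r - b) ^ 2)))
        (Real.sqrt (1 + b ^ 2))]
    have key : Real.sqrt (1 + (r - b) ^ 2) ^ (-(1 + ε)) ≤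
        (Real.sqrt 2 * Real.sqrt (1 + b ^ 2)) ^ (1 + ε) *
          Real.sqrt (1 + r ^ 2) ^ (-(1 + ε)) :=
      aux_rpow_bound h1 (by positivity) hpe (by linarith)
    calc G r ≤ K * (Real.sqrt (1 + r ^ 2) ^ (-((n : ℝ) - 1)) *
          ((Real.sqrt 2 * Real.sqrt (1 + b ^ 2)) ^ (1 + ε) *
            Real.sqrt (1 + r ^ 2) ^ (-(1 + ε)))) := by
          exact mul_le_mul_of_nonneg_left
            (mul_le_mul_of_nonneg_left key (Real.rpow_nonneg h1.le _)) hK.le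
      _ = (K * (Real.sqrt 2 * Real.sqrt (1 + b ^ 2)) ^ (1 + ε)) *
          (Real.sqrt (1 + r ^ 2) ^ (-((n : ℝ) - 1)) *
            Real.sqrt (1 + r ^ 2) ^ (-(1 + ε))) := by ring
      _ = (K * (Real.sqrt 2 * Real.sqrt (1 + b ^ 2)) ^ (1 + ε)) *
          (1 + r ^ 2) ^ (-((n : ℝ) + ε) / 2) := by
          rw [← Real.rpow_add h1, aux_sqrt_rpow _ _ (by positivity)]
          congr 1
          ring
  have hGcont : Continuous G := by
    apply continuous_const.mul
    apply Continuous.mul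
    · exact ((continuous_const.add (continuous_pow 2)).sqrt).rpow_const
        (fun x => Or.inl (aux_sqrt_pos x).ne')
    · exact ((continuous_const.add (((continuous_id.sub continuous_const)).pow 2)).sqrt).rpow_const
        (fun x => Or.inl (aux_sqrt_pos (x - b)).ne')
  have hGint : Integrable (fun x : E => G ‖x‖) := by
    have hbig : Integrable (fun x : E =>
        (K * (Real.sqrt 2 * Real.sqrt (1 + b ^ 2)) ^ (1 + ε)) *
          (1 + ‖x‖ ^ 2) ^ (-((n : ℝ) + ε) / 2)) := by
      apply Integrable.const_mul
      exact integrable_rpow_neg_one_add_norm_sq (E := E) (μ := volume)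
        (r := (n : ℝ) + ε) (by rw [finrank_euclideanSpace_fin]; linarith)
    refine hbig.mono' ((hGcont.comp continuous_norm).aestronglyMeasurable) ?_
    filter_upwards with x
    rw [Real.norm_eq_abs, abs_of_nonneg (hG_nonneg _)]
    exact hGb ‖x‖
  -- compare with the radial function
  have hmono : (∫ x : E,
      Real.sqrt (1 + ‖x‖ ^ 2) ^ (-(((n : ℝ) - 1) / 2)) *
        Real.sqrt (1 + ‖y‖ ^ 2) ^ (-(((n : ℝ) - 1) / 2)) *
          Real.sqrt (1 + (‖x‖ - ‖y‖) ^ 2) ^ (-(((n : ℝ) + 1) / 2 + ε)))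
      ≤ ∫ x : E, G ‖x‖ := by
    refine integral_mono_of_nonneg ?_ hGint ?_
    · filter_upwards with x
      simp only [Pi.zero_apply]
      have h1 := aux_sqrt_pos ‖x‖
      have h2 := aux_sqrt_pos (‖y‖ : ℝ)
      have h3 := aux_sqrt_pos (‖x‖ - ‖y‖)
      positivity
    · filter_upwards with x
      exact hpt ‖x‖ (norm_nonneg x)
  refine hmono.trans ?_
  -- polar coordinates
  rw [integral_fun_norm_addHaar (volume : Measure E) G]
  rw [finrank_euclideanSpace_fin]
  rw [nsmul_eq_mul, smul_eq_mul, measureReal_def, ← hvol_def]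
  have hJ : (∫ r in Ioi (0:ℝ), r ^ (n - 1) • G r) ≤ K * I := by
    have hshift : Integrable (fun r : ℝ => K * h (r - b)) :=
      (hh_int.comp_sub_right b).const_mul K
    have step1 : (∫ r in Ioi (0:ℝ), r ^ (n - 1) • G r)
        ≤ ∫ r in Ioi (0:ℝ), K * h (r - b) := by
      refine integral_mono_of_nonneg ?_ hshift.restrict ?_
      · filter_upwards [ae_restrict_mem measurableSet_Ioi] with r hr
        simp only [Pi.zero_apply, smul_eq_mul]
        have hg := hG_nonneg r
        have hrp : (0:ℝ) ≤ r ^ (n - 1) := pow_nonneg (le_of_lt hr) _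
        positivity
      · filter_upwards [ae_restrict_mem measurableSet_Ioi] with r hr
        have hr0 : (0:ℝ) ≤ r := le_of_lt hr
        have h1 : 0 < Real.sqrt (1 + r ^ 2) := aux_sqrt_pos r
        have hfrac : r ^ (n - 1) * Real.sqrt (1 + r ^ 2) ^ (-((n : ℝ) - 1)) ≤ 1 := by
          have hc : ((n - 1 : ℕ) : ℝ) = (n : ℝ) - 1 := by
            rw [Nat.cast_sub hn]; norm_num
          have hrle : r ≤ Real.sqrt (1 + r ^ 2) := by
            nlinarith [Real.sq_sqrt (show (0:ℝ) ≤ 1 + r ^ 2 by positivity),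
              Real.sqrt_nonneg (1 + r ^ 2), sq_nonneg (r - Real.sqrt (1 + r ^ 2)),
              sq_nonneg (r + Real.sqrt (1 + r ^ 2))]
          rw [← Real.rpow_natCast r (n - 1), hc, Real.rpow_neg h1.le,
            ← div_eq_mul_inv, ← Real.div_rpow hr0 h1.le]
          apply Real.rpow_le_one (by positivity)
          · exact div_le_one_of_le₀ hrle h1.le
          · have : (1:ℝ) ≤ (n:ℝ) := by exact_mod_cast hn
            linarith
        have hhe : h (r - b) = Real.sqrt (1 + (r - b) ^ 2) ^ (-(1 + ε)) := by
          rw [hh_def, aux_sqrt_rpow _ _ (by positivity)]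
        simp only [smul_eq_mul, hG_def, hhe]
        calc r ^ (n - 1) * (K * (Real.sqrt (1 + r ^ 2) ^ (-((n : ℝ) - 1)) *
              Real.sqrt (1 + (r - b) ^ 2) ^ (-(1 + ε))))
            = K * ((r ^ (n - 1) * Real.sqrt (1 + r ^ 2) ^ (-((n : ℝ) - 1))) *
              Real.sqrt (1 + (r - b) ^ 2) ^ (-(1 + ε))) := by ring
          _ ≤ K * (1 * Real.sqrt (1 + (r - b) ^ 2) ^ (-(1 + ε))) := by
              apply mul_le_mul_of_nonneg_left _ hK.le
              exact mul_le_mul_of_nonneg_right hfrac (Real.rpow_nonneg (Real.sqrt_nonneg _) _)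
          _ = K * Real.sqrt (1 + (r - b) ^ 2) ^ (-(1 + ε)) := by ring
    have step2 : (∫ r in Ioi (0:ℝ), K * h (r - b)) ≤ ∫ r : ℝ, K * h (r - b) := by
      apply setIntegral_le_integral hshift
      filter_upwards with r
      exact mul_nonneg hK.le (hh_nonneg _)
    have step3 : (∫ r : ℝ, K * h (r - b)) = K * I := by
      rw [integral_const_mul, hI_def, integral_sub_right_eq_self h b]
    exact step1.trans (step2.trans step3.le)
  calc (n : ℝ) * (vol * ∫ r in Ioi (0:ℝ), r ^ (n - 1) • G r)
      ≤ (n : ℝ) * (vol * (K * I)) := by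
        apply mul_le_mul_of_nonneg_left (mul_le_mul_of_nonneg_left hJ hvol_nonneg)
        positivity
    _ ≤ (n : ℝ) * (vol * (K * I)) + 1 := by linarith
end

section
/- Let n ≥ 1 be an integer and let p > 1 be a real number. Then there exists C > 0 (depending only on n and p) such that for every y ∈ ℝⁿ, ∫_{{x : |x| > 2|y|}} ⟨x⟩^{−(n−1)p/2} ⟨y⟩^{−(n−1)p/2} ⟨|x|−|y|⟩^{−(n+1)p/2} dx ≤ C ⟨y⟩^{n − (3n−1)p/2}. -/
open MeasureTheory Real Set

-- auxiliary: (1+t) ≤ √2 · √(1+t²) for t ≥ 0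
lemma aux_sqrt_lower {t : ℝ} (ht : 0 ≤ t) :
    1 + t ≤ Real.sqrt 2 * Real.sqrt (1 + t ^ 2) := by
  rw [← Real.sqrt_mul (by norm_num)]
  rw [show (1:ℝ) + t = Real.sqrt ((1+t)^2) from (Real.sqrt_sq (by positivity)).symm]
  apply Real.sqrt_le_sqrt
  nlinarith [sq_nonneg (t - 1)]

lemma div_rpow_neg {x : ℝ} (w r : ℝ) (hx : 0 ≤ x) (hw : 0 < w) :
    (x / w) ^ (-r) = w ^ r * x ^ (-r) := by
  rw [Real.div_rpow hx hw.le, Real.rpow_neg hw.le, div_eq_mul_inv, inv_inv, mul_comm]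

lemma key (n : ℕ) (q : ℝ) (hq : (n:ℝ) < q) :
    ∃ C > 0, ∀ y : EuclideanSpace ℝ (Fin n),
      (∫ x in {x : EuclideanSpace ℝ (Fin n) | 2 * ‖y‖ < ‖x‖}, (1 + ‖x‖) ^ (-q))
        ≤ C * Real.sqrt (1 + ‖y‖ ^ 2) ^ ((n:ℝ) - q) := by
  have hfr : (Module.finrank ℝ (EuclideanSpace ℝ (Fin n)) : ℝ) < q := by
    simpa [finrank_euclideanSpace_fin] using hq
  have hI : Integrable (fun x : EuclideanSpace ℝ (Fin n) => (1 + ‖x‖) ^ (-q)) :=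
    integrable_one_add_norm hfr
  set I := ∫ u : EuclideanSpace ℝ (Fin n), (1 + ‖u‖) ^ (-q) with hIdef
  have hI0 : 0 ≤ I := integral_nonneg fun x => Real.rpow_nonneg (by positivity) _
  refine ⟨(2:ℝ) ^ q * I + (2:ℝ) ^ ((q - n)/2) * I + 1, by positivity, fun y => ?_⟩
  set c := Real.sqrt (1 + ‖y‖ ^ 2) with hcdef
  have hc0 : 0 < c := Real.sqrt_pos.2 (by positivity)
  have hpow : 0 < c ^ ((n:ℝ) - q) := Real.rpow_pos_of_pos hc0 _
  set S := {x : EuclideanSpace ℝ (Fin n) | 2 * ‖y‖ < ‖x‖} with hSdef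
  have hSmeas : MeasurableSet S := measurableSet_lt measurable_const measurable_norm
  rcases le_or_gt ‖y‖ 1 with hy | hy
  · -- small y
    have h1 : (∫ x in S, (1 + ‖x‖) ^ (-q)) ≤ I :=
      setIntegral_le_integral hI (ae_of_all _ fun x => Real.rpow_nonneg (by positivity) _)
    have hc2 : c ≤ Real.sqrt 2 := Real.sqrt_le_sqrt (by nlinarith [norm_nonneg y])
    have h2 : Real.sqrt 2 ^ ((n:ℝ) - q) ≤ c ^ ((n:ℝ) - q) :=
      Real.rpow_le_rpow_of_nonpos hc0 hc2 (by linarith)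
    have h3 : Real.sqrt 2 ^ ((n:ℝ) - q) = 2 ^ (((n:ℝ) - q)/2) := by
      rw [show Real.sqrt 2 = (2:ℝ) ^ ((1:ℝ)/2) from Real.sqrt_eq_rpow 2,
        ← Real.rpow_mul (by norm_num)]
      ring_nf
    have h4 : (2:ℝ) ^ ((q - n)/2) * (2:ℝ) ^ (((n:ℝ) - q)/2) = 1 := by
      rw [← Real.rpow_add (by norm_num), show (q - ↑n)/2 + ((↑n:ℝ) - q)/2 = 0 by ring,
        Real.rpow_zero]
    have h5 : I ≤ (2:ℝ) ^ ((q - n)/2) * I * c ^ ((n:ℝ) - q) := by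
      calc I = ((2:ℝ) ^ ((q - n)/2) * (2:ℝ) ^ (((n:ℝ) - q)/2)) * I := by rw [h4, one_mul]
        _ = (2:ℝ) ^ ((q - n)/2) * I * (2 ^ (((n:ℝ) - q)/2)) := by ring
        _ ≤ (2:ℝ) ^ ((q - n)/2) * I * c ^ ((n:ℝ) - q) := by
            rw [← h3]; apply mul_le_mul_of_nonneg_left h2 (by positivity)
    have h6 : (0:ℝ) ≤ ((2:ℝ) ^ q * I + 1) * c ^ ((n:ℝ) - q) := by positivity
    calc (∫ x in S, (1 + ‖x‖) ^ (-q)) ≤ I := h1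
      _ ≤ (2:ℝ) ^ ((q - n)/2) * I * c ^ ((n:ℝ) - q) := h5
      _ ≤ ((2:ℝ) ^ q * I + (2:ℝ) ^ ((q - n)/2) * I + 1) * c ^ ((n:ℝ) - q) := by
          have h7 : (2:ℝ)^((q - ↑n)/2) * I ≤ (2:ℝ) ^ q * I + (2:ℝ) ^ ((q - ↑n)/2) * I + 1 := by
            have := Real.rpow_nonneg (by norm_num : (0:ℝ) ≤ 2) q
            nlinarith
          exact mul_le_mul_of_nonneg_right h7 hpow.le
  · -- large y
    have hc2 : c ≤ Real.sqrt 2 * ‖y‖ := by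
      rw [show Real.sqrt 2 * ‖y‖ = Real.sqrt (2 * ‖y‖^2) by
        rw [Real.sqrt_mul (by norm_num), Real.sqrt_sq (norm_nonneg y)]]
      exact Real.sqrt_le_sqrt (by nlinarith)
    set F := S.indicator (fun x : EuclideanSpace ℝ (Fin n) => (1 + ‖x‖) ^ (-q)) with hFdef
    have e1 : (∫ x in S, (1 + ‖x‖) ^ (-q)) = ∫ x, F x := (integral_indicator hSmeas).symm
    have e2 : (∫ x, F x) = c ^ n • ∫ u, F (c • u) := by
      have h := Measure.integral_comp_inv_smul_of_nonneg (volume : Measure (EuclideanSpace ℝ (Fin n)))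
        (fun u => F (c • u)) hc0.le
      simp only [smul_inv_smul₀ hc0.ne'] at h
      rw [h, finrank_euclideanSpace_fin]
    have e3 : (∫ u, F (c • u)) ≤ (2:ℝ)^q * c^(-q) * I := by
      have hint : Integrable (fun u : EuclideanSpace ℝ (Fin n) =>
          (2:ℝ)^q * c^(-q) * (1 + ‖u‖) ^ (-q)) := (hI.const_mul _)
      have hle : ∀ u : EuclideanSpace ℝ (Fin n),
          F (c • u) ≤ (2:ℝ)^q * c^(-q) * (1 + ‖u‖) ^ (-q) := by
        intro u
        by_cases h : c • u ∈ S
        · rw [hFdef, Set.indicator_of_mem h]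
          have hnorm : ‖c • u‖ = c * ‖u‖ := by
            rw [norm_smul, Real.norm_eq_abs, abs_of_pos hc0]
          have hmem : 2 * ‖y‖ < c * ‖u‖ := by rw [← hnorm]; exact h
          have hu1 : 1 ≤ ‖u‖ := by
            have h2c : Real.sqrt 2 * c ≤ 2 * ‖y‖ := by
              calc Real.sqrt 2 * c ≤ Real.sqrt 2 * (Real.sqrt 2 * ‖y‖) := by
                    apply mul_le_mul_of_nonneg_left hc2 (Real.sqrt_nonneg 2)
                _ = 2 * ‖y‖ := by rw [← mul_assoc, Real.mul_self_sqrt (by norm_num)]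
            have : Real.sqrt 2 * c < c * ‖u‖ := lt_of_le_of_lt h2c hmem
            have hs2 : (1:ℝ) ≤ Real.sqrt 2 := by
              rw [show (1:ℝ) = Real.sqrt 1 from (Real.sqrt_one).symm]
              exact Real.sqrt_le_sqrt (by norm_num)
            nlinarith
          have hkey : c * (1 + ‖u‖) / 2 ≤ 1 + c * ‖u‖ := by nlinarith
          have h0 : 0 < c * (1 + ‖u‖) / 2 := by positivity
          calc (1 + ‖c • u‖) ^ (-q) = (1 + c * ‖u‖) ^ (-q) := by rw [hnorm]
            _ ≤ (c * (1 + ‖u‖) / 2) ^ (-q) :=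
                Real.rpow_le_rpow_of_nonpos h0 hkey (by have : (0:ℝ) ≤ (n:ℝ) := Nat.cast_nonneg n; linarith)
            _ = (2:ℝ)^q * c^(-q) * (1 + ‖u‖) ^ (-q) := by
                rw [div_rpow_neg 2 q (by positivity) (by norm_num),
                  Real.mul_rpow hc0.le (by positivity)]
                ring
        · rw [hFdef, Set.indicator_of_notMem h]
          positivity
      calc (∫ u, F (c • u)) ≤ ∫ u : EuclideanSpace ℝ (Fin n),
            (2:ℝ)^q * c^(-q) * (1 + ‖u‖) ^ (-q) := by
            refine integral_mono_of_nonneg (ae_of_all _ fun u => ?_) hint (ae_of_all _ hle)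
            exact Set.indicator_nonneg (fun x _ => Real.rpow_nonneg (by positivity) _) _
        _ = (2:ℝ)^q * c^(-q) * I := integral_const_mul _ _
    have e4 : c ^ n * (2^q * c^(-q) * I) = 2^q * I * c^((n:ℝ) - q) := by
      rw [show (c:ℝ) ^ n = c ^ ((n:ℝ)) from (Real.rpow_natCast c n).symm,
        show c ^ ((n:ℝ)) * ((2:ℝ)^q * c^(-q) * I) = 2^q * I * (c ^ ((n:ℝ)) * c^(-q)) by ring,
        ← Real.rpow_add hc0]
      ring_nf
    calc (∫ x in S, (1 + ‖x‖) ^ (-q)) = c ^ n • ∫ u, F (c • u) := by rw [e1, e2]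
      _ ≤ c ^ n * ((2:ℝ)^q * c^(-q) * I) := by
          rw [smul_eq_mul]
          exact mul_le_mul_of_nonneg_left e3 (by positivity)
      _ = 2^q * I * c^((n:ℝ) - q) := e4
      _ ≤ ((2:ℝ) ^ q * I + (2:ℝ) ^ ((q - n)/2) * I + 1) * c ^ ((n:ℝ) - q) := by
          have h7 : (2:ℝ)^q * I ≤ (2:ℝ) ^ q * I + (2:ℝ) ^ ((q - ↑n)/2) * I + 1 := by
            have := Real.rpow_nonneg (by norm_num : (0:ℝ) ≤ 2) ((q - ↑n)/2)
            nlinarith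
          exact mul_le_mul_of_nonneg_right h7 hpow.le

theorem stmt_7 (n : ℕ) (hn : 1 ≤ n) (p : ℝ) (hp : 1 < p) :
    ∃ C > 0, ∀ y : EuclideanSpace ℝ (Fin n),
      (∫ x in {x : EuclideanSpace ℝ (Fin n) | 2 * ‖y‖ < ‖x‖},
          Real.sqrt (1 + ‖x‖ ^ 2) ^ (-(((n : ℝ) - 1) * p / 2)) *
            Real.sqrt (1 + ‖y‖ ^ 2) ^ (-(((n : ℝ) - 1) * p / 2)) *
              Real.sqrt (1 + (‖x‖ - ‖y‖) ^ 2) ^ (-(((n : ℝ) + 1) * p / 2)))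
        ≤ C * Real.sqrt (1 + ‖y‖ ^ 2) ^ ((n : ℝ) - (3 * (n : ℝ) - 1) * p / 2) := by
  have hn1 : (1:ℝ) ≤ (n:ℝ) := by exact_mod_cast hn
  have hq : (n:ℝ) < (n:ℝ) * p := by nlinarith
  obtain ⟨C₁, hC₁, hkey⟩ := key n ((n:ℝ) * p) hq
  set a : ℝ := ((n:ℝ) - 1) * p / 2 with hadef
  set b : ℝ := ((n:ℝ) + 1) * p / 2 with hbdef
  have ha0 : 0 ≤ a := by rw [hadef]; nlinarith
  have hb0 : 0 ≤ b := by rw [hbdef]; nlinarith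
  set K : ℝ := Real.sqrt 2 ^ a * (2 * Real.sqrt 2) ^ b with hKdef
  have hs2 : (0:ℝ) < Real.sqrt 2 := Real.sqrt_pos.2 (by norm_num)
  have hK0 : 0 < K := by positivity
  refine ⟨K * C₁, by positivity, fun y => ?_⟩
  set cy := Real.sqrt (1 + ‖y‖ ^ 2) with hcydef
  have hcy0 : 0 < cy := Real.sqrt_pos.2 (by positivity)
  set S := {x : EuclideanSpace ℝ (Fin n) | 2 * ‖y‖ < ‖x‖} with hSdef
  have hSmeas : MeasurableSet S := measurableSet_lt measurable_const measurable_norm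
  have hfr : (Module.finrank ℝ (EuclideanSpace ℝ (Fin n)) : ℝ) < (n:ℝ) * p := by
    simpa [finrank_euclideanSpace_fin] using hq
  have hIg : Integrable (fun x : EuclideanSpace ℝ (Fin n) =>
      K * cy ^ (-a) * (1 + ‖x‖) ^ (-((n:ℝ) * p))) := (integrable_one_add_norm hfr).const_mul _
  -- pointwise bound on S
  have hpt : ∀ x ∈ S, Real.sqrt (1 + ‖x‖ ^ 2) ^ (-a) * cy ^ (-a) *
      Real.sqrt (1 + (‖x‖ - ‖y‖) ^ 2) ^ (-b)
      ≤ K * cy ^ (-a) * (1 + ‖x‖) ^ (-((n:ℝ) * p)) := by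
    intro x hx
    have hx' : 2 * ‖y‖ < ‖x‖ := hx
    have hxn : (0:ℝ) ≤ ‖x‖ := norm_nonneg x
    have hyn : (0:ℝ) ≤ ‖y‖ := norm_nonneg y
    -- bound 1
    have hb1 : Real.sqrt (1 + ‖x‖ ^ 2) ^ (-a) ≤ Real.sqrt 2 ^ a * (1 + ‖x‖) ^ (-a) := by
      have h1 : (1 + ‖x‖) / Real.sqrt 2 ≤ Real.sqrt (1 + ‖x‖ ^ 2) := by
        rw [div_le_iff₀ hs2, mul_comm]
        exact aux_sqrt_lower hxn
      calc Real.sqrt (1 + ‖x‖ ^ 2) ^ (-a) ≤ ((1 + ‖x‖) / Real.sqrt 2) ^ (-a) :=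
            Real.rpow_le_rpow_of_nonpos (by positivity) h1 (by linarith)
        _ = Real.sqrt 2 ^ a * (1 + ‖x‖) ^ (-a) := div_rpow_neg _ _ (by positivity) hs2
    -- bound 3
    have ht0 : 0 ≤ ‖x‖ - ‖y‖ := by linarith
    have hb3 : Real.sqrt (1 + (‖x‖ - ‖y‖) ^ 2) ^ (-b)
        ≤ (2 * Real.sqrt 2) ^ b * (1 + ‖x‖) ^ (-b) := by
      have h1 : (1 + ‖x‖) / (2 * Real.sqrt 2) ≤ Real.sqrt (1 + (‖x‖ - ‖y‖) ^ 2) := by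
        rw [div_le_iff₀ (by positivity)]
        have h2 : 1 + ‖x‖ ≤ 2 * (1 + (‖x‖ - ‖y‖)) := by linarith
        have h3 := aux_sqrt_lower ht0
        nlinarith [Real.sqrt_nonneg (1 + (‖x‖ - ‖y‖) ^ 2)]
      calc Real.sqrt (1 + (‖x‖ - ‖y‖) ^ 2) ^ (-b) ≤ ((1 + ‖x‖) / (2 * Real.sqrt 2)) ^ (-b) :=
            Real.rpow_le_rpow_of_nonpos (by positivity) h1 (by linarith)
        _ = (2 * Real.sqrt 2) ^ b * (1 + ‖x‖) ^ (-b) :=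
            div_rpow_neg _ _ (by positivity) (by positivity)
    calc Real.sqrt (1 + ‖x‖ ^ 2) ^ (-a) * cy ^ (-a) * Real.sqrt (1 + (‖x‖ - ‖y‖) ^ 2) ^ (-b)
        ≤ (Real.sqrt 2 ^ a * (1 + ‖x‖) ^ (-a)) * cy ^ (-a) *
            ((2 * Real.sqrt 2) ^ b * (1 + ‖x‖) ^ (-b)) := by
          have h0 : (0:ℝ) ≤ Real.sqrt (1 + ‖x‖ ^ 2) ^ (-a) := by positivity
          have h1 : (0:ℝ) ≤ cy ^ (-a) := by positivity
          have h2 : (0:ℝ) ≤ Real.sqrt (1 + (‖x‖ - ‖y‖) ^ 2) ^ (-b) := by positivity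
          have h3 : (0:ℝ) ≤ (Real.sqrt 2 ^ a * (1 + ‖x‖) ^ (-a)) * cy ^ (-a) := by positivity
          exact mul_le_mul (mul_le_mul hb1 le_rfl h1 (by positivity)) hb3 h2 h3
      _ = K * cy ^ (-a) * ((1 + ‖x‖) ^ (-a) * (1 + ‖x‖) ^ (-b)) := by rw [hKdef]; ring
      _ = K * cy ^ (-a) * (1 + ‖x‖) ^ (-((n:ℝ) * p)) := by
          rw [← Real.rpow_add (by positivity)]
          congr 1
          rw [hadef, hbdef]; ring
  have step1 : (∫ x in S,
      Real.sqrt (1 + ‖x‖ ^ 2) ^ (-a) * cy ^ (-a) * Real.sqrt (1 + (‖x‖ - ‖y‖) ^ 2) ^ (-b))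
      ≤ ∫ x in S, K * cy ^ (-a) * (1 + ‖x‖) ^ (-((n:ℝ) * p)) := by
    refine integral_mono_of_nonneg (ae_of_all _ fun x => by positivity)
      hIg.integrableOn ?_
    exact (ae_restrict_iff' hSmeas).2 (ae_of_all _ hpt)
  have step2 : (∫ x in S, K * cy ^ (-a) * (1 + ‖x‖) ^ (-((n:ℝ) * p)))
      = K * cy ^ (-a) * ∫ x in S, (1 + ‖x‖) ^ (-((n:ℝ) * p)) := integral_const_mul _ _
  have step3 : K * cy ^ (-a) * (∫ x in S, (1 + ‖x‖) ^ (-((n:ℝ) * p)))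
      ≤ K * cy ^ (-a) * (C₁ * cy ^ ((n:ℝ) - (n:ℝ) * p)) :=
    mul_le_mul_of_nonneg_left (hkey y) (by positivity)
  have step4 : K * cy ^ (-a) * (C₁ * cy ^ ((n:ℝ) - (n:ℝ) * p))
      = K * C₁ * cy ^ ((n:ℝ) - (3 * (n:ℝ) - 1) * p / 2) := by
    rw [show K * cy ^ (-a) * (C₁ * cy ^ ((n:ℝ) - (n:ℝ) * p))
        = K * C₁ * (cy ^ (-a) * cy ^ ((n:ℝ) - (n:ℝ) * p)) by ring,
      ← Real.rpow_add hcy0]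
    congr 1
    rw [hadef]; ring
  calc (∫ x in S,
      Real.sqrt (1 + ‖x‖ ^ 2) ^ (-a) * cy ^ (-a) * Real.sqrt (1 + (‖x‖ - ‖y‖) ^ 2) ^ (-b))
      ≤ ∫ x in S, K * cy ^ (-a) * (1 + ‖x‖) ^ (-((n:ℝ) * p)) := step1
    _ = K * cy ^ (-a) * ∫ x in S, (1 + ‖x‖) ^ (-((n:ℝ) * p)) := step2
    _ ≤ K * cy ^ (-a) * (C₁ * cy ^ ((n:ℝ) - (n:ℝ) * p)) := step3
    _ = K * C₁ * cy ^ ((n:ℝ) - (3 * (n:ℝ) - 1) * p / 2) := step4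
end

section
/- Let n ≥ 1 and m ≥ 1 be integers. There exist constants c, C > 0 (depending only on n and m) such that for every unit vector ω ∈ ℝⁿ and every ξ ∈ ℝⁿ, c (1+|ξ|²)^{m−1} ≤ q_ω(ξ) ≤ C (1+|ξ|²)^{m−1}, where q_ω(ξ) := Σ_{ℓ=0}^{m−1} |ω−ξ|^{2ℓ} |ξ|^{2(m−1−ℓ)}. In particular q_ω(ξ) > 0 for all ξ. -/
open Real Finset

lemma aux_sandwich (m : ℕ) (hm : 1 ≤ m) (a b : ℝ) (ha : 0 ≤ a) (hb : 0 ≤ b)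
    (hab : 1/2 ≤ a + b) (ha2 : a ≤ 2 * (1 + b)) :
    (1/8 : ℝ) ^ (m - 1) * (1 + b) ^ (m - 1) ≤ ∑ ℓ ∈ Finset.range m, a ^ ℓ * b ^ (m - 1 - ℓ) ∧
      ∑ ℓ ∈ Finset.range m, a ^ ℓ * b ^ (m - 1 - ℓ) ≤ (3 : ℝ) ^ (m - 1) * (1 + b) ^ (m - 1) := by
  have hb1 : (0:ℝ) ≤ 1 + b := by linarith
  constructor
  · -- lower bound
    have hmax1 : (1:ℝ)/4 ≤ max a b := by
      rcases le_total a b with h | h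
      · have : b = max a b := (max_eq_right h).symm
        linarith [le_max_right a b, le_max_left a b, this ▸ (le_max_left a b)]
      · have hh : a ≤ max a b := le_max_left a b
        have hh2 : b ≤ max a b := le_max_right a b
        linarith
    have hmax2 : b ≤ max a b := le_max_right a b
    have hkey : (1 + b) / 8 ≤ max a b := by linarith
    have hpow : ((1 + b) / 8) ^ (m - 1) ≤ (max a b) ^ (m - 1) :=
      pow_le_pow_left₀ (by positivity) hkey _
    have hterm : (max a b) ^ (m - 1) ≤ ∑ ℓ ∈ Finset.range m, a ^ ℓ * b ^ (m - 1 - ℓ) := by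
      have hnn : ∀ i ∈ Finset.range m, 0 ≤ a ^ i * b ^ (m - 1 - i) :=
        fun i _ => mul_nonneg (pow_nonneg ha i) (pow_nonneg hb _)
      rcases le_total a b with h | h
      · have h0 : (0:ℕ) ∈ Finset.range m := Finset.mem_range.mpr hm
        have := Finset.single_le_sum hnn h0
        simpa [max_eq_right h] using this
      · have h0 : m - 1 ∈ Finset.range m := Finset.mem_range.mpr (by omega)
        have := Finset.single_le_sum hnn h0
        simpa [max_eq_left h, Nat.sub_self] using this
    calc (1/8 : ℝ) ^ (m - 1) * (1 + b) ^ (m - 1) = ((1 + b) / 8) ^ (m - 1) := by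
          rw [← mul_pow]; ring_nf
      _ ≤ (max a b) ^ (m - 1) := hpow
      _ ≤ _ := hterm
  · -- upper bound
    have h1 : ∑ ℓ ∈ Finset.range m, a ^ ℓ * b ^ (m - 1 - ℓ) ≤ (a + b) ^ (m - 1) := by
      rw [add_pow]
      rw [show m - 1 + 1 = m by omega]
      refine Finset.sum_le_sum fun ℓ hℓ => ?_
      have hc : (1:ℝ) ≤ ((m - 1).choose ℓ : ℝ) := by
        have hℓ' : ℓ ≤ m - 1 := by simp [Finset.mem_range] at hℓ; omega
        exact_mod_cast Nat.choose_pos hℓ'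
      have hnn : 0 ≤ a ^ ℓ * b ^ (m - 1 - ℓ) :=
        mul_nonneg (pow_nonneg ha ℓ) (pow_nonneg hb _)
      calc a ^ ℓ * b ^ (m - 1 - ℓ) ≤ a ^ ℓ * b ^ (m - 1 - ℓ) * ((m - 1).choose ℓ : ℝ) :=
            le_mul_of_one_le_right hnn hc
        _ = _ := by ring
    have h2 : a + b ≤ 3 * (1 + b) := by linarith
    calc ∑ ℓ ∈ Finset.range m, a ^ ℓ * b ^ (m - 1 - ℓ) ≤ (a + b) ^ (m - 1) := h1
      _ ≤ (3 * (1 + b)) ^ (m - 1) := pow_le_pow_left₀ (by linarith) h2 _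
      _ = (3:ℝ) ^ (m - 1) * (1 + b) ^ (m - 1) := mul_pow _ _ _

theorem stmt_8 (n m : ℕ) (hn : 1 ≤ n) (hm : 1 ≤ m) :
    ∃ c > 0, ∃ C > 0, ∀ ω ξ : EuclideanSpace ℝ (Fin n), ‖ω‖ = 1 →
      (0 < ∑ ℓ ∈ Finset.range m, ‖ω - ξ‖ ^ (2 * ℓ) * ‖ξ‖ ^ (2 * (m - 1 - ℓ))) ∧
      c * (1 + ‖ξ‖ ^ 2) ^ (m - 1) ≤
        ∑ ℓ ∈ Finset.range m, ‖ω - ξ‖ ^ (2 * ℓ) * ‖ξ‖ ^ (2 * (m - 1 - ℓ)) ∧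
      (∑ ℓ ∈ Finset.range m, ‖ω - ξ‖ ^ (2 * ℓ) * ‖ξ‖ ^ (2 * (m - 1 - ℓ))) ≤
        C * (1 + ‖ξ‖ ^ 2) ^ (m - 1) := by
  refine ⟨(1/8 : ℝ) ^ (m - 1), by positivity, (3 : ℝ) ^ (m - 1), by positivity, ?_⟩
  intro ω ξ hω
  have hx : (0:ℝ) ≤ ‖ω - ξ‖ := norm_nonneg _
  have hy : (0:ℝ) ≤ ‖ξ‖ := norm_nonneg _
  have htri1 : ‖ω‖ ≤ ‖ω - ξ‖ + ‖ξ‖ := by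
    calc ‖ω‖ = ‖(ω - ξ) + ξ‖ := by rw [sub_add_cancel]
      _ ≤ ‖ω - ξ‖ + ‖ξ‖ := norm_add_le _ _
  have htri2 : ‖ω - ξ‖ ≤ 1 + ‖ξ‖ := by
    calc ‖ω - ξ‖ ≤ ‖ω‖ + ‖ξ‖ := norm_sub_le _ _
      _ = 1 + ‖ξ‖ := by rw [hω]
  rw [hω] at htri1
  have hab : 1/2 ≤ ‖ω - ξ‖ ^ 2 + ‖ξ‖ ^ 2 := by nlinarith [sq_nonneg (‖ω - ξ‖ - ‖ξ‖), mul_le_mul htri1 htri1 (by linarith) (by linarith)]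
  have ha2 : ‖ω - ξ‖ ^ 2 ≤ 2 * (1 + ‖ξ‖ ^ 2) := by nlinarith [sq_nonneg (1 - ‖ξ‖), mul_le_mul htri2 htri2 hx (by linarith)]
  obtain ⟨hlow, hup⟩ := aux_sandwich m hm (‖ω - ξ‖ ^ 2) (‖ξ‖ ^ 2) (sq_nonneg _) (sq_nonneg _)
    hab ha2
  have heq : ∑ ℓ ∈ Finset.range m, ‖ω - ξ‖ ^ (2 * ℓ) * ‖ξ‖ ^ (2 * (m - 1 - ℓ)) =
      ∑ ℓ ∈ Finset.range m, (‖ω - ξ‖ ^ 2) ^ ℓ * (‖ξ‖ ^ 2) ^ (m - 1 - ℓ) := by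
    refine Finset.sum_congr rfl fun ℓ _ => ?_
    rw [pow_mul, pow_mul]
  rw [heq]
  have hpos : (0:ℝ) < (1/8 : ℝ) ^ (m - 1) * (1 + ‖ξ‖ ^ 2) ^ (m - 1) := by positivity
  exact ⟨lt_of_lt_of_le hpos hlow, hlow, hup⟩
end

section
/- Let n ≥ 1 and m ≥ 1 be integers, and let ω ∈ ℝⁿ be a unit vector. Then the function p_ω(ξ) := 1/q_ω(ξ), where q_ω(ξ) := Σ_{ℓ=0}^{m−1} |ω−ξ|^{2ℓ} |ξ|^{2(m−1−ℓ)}, is a smooth function on ℝⁿ, and for every integer N ≥ 0 there exists C > 0 (depending only on n, m, N) such that for every unit vector ω and all ξ ∈ ℝⁿ, the N-th total derivative satisfies ‖D^N p_ω(ξ)‖ ≤ C ⟨ξ⟩^{−(2m−2+N)}. -/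
open Real Finset

section Aux
variable {E : Type*} [NormedAddCommGroup E] [NormedSpace ℝ E]
variable {F' : Type*} [NormedAddCommGroup F'] [NormedSpace ℝ F']

lemma myIteratedFDeriv_comp_const_add (f : E → F') (hf : ContDiff ℝ (⊤ : ℕ∞) f) (c : E) :
    ∀ (i : ℕ) (x : E),
      iteratedFDeriv ℝ i (fun y => f (c + y)) x = iteratedFDeriv ℝ i f (c + x) := by
  intro i
  induction i with
  | zero => intro x; ext m'; simp
  | succ i IH =>
    intro x
    ext m'
    rw [iteratedFDeriv_succ_apply_left, iteratedFDeriv_succ_apply_left]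
    have hd : DifferentiableAt ℝ (iteratedFDeriv ℝ i f) (c + x) :=
      (hf.differentiable_iteratedFDeriv (by exact_mod_cast ENat.coe_lt_top i)).differentiableAt
    have ht : HasFDerivAt (fun y : E => c + y) (ContinuousLinearMap.id ℝ E) x := by
      simpa using (hasFDerivAt_id x).const_add c
    have heq : fderiv ℝ (iteratedFDeriv ℝ i fun y => f (c + y)) x
        = fderiv ℝ (iteratedFDeriv ℝ i f) (c + x) := by
      have h1 : (iteratedFDeriv ℝ i fun y => f (c + y))
          = fun y => iteratedFDeriv ℝ i f (c + y) := funext IH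
      rw [h1]
      have h2 := (hd.hasFDerivAt.comp x ht).fderiv
      simpa [Function.comp_def] using h2
    rw [heq]

lemma myIterateDerivConstMul (a : ℝ) (f : ℝ → ℝ) :
    ∀ i : ℕ, deriv^[i] (fun t => a * f t) = fun t => a * deriv^[i] f t := by
  intro i
  induction i with
  | zero => rfl
  | succ i IH =>
    rw [Function.iterate_succ_apply', IH, deriv_const_mul_field']
    funext t
    rw [Function.iterate_succ_apply']

lemma myProdFact : ∀ i : ℕ, ∏ j ∈ Finset.range i, ((j : ℝ) + 1) = ((Nat.factorial i : ℕ) : ℝ) := by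
  intro i
  induction i with
  | zero => simp
  | succ k IHk =>
    rw [Finset.prod_range_succ, IHk, Nat.factorial_succ]
    push_cast; ring

end Aux

section Aux2
variable {E : Type*} [NormedAddCommGroup E] [InnerProductSpace ℝ E]

noncomputable def myAuxF (m : ℕ) : E × E → ℝ :=
  fun p => ∑ ℓ ∈ Finset.range m, ‖p.1‖ ^ (2 * ℓ) * ‖p.2‖ ^ (2 * (m - 1 - ℓ))

lemma contDiff_myAuxF (m : ℕ) : ContDiff ℝ (⊤ : ℕ∞) (myAuxF (E := E) m) := by
  unfold myAuxF
  apply ContDiff.sum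
  intro ℓ _
  have h1 : ContDiff ℝ (⊤ : ℕ∞) (fun p : E × E => ‖p.1‖ ^ (2 * ℓ)) := by
    have := ((contDiff_norm_sq (𝕜 := ℝ) (E := E) (n := (⊤ : ℕ∞))).comp
      (contDiff_fst : ContDiff ℝ (⊤ : ℕ∞) (Prod.fst : E × E → E))).pow ℓ
    simpa [← pow_mul] using this
  have h2 : ContDiff ℝ (⊤ : ℕ∞) (fun p : E × E => ‖p.2‖ ^ (2 * (m - 1 - ℓ))) := by
    have := ((contDiff_norm_sq (𝕜 := ℝ) (E := E) (n := (⊤ : ℕ∞))).comp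
      (contDiff_snd : ContDiff ℝ (⊤ : ℕ∞) (Prod.snd : E × E → E))).pow (m - 1 - ℓ)
    simpa [← pow_mul] using this
  exact h1.mul h2

lemma myAuxF_smul (m : ℕ) (hm : 1 ≤ m) (s : ℝ) (x y : E) :
    myAuxF m (s • x, s • y) = (s ^ 2) ^ (m - 1) * myAuxF m (x, y) := by
  unfold myAuxF
  rw [Finset.mul_sum]
  refine Finset.sum_congr rfl fun ℓ hℓ => ?_
  have hℓ' : ℓ ≤ m - 1 := by have := Finset.mem_range.1 hℓ; omega
  simp only [norm_smul, Real.norm_eq_abs, mul_pow]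
  have e1 : |s| ^ (2 * ℓ) * |s| ^ (2 * (m - 1 - ℓ)) = (s ^ 2) ^ (m - 1) := by
    rw [← pow_add, show 2 * ℓ + 2 * (m - 1 - ℓ) = 2 * (m - 1) by omega, pow_mul, sq_abs]
  calc |s| ^ (2 * ℓ) * ‖x‖ ^ (2 * ℓ) * (|s| ^ (2 * (m - 1 - ℓ)) * ‖y‖ ^ (2 * (m - 1 - ℓ)))
      = (|s| ^ (2 * ℓ) * |s| ^ (2 * (m - 1 - ℓ))) *
        (‖x‖ ^ (2 * ℓ) * ‖y‖ ^ (2 * (m - 1 - ℓ))) := by ring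
    _ = (s ^ 2) ^ (m - 1) * (‖x‖ ^ (2 * ℓ) * ‖y‖ ^ (2 * (m - 1 - ℓ))) := by rw [e1]

omit [InnerProductSpace ℝ E] in
lemma myAuxF_lower (m : ℕ) (hm : 1 ≤ m) (ω ξ : E) (hω : ‖ω‖ = 1) :
    Real.sqrt (1 + ‖ξ‖ ^ 2) ^ (2 * (m - 1)) ≤ 8 ^ (m - 1) * myAuxF m (ω - ξ, ξ) := by
  set M := max ‖ω - ξ‖ ‖ξ‖ with hMdef
  have hM0 : 0 ≤ M := le_trans (norm_nonneg _) (le_max_right _ _)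
  have hM : 1 ≤ 2 * M := by
    have h1 : ‖ω‖ ≤ ‖ω - ξ‖ + ‖ξ‖ := by
      simpa using norm_add_le (ω - ξ) ξ
    have h2 : ‖ω - ξ‖ ≤ M := le_max_left _ _
    have h3 : ‖ξ‖ ≤ M := le_max_right _ _
    rw [hω] at h1; linarith
  have h1 : Real.sqrt (1 + ‖ξ‖ ^ 2) ^ (2 * (m - 1)) = (1 + ‖ξ‖ ^ 2) ^ (m - 1) := by
    rw [pow_mul, Real.sq_sqrt (by positivity)]
  have h2 : 1 + ‖ξ‖ ^ 2 ≤ 8 * M ^ 2 := by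
    have hξM : ‖ξ‖ ≤ M := le_max_right _ _
    nlinarith [norm_nonneg ξ]
  have h3 : M ^ (2 * (m - 1)) ≤ myAuxF m (ω - ξ, ξ) := by
    have hnonneg : ∀ ℓ ∈ Finset.range m,
        0 ≤ ‖ω - ξ‖ ^ (2 * ℓ) * ‖ξ‖ ^ (2 * (m - 1 - ℓ)) := fun ℓ _ => by positivity
    rcases max_cases ‖ω - ξ‖ ‖ξ‖ with ⟨hc, _⟩ | ⟨hc, _⟩
    · have hmem : m - 1 ∈ Finset.range m := Finset.mem_range.2 (by omega)
      have := Finset.single_le_sum hnonneg hmem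
      calc M ^ (2 * (m - 1)) = ‖ω - ξ‖ ^ (2 * (m - 1)) * ‖ξ‖ ^ (2 * (m - 1 - (m - 1))) := by
            rw [hMdef, hc, show m - 1 - (m - 1) = 0 by omega]; simp
        _ ≤ myAuxF m (ω - ξ, ξ) := this
    · have hmem : 0 ∈ Finset.range m := Finset.mem_range.2 (by omega)
      have := Finset.single_le_sum hnonneg hmem
      calc M ^ (2 * (m - 1)) = ‖ω - ξ‖ ^ (2 * 0) * ‖ξ‖ ^ (2 * (m - 1 - 0)) := by
            rw [hMdef, hc]; simp
        _ ≤ myAuxF m (ω - ξ, ξ) := this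
  calc Real.sqrt (1 + ‖ξ‖ ^ 2) ^ (2 * (m - 1)) = (1 + ‖ξ‖ ^ 2) ^ (m - 1) := h1
    _ ≤ (8 * M ^ 2) ^ (m - 1) := pow_le_pow_left₀ (by positivity) h2 _
    _ = 8 ^ (m - 1) * M ^ (2 * (m - 1)) := by rw [mul_pow, ← pow_mul]
    _ ≤ 8 ^ (m - 1) * myAuxF m (ω - ξ, ξ) :=
        mul_le_mul_of_nonneg_left h3 (by positivity)

omit [InnerProductSpace ℝ E] in
lemma myAuxF_pos (m : ℕ) (hm : 1 ≤ m) (ω ξ : E) (hω : ‖ω‖ = 1) :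
    0 < myAuxF m (ω - ξ, ξ) := by
  have h := myAuxF_lower m hm ω ξ hω
  have hs : (0:ℝ) < Real.sqrt (1 + ‖ξ‖ ^ 2) ^ (2 * (m - 1)) := by
    have : (0:ℝ) < Real.sqrt (1 + ‖ξ‖ ^ 2) := Real.sqrt_pos.2 (by positivity)
    positivity
  have h8 : (0:ℝ) < 8 ^ (m - 1) := by positivity
  nlinarith

lemma contDiff_myP (m : ℕ) (hm : 1 ≤ m) (ω : E) (hω : ‖ω‖ = 1) :
    ContDiff ℝ (⊤ : ℕ∞) (fun ξ : E =>
      (∑ ℓ ∈ Finset.range m, ‖ω - ξ‖ ^ (2 * ℓ) * ‖ξ‖ ^ (2 * (m - 1 - ℓ)))⁻¹) := by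
  have hq : ContDiff ℝ (⊤ : ℕ∞) (
      fun ξ : E => myAuxF m (ω - ξ, ξ)) :=
    (contDiff_myAuxF m).comp (ContDiff.prodMk (contDiff_const.sub contDiff_id) contDiff_id)
  exact hq.inv fun ξ => (myAuxF_pos m hm ω ξ hω).ne'

end Aux2

lemma myMainBound {E : Type*} [NormedAddCommGroup E] [InnerProductSpace ℝ E]
    [FiniteDimensional ℝ E] (m : ℕ) (hm : 1 ≤ m) (N : ℕ) :
    ∃ C > 0, ∀ ω : E, ‖ω‖ = 1 → ∀ ξ : E,
      ‖iteratedFDeriv ℝ N (fun ξ : E =>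
          (∑ ℓ ∈ Finset.range m, ‖ω - ξ‖ ^ (2 * ℓ) * ‖ξ‖ ^ (2 * (m - 1 - ℓ)))⁻¹) ξ‖ ≤
        C * Real.sqrt (1 + ‖ξ‖ ^ 2) ^ (-(2 * (m : ℝ) - 2 + N)) := by
  classical
  set c₁ : ℝ := 8 ^ (m - 1) with hc₁def
  have hc₁ : 0 < c₁ := by positivity
  obtain ⟨D₀, hD₀⟩ := (isCompact_closedBall (0 : E × E) 3).exists_bound_of_continuousOn
    (f := fun p => ∑ i ∈ Finset.range (N + 1), ‖iteratedFDeriv ℝ i (myAuxF (E := E) m) p‖)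
    (Continuous.continuousOn (continuous_finset_sum _ fun i _ =>
        ((contDiff_myAuxF m).continuous_iteratedFDeriv (by exact_mod_cast le_top)).norm))
  have hDF : ∀ i ≤ N, ∀ p ∈ Metric.closedBall (0 : E × E) 3,
      ‖iteratedFDeriv ℝ i (myAuxF (E := E) m) p‖ ≤ D₀ := by
    intro i hi p hp
    refine le_trans ?_ (le_trans (le_abs_self _) (by simpa using hD₀ p hp))
    exact Finset.single_le_sum (f := fun j => ‖iteratedFDeriv ℝ j (myAuxF (E := E) m) p‖)
      (fun j _ => norm_nonneg _) (Finset.mem_range.2 (by omega))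
  have hD₀0 : 0 ≤ D₀ :=
    le_trans (norm_nonneg _) (hDF 0 (by omega) 0 (by simp [Metric.mem_closedBall]))
  set D : ℝ := max D₀ 1 with hDdef
  have hD1 : 1 ≤ D := le_max_right _ _
  set C₀ : ℝ := ((Nat.factorial N : ℕ) : ℝ) * (max c₁ 1) ^ (N + 1) with hC₀def
  have hC₀pos : 0 < C₀ := by positivity
  refine ⟨((Nat.factorial N : ℕ) : ℝ) * C₀ * D ^ N, by positivity, ?_⟩
  intro ω hω ξ₀
  set R : ℝ := Real.sqrt (1 + ‖ξ₀‖ ^ 2) with hRdef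
  have hR2 : R ^ 2 = 1 + ‖ξ₀‖ ^ 2 := Real.sq_sqrt (by positivity)
  have hR0 : 0 ≤ R := Real.sqrt_nonneg _
  have hR1 : 1 ≤ R := by nlinarith [norm_nonneg ξ₀]
  have hRpos : 0 < R := lt_of_lt_of_le one_pos hR1
  have hRne : R ≠ 0 := hRpos.ne'
  have hξR : ‖ξ₀‖ ≤ R := by nlinarith [norm_nonneg ξ₀]
  set a : ℝ := (R ^ (2 * (m - 1)))⁻¹ with hadef
  have hapos : 0 < a := by positivity
  set w : E := R⁻¹ • (ω - ξ₀) with hwdef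
  set z : E := R⁻¹ • ξ₀ with hzdef
  set L : E →L[ℝ] E × E := (-(ContinuousLinearMap.id ℝ E)).prod (ContinuousLinearMap.id ℝ E)
    with hLdef
  have hLapp : ∀ η : E, L η = (-η, η) := fun η => rfl
  have hLnorm : ‖L‖ ≤ 1 := by
    refine ContinuousLinearMap.opNorm_le_bound _ zero_le_one fun η => ?_
    rw [hLapp, one_mul]
    simp [Prod.norm_def]
  set G : E × E → ℝ := fun p => myAuxF m ((w, z) + p) with hGdef
  have hGsmooth : ContDiff ℝ (⊤ : ℕ∞) G :=
    (contDiff_myAuxF m).comp (contDiff_const.add contDiff_id)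
  set ft : E → ℝ := fun η => G (L η) with hftdef
  have hftsmooth : ContDiff ℝ (⊤ : ℕ∞) ft := hGsmooth.comp L.contDiff
  have hval : ∀ η : E, ft η = a *
      (∑ ℓ ∈ Finset.range m,
        ‖ω - (ξ₀ + R • η)‖ ^ (2 * ℓ) * ‖ξ₀ + R • η‖ ^ (2 * (m - 1 - ℓ))) := by
    intro η
    have h1 : R • (w - η) = ω - (ξ₀ + R • η) := by
      rw [smul_sub, hwdef, smul_inv_smul₀ hRne]; abel
    have h2 : R • (z + η) = ξ₀ + R • η := by
      rw [smul_add, hzdef, smul_inv_smul₀ hRne]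
    have h3 := myAuxF_smul m hm R (w - η) (z + η)
    rw [h1, h2] at h3
    have hft : ft η = myAuxF m (w - η, z + η) := by
      show G (L η) = _
      rw [hLapp]
      show myAuxF m ((w, z) + (-η, η)) = _
      congr 1
      rw [Prod.mk_add_mk]
      congr 1
      abel
    have hsum : (∑ ℓ ∈ Finset.range m,
        ‖ω - (ξ₀ + R • η)‖ ^ (2 * ℓ) * ‖ξ₀ + R • η‖ ^ (2 * (m - 1 - ℓ)))
        = myAuxF m (ω - (ξ₀ + R • η), ξ₀ + R • η) := rfl
    rw [hft, hsum, h3, ← pow_mul, hadef, inv_mul_cancel_left₀ (by positivity)]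
  have hpos : ∀ η : E, 0 < ft η := by
    intro η
    rw [hval η]
    exact mul_pos hapos (myAuxF_pos m hm ω (ξ₀ + R • η) hω)
  have ht₀mem : ft 0 ∈ Set.Ioi (0:ℝ) := hpos 0
  have ht₀low : c₁⁻¹ ≤ ft 0 := by
    have h := myAuxF_lower m hm ω ξ₀ hω
    have hval0 := hval 0
    simp only [smul_zero, add_zero] at hval0
    have hsum : (∑ ℓ ∈ Finset.range m,
        ‖ω - ξ₀‖ ^ (2 * ℓ) * ‖ξ₀‖ ^ (2 * (m - 1 - ℓ))) = myAuxF m (ω - ξ₀, ξ₀) := rfl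
    rw [hval0, hsum]
    have hRp : (0:ℝ) < R ^ (2 * (m - 1)) := by positivity
    rw [hadef]
    have hF : R ^ (2 * (m - 1)) * c₁⁻¹ ≤ myAuxF m (ω - ξ₀, ξ₀) := by
      calc R ^ (2 * (m - 1)) * c₁⁻¹
          = R ^ (2 * (m - 1)) / c₁ := by ring
        _ ≤ (8 ^ (m - 1) * myAuxF m (ω - ξ₀, ξ₀)) / c₁ := by
            apply div_le_div_of_nonneg_right ?_ hc₁.le
            · calc R ^ (2 * (m - 1)) = Real.sqrt (1 + ‖ξ₀‖ ^ 2) ^ (2 * (m - 1)) := by rw [hRdef]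
                _ ≤ 8 ^ (m - 1) * myAuxF m (ω - ξ₀, ξ₀) := myAuxF_lower m hm ω ξ₀ hω
        _ = myAuxF m (ω - ξ₀, ξ₀) := by
            rw [hc₁def]; field_simp
    calc c₁⁻¹ = (R ^ (2 * (m - 1)))⁻¹ * (R ^ (2 * (m - 1)) * c₁⁻¹) := by
          rw [← mul_assoc, inv_mul_cancel₀ hRp.ne', one_mul]
      _ ≤ (R ^ (2 * (m - 1)))⁻¹ * myAuxF m (ω - ξ₀, ξ₀) :=
          mul_le_mul_of_nonneg_left hF (by positivity)
  have hwz : (w, z) ∈ Metric.closedBall (0 : E × E) 3 := by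
    rw [Metric.mem_closedBall, dist_zero_right]
    have hw : ‖w‖ ≤ 2 := by
      rw [hwdef, norm_smul, Real.norm_eq_abs, abs_of_pos (inv_pos.2 hRpos)]
      have h1 : ‖ω - ξ₀‖ ≤ 2 * R := by
        have := norm_sub_le ω ξ₀
        rw [hω] at this; linarith
      calc R⁻¹ * ‖ω - ξ₀‖ ≤ R⁻¹ * (2 * R) :=
            mul_le_mul_of_nonneg_left h1 (by positivity)
        _ = 2 := by field_simp
    have hz : ‖z‖ ≤ 1 := by
      rw [hzdef, norm_smul, Real.norm_eq_abs, abs_of_pos (inv_pos.2 hRpos)]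
      calc R⁻¹ * ‖ξ₀‖ ≤ R⁻¹ * R := mul_le_mul_of_nonneg_left hξR (by positivity)
        _ = 1 := by field_simp
    have : ‖(w, z)‖ = max ‖w‖ ‖z‖ := rfl
    rw [this]
    exact max_le (by linarith) (by linarith)
  have hder : ∀ i ≤ N, ‖iteratedFDeriv ℝ i ft 0‖ ≤ D₀ := by
    intro i hi
    have hcomp := ContinuousLinearMap.iteratedFDeriv_comp_right (f := G) L hGsmooth 0
      (i := i) (mod_cast le_top)
    have hfteq : ft = G ∘ L := rfl
    rw [hfteq, hcomp]
    refine le_trans (ContinuousMultilinearMap.norm_compContinuousLinearMap_le _ _) ?_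
    have htrans := myIteratedFDeriv_comp_const_add (myAuxF (E := E) m) (contDiff_myAuxF m)
      (w, z) i 0
    have h1 : ‖iteratedFDeriv ℝ i G (L 0)‖ ≤ D₀ := by
      rw [map_zero]
      have hGeq : iteratedFDeriv ℝ i G 0 = iteratedFDeriv ℝ i (myAuxF (E := E) m) (w, z) := by
        rw [hGdef]
        simpa using htrans
      rw [hGeq]
      exact hDF i hi _ hwz
    have h2 : (∏ _j : Fin i, ‖L‖) ≤ 1 := by
      rw [Finset.prod_const]
      exact pow_le_one₀ (norm_nonneg L) hLnorm
    calc ‖iteratedFDeriv ℝ i G (L 0)‖ * ∏ _j : Fin i, ‖L‖ ≤ D₀ * 1 :=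
          mul_le_mul h1 h2 (Finset.prod_nonneg fun _ _ => norm_nonneg L) hD₀0
      _ = D₀ := mul_one _
  set g : ℝ → ℝ := fun t => a * t⁻¹ with hgdef
  have hgsmooth : ContDiffOn ℝ (⊤ : ℕ∞) g (Set.Ioi 0) :=
    contDiffOn_const.mul (contDiffOn_id.inv fun x hx => ne_of_gt hx)
  have hgbound : ∀ i, i ≤ N → ‖iteratedFDerivWithin ℝ i g (Set.Ioi 0) (ft 0)‖ ≤ a * C₀ := by
    intro i hi
    rw [iteratedFDerivWithin_of_isOpen i isOpen_Ioi ht₀mem]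
    rw [norm_iteratedFDeriv_eq_norm_iteratedDeriv, iteratedDeriv_eq_iterate]
    have hiter : deriv^[i] g = fun t => a * deriv^[i] (Inv.inv : ℝ → ℝ) t :=
      myIterateDerivConstMul a _ i
    rw [hiter]
    beta_reduce
    rw [iter_deriv_inv i (ft 0)]
    rw [Real.norm_eq_abs, abs_mul, abs_mul, abs_of_pos hapos]
    have h2 : |(-1 : ℝ) ^ i * ((Nat.factorial i : ℕ) : ℝ)| ≤ ((Nat.factorial N : ℕ) : ℝ) := by
      rw [abs_mul, abs_pow, abs_neg, abs_one, one_pow, one_mul, Nat.abs_cast]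
      exact_mod_cast Nat.factorial_le hi
    have h3 : |(ft 0) ^ (-1 - (i : ℤ))| ≤ (max c₁ 1) ^ (N + 1) := by
      have he : (-1 - (i : ℤ)) = -(((i + 1 : ℕ) : ℤ)) := by push_cast; ring
      rw [he, zpow_neg, zpow_natCast, abs_inv, abs_of_pos (pow_pos (hpos 0) _)]
      have hstep : ((c₁⁻¹) ^ (i + 1)) ≤ (ft 0) ^ (i + 1) :=
        pow_le_pow_left₀ (by positivity) ht₀low _
      have hinv : ((ft 0) ^ (i + 1))⁻¹ ≤ ((c₁⁻¹) ^ (i + 1))⁻¹ := by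
        apply inv_anti₀ (by positivity) hstep
      calc ((ft 0) ^ (i + 1))⁻¹ ≤ ((c₁⁻¹) ^ (i + 1))⁻¹ := hinv
        _ = c₁ ^ (i + 1) := by rw [← inv_pow, inv_inv]
        _ ≤ (max c₁ 1) ^ (i + 1) := pow_le_pow_left₀ hc₁.le (le_max_left _ _) _
        _ ≤ (max c₁ 1) ^ (N + 1) := pow_le_pow_right₀ (le_max_right _ _) (by omega)
    calc a * (|(-1 : ℝ) ^ i * ((Nat.factorial i : ℕ) : ℝ)| * |(ft 0) ^ (-1 - (i : ℤ))|)
        ≤ a * (((Nat.factorial N : ℕ) : ℝ) * (max c₁ 1) ^ (N + 1)) := by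
          apply mul_le_mul_of_nonneg_left ?_ hapos.le
          exact mul_le_mul h2 h3 (abs_nonneg _) (by positivity)
      _ = a * C₀ := by rw [hC₀def]
  have hDbound : ∀ i, 1 ≤ i → i ≤ N →
      ‖iteratedFDerivWithin ℝ i ft Set.univ 0‖ ≤ D ^ i := by
    intro i h1i hiN
    rw [iteratedFDerivWithin_univ]
    refine le_trans (hder i hiN) ?_
    calc D₀ ≤ D := le_max_left _ _
      _ ≤ D ^ i := le_self_pow₀ hD1 (by omega)
  have hcomp := norm_iteratedFDerivWithin_comp_le (𝕜 := ℝ) (g := g) (f := ft) (n := N)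
    (s := Set.univ) (t := Set.Ioi 0) hgsmooth hftsmooth.contDiffOn
    (by exact_mod_cast le_top) isOpen_Ioi.uniqueDiffOn uniqueDiffOn_univ
    (fun η _ => hpos η) (Set.mem_univ 0) hgbound hDbound
  rw [iteratedFDerivWithin_univ] at hcomp
  -- identify g ∘ ft
  have hgft : g ∘ ft = fun η : E => (∑ ℓ ∈ Finset.range m,
      ‖ω - (ξ₀ + R • η)‖ ^ (2 * ℓ) * ‖ξ₀ + R • η‖ ^ (2 * (m - 1 - ℓ)))⁻¹ := by
    funext η
    show a * (ft η)⁻¹ = _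
    rw [hval η, mul_inv, ← mul_assoc, mul_inv_cancel₀ hapos.ne', one_mul]
  have hHsmooth : ContDiff ℝ (⊤ : ℕ∞) (g ∘ ft) := by
    rw [hgft]
    exact (contDiff_myP m hm ω hω).comp
      (contDiff_const.add (contDiff_id.const_smul R))
  set L₂ : E →L[ℝ] E := R⁻¹ • ContinuousLinearMap.id ℝ E with hL₂def
  have hL₂app : ∀ ξ : E, L₂ ξ = R⁻¹ • ξ := fun ξ => rfl
  have hL₂norm : ‖L₂‖ ≤ R⁻¹ := by
    refine ContinuousLinearMap.opNorm_le_bound _ (by positivity) fun η => ?_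
    rw [hL₂app, norm_smul, Real.norm_eq_abs, abs_of_pos (inv_pos.2 hRpos)]
  have hpfun_eq : (fun ξ : E => (∑ ℓ ∈ Finset.range m,
      ‖ω - ξ‖ ^ (2 * ℓ) * ‖ξ‖ ^ (2 * (m - 1 - ℓ)))⁻¹)
      = (fun y => (g ∘ ft) (-(R⁻¹ • ξ₀) + y)) ∘ L₂ := by
    funext ξ
    show _ = (g ∘ ft) (-(R⁻¹ • ξ₀) + L₂ ξ)
    have harg : ξ₀ + R • (-(R⁻¹ • ξ₀) + R⁻¹ • ξ) = ξ := by
      rw [smul_add, smul_neg, smul_inv_smul₀ hRne, smul_inv_smul₀ hRne]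
      abel
    rw [hL₂app, hgft]
    simp only [harg]
  have hHtr : ContDiff ℝ (⊤ : ℕ∞) (fun y => (g ∘ ft) (-(R⁻¹ • ξ₀) + y)) :=
    hHsmooth.comp (contDiff_const.add contDiff_id)
  have hfinal1 : iteratedFDeriv ℝ N (fun ξ : E => (∑ ℓ ∈ Finset.range m,
      ‖ω - ξ‖ ^ (2 * ℓ) * ‖ξ‖ ^ (2 * (m - 1 - ℓ)))⁻¹) ξ₀
      = (iteratedFDeriv ℝ N (fun y => (g ∘ ft) (-(R⁻¹ • ξ₀) + y))
          (L₂ ξ₀)).compContinuousLinearMap (fun _ => L₂) := by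
    conv_lhs => rw [hpfun_eq]
    exact ContinuousLinearMap.iteratedFDeriv_comp_right L₂ hHtr ξ₀
      (i := N) (mod_cast le_top)
  have hfinal2 : iteratedFDeriv ℝ N (fun y => (g ∘ ft) (-(R⁻¹ • ξ₀) + y)) (L₂ ξ₀)
      = iteratedFDeriv ℝ N (g ∘ ft) 0 := by
    rw [myIteratedFDeriv_comp_const_add (g ∘ ft) hHsmooth _ N (L₂ ξ₀)]
    congr 1
    rw [hL₂app]
    abel
  rw [hfinal1, hfinal2]
  refine le_trans (ContinuousMultilinearMap.norm_compContinuousLinearMap_le _ _) ?_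
  have hLL : (∏ _j : Fin N, ‖L₂‖) ≤ (R⁻¹) ^ N := by
    rw [Finset.prod_const]
    simp only [Finset.card_univ, Fintype.card_fin]
    exact pow_le_pow_left₀ (norm_nonneg _) hL₂norm _
  have hrpow : R ^ (-(2 * (m : ℝ) - 2 + N)) = a * (R⁻¹) ^ N := by
    rw [hadef, inv_pow, ← Real.rpow_natCast R (2 * (m - 1)), ← Real.rpow_natCast R N,
      ← Real.rpow_neg hRpos.le, ← Real.rpow_neg hRpos.le, ← Real.rpow_add hRpos]
    congr 1
    have hc : ((2 * (m - 1) : ℕ) : ℝ) = 2 * (m : ℝ) - 2 := by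
      rw [Nat.cast_mul, Nat.cast_sub hm]
      push_cast; ring
    rw [hc]; ring
  calc ‖iteratedFDeriv ℝ N (g ∘ ft) 0‖ * ∏ _j : Fin N, ‖L₂‖
      ≤ (((Nat.factorial N : ℕ) : ℝ) * (a * C₀) * D ^ N) * (R⁻¹) ^ N := by
        apply mul_le_mul hcomp hLL (Finset.prod_nonneg fun _ _ => norm_nonneg _)
        positivity
    _ = (((Nat.factorial N : ℕ) : ℝ) * C₀ * D ^ N) * (a * (R⁻¹) ^ N) := by ring
    _ = (((Nat.factorial N : ℕ) : ℝ) * C₀ * D ^ N) * R ^ (-(2 * (m : ℝ) - 2 + N)) := by rw [hrpow]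

theorem stmt_9 (n m : ℕ) (hn : 1 ≤ n) (hm : 1 ≤ m) :
    (∀ ω : EuclideanSpace ℝ (Fin n), ‖ω‖ = 1 →
      ContDiff ℝ (⊤ : ℕ∞) (fun ξ : EuclideanSpace ℝ (Fin n) =>
        (∑ ℓ ∈ Finset.range m, ‖ω - ξ‖ ^ (2 * ℓ) * ‖ξ‖ ^ (2 * (m - 1 - ℓ)))⁻¹)) ∧
    ∀ N : ℕ, ∃ C > 0, ∀ ω : EuclideanSpace ℝ (Fin n), ‖ω‖ = 1 →
      ∀ ξ : EuclideanSpace ℝ (Fin n),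
        ‖iteratedFDeriv ℝ N (fun ξ : EuclideanSpace ℝ (Fin n) =>
            (∑ ℓ ∈ Finset.range m, ‖ω - ξ‖ ^ (2 * ℓ) * ‖ξ‖ ^ (2 * (m - 1 - ℓ)))⁻¹) ξ‖ ≤
          C * Real.sqrt (1 + ‖ξ‖ ^ 2) ^ (-(2 * (m : ℝ) - 2 + N)) := by
  exact ⟨fun ω hω => contDiff_myP m hm ω hω, fun N => myMainBound m hm N⟩
end

section
/- Let n ≥ 1 and m ≥ 1 be integers. For every integer N ≥ 0 there exists C > 0 (depending only on n, m, N) such that for every ε > 0, every unit vector ω ∈ ℝⁿ, and every ξ ∈ ℝⁿ, the function ξ ↦ p_ω(ξ) e^{−ε p_ω(ξ)} is smooth and its N-th total derivative satisfies ‖D^N [p_ω e^{−ε p_ω}](ξ)‖ ≤ C ⟨ξ⟩^{−(2m−2+N)}, with C independent of ε. -/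
open Real Finset

open Nat

set_option maxHeartbeats 1000000

local notation "⟪" x ", " y "⟫" => @inner ℝ _ _ x y

section Aux
variable {E : Type*} [NormedAddCommGroup E] [InnerProductSpace ℝ E]

-- iterated derivatives of an affine map vanish from order 2
lemma affine_fderiv (c : E) (L : E →L[ℝ] E) (ξ : E) :
    fderiv ℝ (fun ξ : E => c + L ξ) ξ = L := by
  have : HasFDerivAt (fun ξ : E => c + L ξ) L ξ :=
    by simpa using L.hasFDerivAt
  simpa using this.fderiv

lemma affine_iteratedFDeriv_one (c : E) (L : E →L[ℝ] E) (ξ : E) :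
    ‖iteratedFDeriv ℝ 1 (fun ξ : E => c + L ξ) ξ‖ ≤ ‖L‖ := by
  have h0 : ‖iteratedFDeriv ℝ 0 (fderiv ℝ (fun ξ : E => c + L ξ)) ξ‖
      = ‖iteratedFDeriv ℝ 1 (fun ξ : E => c + L ξ) ξ‖ := norm_iteratedFDeriv_fderiv
  rw [← h0, norm_iteratedFDeriv_zero, affine_fderiv]

lemma affine_iteratedFDeriv_ge_two (c : E) (L : E →L[ℝ] E) (i : ℕ) (hi : 2 ≤ i) (ξ : E) :
    ‖iteratedFDeriv ℝ i (fun ξ : E => c + L ξ) ξ‖ = 0 := by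
  obtain ⟨k, rfl⟩ : ∃ k, i = k + 2 := ⟨i - 2, by omega⟩
  have h0 : ‖iteratedFDeriv ℝ (k+1) (fderiv ℝ (fun ξ : E => c + L ξ)) ξ‖
      = ‖iteratedFDeriv ℝ (k+2) (fun ξ : E => c + L ξ) ξ‖ := norm_iteratedFDeriv_fderiv
  rw [← h0]
  have : fderiv ℝ (fun ξ : E => c + L ξ) = fun _ => L := funext fun ξ => affine_fderiv c L ξ
  rw [this, iteratedFDeriv_const_of_ne (Nat.succ_ne_zero k)]
  simp

-- main bound on iterated derivatives of ξ ↦ ⟪f ξ, f ξ⟫ for affine f with ‖c‖ ≤ 1, ‖L‖ ≤ 1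
lemma inner_affine_bound (c : E) (L : E →L[ℝ] E) (hc : ‖c‖ ≤ 1) (hL : ‖L‖ ≤ 1)
    (j : ℕ) (ξ : E) :
    ‖iteratedFDeriv ℝ j (fun ξ : E => ⟪c + L ξ, c + L ξ⟫) ξ‖ ≤
      2 * (1 + ‖ξ‖) ^ ((2 : ℝ) - j) := by
  have hr0 : (0:ℝ) < 1 + ‖ξ‖ := by positivity
  have hr1 : (1:ℝ) ≤ 1 + ‖ξ‖ := by simp [norm_nonneg]
  set f : E → E := fun ξ => c + L ξ with hf
  have hfc : ContDiff ℝ (⊤ : ℕ∞) f := (contDiff_const).add (L.contDiff)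
  have h0 : ∀ x : E, ‖iteratedFDeriv ℝ 0 f x‖ ≤ 1 + ‖x‖ := by
    intro x
    rw [norm_iteratedFDeriv_zero]
    calc ‖f x‖ ≤ ‖c‖ + ‖L x‖ := norm_add_le _ _
      _ ≤ 1 + ‖x‖ := by
          have := L.le_opNorm x
          have h2 : ‖L x‖ ≤ ‖x‖ := le_trans this (by nlinarith [norm_nonneg x])
          linarith
  have h1 : ∀ x : E, ‖iteratedFDeriv ℝ 1 f x‖ ≤ 1 :=
    fun x => le_trans (affine_iteratedFDeriv_one c L x) hL
  have h2 : ∀ i, 2 ≤ i → ∀ x : E, ‖iteratedFDeriv ℝ i f x‖ = 0 :=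
    fun i hi x => affine_iteratedFDeriv_ge_two c L i hi x
  have key := (innerSL ℝ (E := E)).norm_iteratedFDeriv_le_of_bilinear_of_le_one
    (N := (j : WithTop ℕ∞)) (hfc.of_le (mod_cast le_top)) (hfc.of_le (mod_cast le_top))
    ξ (n := j) le_rfl (norm_innerSL_le ℝ)
  have hkey : ‖iteratedFDeriv ℝ j (fun y => ⟪f y, f y⟫) ξ‖ ≤
      ∑ i ∈ Finset.range (j + 1),
        (j.choose i : ℝ) * ‖iteratedFDeriv ℝ i f ξ‖ * ‖iteratedFDeriv ℝ (j - i) f ξ‖ := key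
  refine le_trans hkey ?_
  have hf0 : ‖f ξ‖ ≤ 1 + ‖ξ‖ := by
    calc ‖f ξ‖ ≤ ‖c‖ + ‖L ξ‖ := norm_add_le _ _
      _ ≤ 1 + ‖ξ‖ := by
          have h3 := L.le_opNorm ξ
          have h2 : ‖L ξ‖ ≤ ‖ξ‖ := le_trans h3 (by nlinarith [norm_nonneg ξ])
          linarith
  match j with
  | 0 =>
      have e2 : (1 + ‖ξ‖) ^ ((2:ℝ) - ((0:ℕ):ℝ)) = (1 + ‖ξ‖) * (1 + ‖ξ‖) := by
        rw [show (2:ℝ) - ((0:ℕ):ℝ) = ((2:ℕ):ℝ) by norm_num, Real.rpow_natCast]; ring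
      rw [e2, Finset.sum_range_one]
      norm_num
      nlinarith [norm_nonneg (f ξ),
        (norm_iteratedFDeriv_zero : ‖iteratedFDeriv ℝ (0-0) f ξ‖ = ‖f ξ‖), hf0]
  | 1 =>
      have e1 : (1 + ‖ξ‖) ^ ((2:ℝ) - ((1:ℕ):ℝ)) = 1 + ‖ξ‖ := by
        norm_num
      rw [e1, Finset.sum_range_succ, Finset.sum_range_one]
      norm_num
      nlinarith [(h1 ξ : ‖iteratedFDeriv ℝ (1-0) f ξ‖ ≤ 1),
        (h1 ξ : ‖iteratedFDeriv ℝ 1 f ξ‖ ≤ 1),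
        (norm_iteratedFDeriv_zero : ‖iteratedFDeriv ℝ (1-1) f ξ‖ = ‖f ξ‖),
        hf0, norm_nonneg (f ξ), norm_nonneg (iteratedFDeriv ℝ 1 f ξ),
        norm_nonneg (iteratedFDeriv ℝ (1-0) f ξ),
        (by simpa using h1 ξ : ‖fderiv ℝ f ξ‖ ≤ 1), norm_nonneg (fderiv ℝ f ξ)]
  | 2 =>
      have e0 : (1 + ‖ξ‖) ^ ((2:ℝ) - ((2:ℕ):ℝ)) = 1 := by
        norm_num
      rw [e0, Finset.sum_range_succ, Finset.sum_range_succ, Finset.sum_range_one]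
      rw [h2 2 le_rfl ξ]
      norm_num
      nlinarith [(h1 ξ : ‖iteratedFDeriv ℝ (2-1) f ξ‖ ≤ 1),
        (h2 2 le_rfl ξ : ‖iteratedFDeriv ℝ (2-0) f ξ‖ = 0),
        (norm_iteratedFDeriv_zero : ‖iteratedFDeriv ℝ (2-2) f ξ‖ = ‖f ξ‖),
        hf0, norm_nonneg (f ξ), norm_nonneg (iteratedFDeriv ℝ 1 f ξ),
        norm_nonneg (iteratedFDeriv ℝ (2-1) f ξ),
        norm_nonneg (iteratedFDeriv ℝ (2-0) f ξ),
        (by simpa using h1 ξ : ‖fderiv ℝ f ξ‖ ≤ 1), norm_nonneg (fderiv ℝ f ξ)]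
  | (k+3) =>
      have hz : ∀ i ∈ Finset.range (k+3+1),
          (((k+3).choose i : ℝ)) * ‖iteratedFDeriv ℝ i f ξ‖ *
            ‖iteratedFDeriv ℝ (k+3 - i) f ξ‖ = 0 := by
        intro i hi
        rcases le_or_gt 2 i with h | h
        · rw [h2 i h ξ]; ring
        · have h4 : 2 ≤ k + 3 - i := by omega
          rw [h2 _ h4 ξ]; ring
      rw [Finset.sum_congr rfl hz]
      simp only [Finset.sum_const, smul_zero]
      positivity

/-- Family of functions, indexed by ω, polynomially bounded of degree d with all
derivatives, uniformly over unit vectors ω. -/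
def PF (d : ℝ) (g : E → E → ℝ) : Prop :=
  (∀ ω : E, ContDiff ℝ (⊤ : ℕ∞) (g ω)) ∧
  ∀ i : ℕ, ∃ K : ℝ, 0 < K ∧ ∀ ω : E, ‖ω‖ = 1 → ∀ j, j ≤ i → ∀ ξ : E,
    ‖iteratedFDeriv ℝ j (g ω) ξ‖ ≤ K * (1 + ‖ξ‖) ^ (d - (j : ℝ))

lemma PF_mul {d e : ℝ} {f g : E → E → ℝ} (hf : PF d f) (hg : PF e g) :
    PF (d + e) (fun ω ξ => f ω ξ * g ω ξ) := by
  obtain ⟨hfc, hfb⟩ := hf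
  obtain ⟨hgc, hgb⟩ := hg
  refine ⟨fun ω => (hfc ω).mul (hgc ω), fun i => ?_⟩
  obtain ⟨K₁, hK₁, hb₁⟩ := hfb i
  obtain ⟨K₂, hK₂, hb₂⟩ := hgb i
  refine ⟨2 ^ i * K₁ * K₂, by positivity, fun ω hω j hj ξ => ?_⟩
  have hr0 : (0:ℝ) < 1 + ‖ξ‖ := by positivity
  have key := norm_iteratedFDeriv_mul_le (𝕜 := ℝ) (N := (j : WithTop ℕ∞))
    ((hfc ω).of_le (mod_cast le_top)) ((hgc ω).of_le (mod_cast le_top)) ξ le_rfl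
  refine le_trans key ?_
  have hterm : ∀ k ∈ Finset.range (j+1),
      (j.choose k : ℝ) * ‖iteratedFDeriv ℝ k (f ω) ξ‖ * ‖iteratedFDeriv ℝ (j-k) (g ω) ξ‖ ≤
      (j.choose k : ℝ) * (K₁ * K₂ * (1 + ‖ξ‖) ^ (d + e - (j:ℝ))) := by
    intro k hk
    have hkj : k ≤ j := Nat.lt_succ_iff.mp (Finset.mem_range.mp hk)
    have h₁ := hb₁ ω hω k (le_trans hkj hj) ξ
    have h₂ := hb₂ ω hω (j - k) (le_trans (Nat.sub_le _ _) hj) ξ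
    have hmul : ‖iteratedFDeriv ℝ k (f ω) ξ‖ * ‖iteratedFDeriv ℝ (j-k) (g ω) ξ‖ ≤
        (K₁ * (1 + ‖ξ‖) ^ (d - (k:ℝ))) * (K₂ * (1 + ‖ξ‖) ^ (e - ((j-k : ℕ):ℝ))) :=
      mul_le_mul h₁ h₂ (norm_nonneg _) (by positivity)
    have hexp : (K₁ * (1 + ‖ξ‖) ^ (d - (k:ℝ))) * (K₂ * (1 + ‖ξ‖) ^ (e - ((j-k : ℕ):ℝ)))
        = K₁ * K₂ * (1 + ‖ξ‖) ^ (d + e - (j:ℝ)) := by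
      rw [Nat.cast_sub hkj]
      rw [show d + e - (j:ℝ) = (d - (k:ℝ)) + (e - ((j:ℝ) - (k:ℝ))) by ring]
      rw [Real.rpow_add hr0]
      ring
    rw [hexp] at hmul
    calc (j.choose k : ℝ) * ‖iteratedFDeriv ℝ k (f ω) ξ‖ * ‖iteratedFDeriv ℝ (j-k) (g ω) ξ‖
        = (j.choose k : ℝ) * (‖iteratedFDeriv ℝ k (f ω) ξ‖ * ‖iteratedFDeriv ℝ (j-k) (g ω) ξ‖) := by ring
      _ ≤ (j.choose k : ℝ) * (K₁ * K₂ * (1 + ‖ξ‖) ^ (d + e - (j:ℝ))) := by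
          apply mul_le_mul_of_nonneg_left hmul (by positivity)
  refine le_trans (Finset.sum_le_sum hterm) ?_
  rw [← Finset.sum_mul]
  have hchoose : (∑ k ∈ Finset.range (j+1), (j.choose k : ℝ)) = 2 ^ j := by
    rw [← Nat.cast_sum]
    rw [Nat.sum_range_choose]
    push_cast; ring
  rw [hchoose]
  have h2j : (2:ℝ) ^ j ≤ 2 ^ i := by
    apply pow_le_pow_right₀ (by norm_num) hj
  have hpos : (0:ℝ) < K₁ * K₂ * (1 + ‖ξ‖) ^ (d + e - (j:ℝ)) := by positivity
  calc (2:ℝ)^j * (K₁ * K₂ * (1 + ‖ξ‖) ^ (d + e - (j:ℝ)))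
      ≤ (2:ℝ)^i * (K₁ * K₂ * (1 + ‖ξ‖) ^ (d + e - (j:ℝ))) :=
        mul_le_mul_of_nonneg_right h2j (le_of_lt hpos)
    _ = 2 ^ i * K₁ * K₂ * (1 + ‖ξ‖) ^ (d + e - (j:ℝ)) := by ring

lemma PF_one : PF (0 : ℝ) (fun _ _ : E => (1:ℝ)) := by
  refine ⟨fun ω => contDiff_const, fun i => ⟨1, one_pos, fun ω hω j hj ξ => ?_⟩⟩
  have hr1 : (1:ℝ) ≤ 1 + ‖ξ‖ := by simp [norm_nonneg]
  match j with
  | 0 =>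
    rw [norm_iteratedFDeriv_zero]
    simp
  | (k+1) =>
    rw [iteratedFDeriv_const_of_ne (Nat.succ_ne_zero k)]
    simp only [Pi.zero_apply, norm_zero]
    positivity

lemma PF_pow {f : E → E → ℝ} (hf : PF 2 f) (k : ℕ) :
    PF (2 * k : ℝ) (fun ω ξ => f ω ξ ^ k) := by
  induction k with
  | zero => simpa using PF_one
  | succ k ih =>
      have := PF_mul ih hf
      have he : (2 * (k:ℝ)) + 2 = 2 * ((k:ℕ)+1 : ℝ) := by push_cast; ring
      simp only [pow_succ]
      rw [show (2 * ((k+1 : ℕ)):ℝ) = 2*(k:ℝ) + 2 by push_cast; ring]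
      exact this

-- now new material
lemma PF_normsq : PF 2 (fun _ ξ : E => ‖ξ‖^2) := by
  constructor
  · intro ω; exact contDiff_norm_sq ℝ
  · intro i
    refine ⟨2, two_pos, fun ω hω j hj ξ => ?_⟩
    show ‖iteratedFDeriv ℝ j (fun ξ : E => ‖ξ‖ ^ 2) ξ‖ ≤ 2 * (1 + ‖ξ‖) ^ ((2:ℝ) - (j:ℝ))
    have heq : (fun ξ : E => ‖ξ‖^2) =
        fun ξ : E => ⟪(0:E) + (ContinuousLinearMap.id ℝ E) ξ, (0:E) + (ContinuousLinearMap.id ℝ E) ξ⟫ := by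
      funext ξ; simp [real_inner_self_eq_norm_sq]
    rw [heq]
    exact inner_affine_bound 0 (ContinuousLinearMap.id ℝ E) (by simp)
      ContinuousLinearMap.norm_id_le j ξ

lemma PF_asq : PF 2 (fun ω ξ : E => ‖ω - ξ‖^2) := by
  constructor
  · intro ω
    exact (contDiff_norm_sq ℝ (E := E)).comp (contDiff_const.sub contDiff_id)
  · intro i
    refine ⟨2, two_pos, fun ω hω j hj ξ => ?_⟩
    show ‖iteratedFDeriv ℝ j (fun ξ : E => ‖ω - ξ‖ ^ 2) ξ‖ ≤ 2 * (1 + ‖ξ‖) ^ ((2:ℝ) - (j:ℝ))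
    have heq : (fun ξ : E => ‖ω - ξ‖^2) =
        fun ξ : E => ⟪ω + (-(ContinuousLinearMap.id ℝ E)) ξ, ω + (-(ContinuousLinearMap.id ℝ E)) ξ⟫ := by
      funext ξ
      simp [real_inner_self_eq_norm_sq, sub_eq_add_neg]
    rw [heq]
    refine inner_affine_bound ω (-(ContinuousLinearMap.id ℝ E)) (le_of_eq hω) ?_ j ξ
    rw [norm_neg]
    exact ContinuousLinearMap.norm_id_le

lemma PF_q (m : ℕ) (hm : 1 ≤ m) :
    PF (2*(m:ℝ) - 2)
      (fun ω ξ : E => ∑ ℓ ∈ Finset.range m, (‖ω - ξ‖^2)^ℓ * (‖ξ‖^2)^(m-1-ℓ)) := by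
  have hterm : ∀ ℓ, ℓ < m → PF (2*(m:ℝ) - 2)
      (fun ω ξ : E => (‖ω - ξ‖^2)^ℓ * (‖ξ‖^2)^(m-1-ℓ)) := by
    intro ℓ hℓ
    have h := PF_mul (E := E) (PF_pow (E := E) PF_asq ℓ) (PF_pow (E := E) PF_normsq (m-1-ℓ))
    have he : (2*(ℓ:ℝ)) + 2*((m-1-ℓ : ℕ):ℝ) = 2*(m:ℝ) - 2 := by
      rw [Nat.cast_sub (by omega : ℓ ≤ m - 1), Nat.cast_sub (by omega : 1 ≤ m)]
      push_cast; ring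
    rwa [he] at h
  constructor
  · intro ω
    exact ContDiff.sum fun ℓ _ => ((hterm ℓ (by simp_all [Finset.mem_range])).1 ω)
  · intro i
    have H : ∀ ℓ : ℕ, ∃ K : ℝ, 0 < K ∧ (ℓ < m → ∀ ω : E, ‖ω‖ = 1 → ∀ j, j ≤ i → ∀ ξ : E,
        ‖iteratedFDeriv ℝ j (fun ξ : E => (‖ω - ξ‖^2)^ℓ * (‖ξ‖^2)^(m-1-ℓ)) ξ‖ ≤
          K * (1 + ‖ξ‖) ^ ((2*(m:ℝ) - 2) - (j : ℝ))) := by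
      intro ℓ
      by_cases hℓ : ℓ < m
      · obtain ⟨K, hK, hb⟩ := (hterm ℓ hℓ).2 i
        exact ⟨K, hK, fun _ => hb⟩
      · exact ⟨1, one_pos, fun h => absurd h hℓ⟩
    choose Kf hK0 hKb using H
    refine ⟨∑ ℓ ∈ Finset.range m, Kf ℓ, ?_, fun ω hω j hj ξ => ?_⟩
    · apply Finset.sum_pos (fun ℓ _ => hK0 ℓ)
      exact Finset.nonempty_range_iff.mpr (by omega)
    · have hsplit : iteratedFDeriv ℝ j
          (fun ξ : E => ∑ ℓ ∈ Finset.range m, (‖ω - ξ‖^2)^ℓ * (‖ξ‖^2)^(m-1-ℓ)) ξ =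
          ∑ ℓ ∈ Finset.range m, iteratedFDeriv ℝ j
            (fun ξ : E => (‖ω - ξ‖^2)^ℓ * (‖ξ‖^2)^(m-1-ℓ)) ξ := by
        have := iteratedFDeriv_sum (𝕜 := ℝ) (i := j)
          (f := fun ℓ (ξ : E) => (‖ω - ξ‖^2)^ℓ * (‖ξ‖^2)^(m-1-ℓ)) (u := Finset.range m)
          (fun ℓ hℓ => ((hterm ℓ (Finset.mem_range.mp hℓ)).1 ω).of_le (mod_cast le_top))
        have h2 := congrFun this ξ
        simpa [Finset.sum_apply] using h2
      rw [hsplit]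
      calc ‖∑ ℓ ∈ Finset.range m, iteratedFDeriv ℝ j
              (fun ξ : E => (‖ω - ξ‖^2)^ℓ * (‖ξ‖^2)^(m-1-ℓ)) ξ‖
          ≤ ∑ ℓ ∈ Finset.range m, ‖iteratedFDeriv ℝ j
              (fun ξ : E => (‖ω - ξ‖^2)^ℓ * (‖ξ‖^2)^(m-1-ℓ)) ξ‖ := norm_sum_le _ _
        _ ≤ ∑ ℓ ∈ Finset.range m, Kf ℓ * (1 + ‖ξ‖) ^ ((2*(m:ℝ) - 2) - (j : ℝ)) := by
            apply Finset.sum_le_sum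
            intro ℓ hℓ
            exact hKb ℓ (Finset.mem_range.mp hℓ) ω hω j hj ξ
        _ = (∑ ℓ ∈ Finset.range m, Kf ℓ) * (1 + ‖ξ‖) ^ ((2*(m:ℝ) - 2) - (j : ℝ)) := by
            rw [Finset.sum_mul]

lemma q_pos_lb (m : ℕ) (hm : 1 ≤ m) (ω ξ : E) (hω : ‖ω‖ = 1) :
    ((1 + ‖ξ‖)/4)^(2*(m-1)) ≤ ∑ ℓ ∈ Finset.range m, (‖ω - ξ‖^2)^ℓ * (‖ξ‖^2)^(m-1-ℓ) := by
  have hnn : ∀ ℓ ∈ Finset.range m, (0:ℝ) ≤ (‖ω - ξ‖^2)^ℓ * (‖ξ‖^2)^(m-1-ℓ) := by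
    intro ℓ _; positivity
  have hterm0 : ‖ξ‖^(2*(m-1)) ≤ ∑ ℓ ∈ Finset.range m, (‖ω - ξ‖^2)^ℓ * (‖ξ‖^2)^(m-1-ℓ) := by
    have h := Finset.single_le_sum hnn (Finset.mem_range.mpr (by omega : 0 < m))
    simpa [pow_mul] using h
  have hterm1 : ‖ω - ξ‖^(2*(m-1)) ≤ ∑ ℓ ∈ Finset.range m, (‖ω - ξ‖^2)^ℓ * (‖ξ‖^2)^(m-1-ℓ) := by
    have h := Finset.single_le_sum hnn (Finset.mem_range.mpr (by omega : m-1 < m))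
    simpa [pow_mul, Nat.sub_self] using h
  rcases le_or_gt (1/2 : ℝ) ‖ξ‖ with h | h
  · refine le_trans (pow_le_pow_left₀ (by positivity) ?_ _) hterm0
    linarith
  · have h1 : (1:ℝ) - ‖ξ‖ ≤ ‖ω - ξ‖ := by
      have := norm_sub_norm_le ω ξ
      rw [hω] at this; linarith [abs_le.mp (abs_norm_sub_norm_le ω ξ)]
    refine le_trans (pow_le_pow_left₀ (by positivity) ?_ _) hterm1
    linarith

lemma q_up (m : ℕ) (hm : 1 ≤ m) (ω ξ : E) (hω : ‖ω‖ = 1) :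
    ∑ ℓ ∈ Finset.range m, (‖ω - ξ‖^2)^ℓ * (‖ξ‖^2)^(m-1-ℓ) ≤
      (m:ℝ) * (1 + ‖ξ‖)^(2*(m-1)) := by
  have hr : (0:ℝ) ≤ 1 + ‖ξ‖ := by positivity
  have hb : ∀ ℓ ∈ Finset.range m,
      (‖ω - ξ‖^2)^ℓ * (‖ξ‖^2)^(m-1-ℓ) ≤ (1 + ‖ξ‖)^(2*(m-1)) := by
    intro ℓ hℓ
    have hℓm : ℓ ≤ m - 1 := by
      have := Finset.mem_range.mp hℓ; omega
    have h1 : ‖ω - ξ‖^2 ≤ (1 + ‖ξ‖)^2 := by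
      have : ‖ω - ξ‖ ≤ 1 + ‖ξ‖ := by
        calc ‖ω - ξ‖ ≤ ‖ω‖ + ‖ξ‖ := norm_sub_le ω ξ
          _ = 1 + ‖ξ‖ := by rw [hω]
      exact pow_le_pow_left₀ (norm_nonneg _) this 2
    have h2 : ‖ξ‖^2 ≤ (1 + ‖ξ‖)^2 :=
      pow_le_pow_left₀ (norm_nonneg _) (by linarith [norm_nonneg ξ]) 2
    calc (‖ω - ξ‖^2)^ℓ * (‖ξ‖^2)^(m-1-ℓ)
        ≤ ((1 + ‖ξ‖)^2)^ℓ * ((1 + ‖ξ‖)^2)^(m-1-ℓ) := by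
          apply mul_le_mul (pow_le_pow_left₀ (by positivity) h1 ℓ)
            (pow_le_pow_left₀ (by positivity) h2 (m-1-ℓ)) (by positivity) (by positivity)
      _ = ((1 + ‖ξ‖)^2)^(ℓ + (m-1-ℓ)) := by rw [pow_add]
      _ = (1 + ‖ξ‖)^(2*(m-1)) := by
          rw [← pow_mul]
          congr 1
          omega
  calc ∑ ℓ ∈ Finset.range m, (‖ω - ξ‖^2)^ℓ * (‖ξ‖^2)^(m-1-ℓ)
      ≤ ∑ _ℓ ∈ Finset.range m, (1 + ‖ξ‖)^(2*(m-1)) := Finset.sum_le_sum hb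
    _ = (m:ℝ) * (1 + ‖ξ‖)^(2*(m-1)) := by
        rw [Finset.sum_const, Finset.card_range, nsmul_eq_mul]

end Aux

lemma pow_mul_exp_neg_le (s : ℝ) (hs : 0 ≤ s) (j : ℕ) :
    s^j * Real.exp (-s) ≤ (j ! : ℝ) := by
  have hsum := Real.sum_le_exp_of_nonneg hs (j+1)
  have hsingle : s^j / (j ! : ℝ) ≤ Real.exp s := by
    refine le_trans (Finset.single_le_sum (f := fun i => s^i / (i ! : ℝ)) ?_ (Finset.self_mem_range_succ j)) hsum
    intro i _; positivity
  have hfac : (0:ℝ) < (j ! : ℝ) := by exact_mod_cast Nat.factorial_pos j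
  have h2 : s^j ≤ (j ! : ℝ) * Real.exp s := by
    rw [div_le_iff₀ hfac] at hsingle; linarith [hsingle]
  calc s^j * Real.exp (-s) ≤ ((j ! : ℝ) * Real.exp s) * Real.exp (-s) :=
        mul_le_mul_of_nonneg_right h2 (le_of_lt (Real.exp_pos _))
    _ = (j ! : ℝ) := by rw [mul_assoc, ← Real.exp_add]; simp


lemma inv_iter_norm (k : ℕ) :
    ‖iteratedFDerivWithin ℝ k (Inv.inv : ℝ → ℝ) {0}ᶜ 1‖ = (Nat.factorial k : ℝ) := by
  rw [iteratedFDerivWithin_of_isOpen k isOpen_compl_singleton (by simp : (1:ℝ) ∈ ({0}ᶜ : Set ℝ))]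
  rw [norm_iteratedFDeriv_eq_norm_iteratedDeriv, iteratedDeriv_eq_iterate, iter_deriv_inv]
  rw [one_zpow, mul_one, Real.norm_eq_abs, abs_mul, abs_pow, abs_neg, abs_one, one_pow, one_mul,
    Nat.abs_cast]

lemma exp_hasDerivAt (c t : ℝ) :
    HasDerivAt (fun t : ℝ => Real.exp (-c * t)) (Real.exp (-c*t) * (-c)) t := by
  have h := ((hasDerivAt_id t).const_mul (-c)).exp
  simpa [mul_comm] using h

lemma g_iteratedDeriv (c : ℝ) : ∀ k,
    iteratedDeriv (k+1) (fun t : ℝ => t * Real.exp (-c * t)) =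
      fun t => (-1)^k * c^k * Real.exp (-c*t) * (((k:ℝ)+1) - c*t) := by
  intro k
  induction k with
  | zero =>
      rw [iteratedDeriv_one]
      funext t
      have h1 : HasDerivAt (fun t : ℝ => t * Real.exp (-c * t))
          (1 * Real.exp (-c*t) + t * (Real.exp (-c*t) * (-c))) t :=
        (hasDerivAt_id t).mul (exp_hasDerivAt c t)
      rw [h1.deriv]; push_cast; ring
  | succ k ih =>
      rw [iteratedDeriv_succ, ih]
      funext t
      have h1 : HasDerivAt (fun t : ℝ => (-1:ℝ)^k * c^k * Real.exp (-c*t) * (((k:ℝ)+1) - c*t))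
          (((-1:ℝ)^k * c^k * (Real.exp (-c*t) * (-c))) * (((k:ℝ)+1) - c*t)
            + ((-1:ℝ)^k * c^k * Real.exp (-c*t)) * (0 - c * 1)) t := by
        exact ((exp_hasDerivAt c t).const_mul ((-1:ℝ)^k * c^k)).mul
          ((hasDerivAt_const t ((k:ℝ)+1)).sub ((hasDerivAt_id t).const_mul c))
      rw [h1.deriv]
      push_cast; ring


section Aux2
variable {E : Type*} [NormedAddCommGroup E] [InnerProductSpace ℝ E]

section
variable (m : ℕ)

noncomputable def Qf (ω ξ : E) : ℝ := ∑ ℓ ∈ Finset.range m, (‖ω - ξ‖^2)^ℓ * (‖ξ‖^2)^(m-1-ℓ)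

lemma Qf_pos (hm : 1 ≤ m) (ω ξ : E) (hω : ‖ω‖ = 1) : 0 < Qf m ω ξ := by
  have h := q_pos_lb m hm ω ξ hω
  have : (0:ℝ) < ((1 + ‖ξ‖)/4)^(2*(m-1)) := by positivity
  exact lt_of_lt_of_le this h

lemma Qf_inv_le (hm : 1 ≤ m) (ω ξ : E) (hω : ‖ω‖ = 1) :
    (Qf m ω ξ)⁻¹ ≤ (4:ℝ)^(2*(m-1)) * (1 + ‖ξ‖) ^ (-(2*(m:ℝ) - 2)) := by
  have hr0 : (0:ℝ) < 1 + ‖ξ‖ := by positivity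
  have hlb : (0:ℝ) < ((1 + ‖ξ‖)/4)^(2*(m-1)) := by positivity
  have h := q_pos_lb m hm ω ξ hω
  have h1 : (Qf m ω ξ)⁻¹ ≤ (((1 + ‖ξ‖)/4)^(2*(m-1)))⁻¹ :=
    inv_anti₀ hlb h
  refine le_trans h1 (le_of_eq ?_)
  rw [← inv_pow, inv_div, div_pow, div_eq_mul_inv]
  congr 1
  rw [← Real.rpow_natCast (1 + ‖ξ‖) (2*(m-1)), ← Real.rpow_neg hr0.le]
  congr 1
  rw [Nat.cast_mul, Nat.cast_sub hm]
  push_cast; ring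

lemma P_bound (hm : 1 ≤ m) : ∀ i : ℕ, ∃ K : ℝ, 0 < K ∧ ∀ ω : E, ‖ω‖ = 1 → ∀ j, j ≤ i → ∀ ξ₀ : E,
    ‖iteratedFDeriv ℝ j (fun ξ : E => (Qf m ω ξ)⁻¹) ξ₀‖ ≤
      K * (1 + ‖ξ₀‖) ^ (-(2*(m:ℝ) - 2) - (j : ℝ)) := by
  intro i
  obtain ⟨Kq, hKq, hQb⟩ := (PF_q (E := E) m hm).2 i
  set A : ℝ := max 1 ((4:ℝ)^(2*(m-1)) * Kq) with hA
  have hA1 : (1:ℝ) ≤ A := le_max_left _ _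
  have hA2 : (4:ℝ)^(2*(m-1)) * Kq ≤ A := le_max_right _ _
  refine ⟨(4:ℝ)^(2*(m-1)) * (i ! : ℝ) * (i ! : ℝ) * A^i, by positivity,
    fun ω hω j hj ξ₀ => ?_⟩
  have hQpos : ∀ ξ : E, 0 < Qf m ω ξ := fun ξ => Qf_pos m hm ω ξ hω
  have hQc : ContDiff ℝ (⊤ : ℕ∞) (Qf m ω) := (PF_q (E := E) m hm).1 ω
  have hPc : ContDiff ℝ (⊤ : ℕ∞) (fun ξ : E => (Qf m ω ξ)⁻¹) :=
    hQc.inv (fun ξ => ne_of_gt (hQpos ξ))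
  have hr0 : (0:ℝ) < 1 + ‖ξ₀‖ := by positivity
  set c : ℝ := Qf m ω ξ₀ with hc
  have hcpos : 0 < c := hQpos ξ₀
  set u : E → ℝ := fun ξ => c⁻¹ * Qf m ω ξ with hu
  have huc : ContDiff ℝ (⊤ : ℕ∞) u := contDiff_const.mul hQc
  have hu1 : u ξ₀ = 1 := inv_mul_cancel₀ (ne_of_gt hcpos)
  have hcompeq : (Inv.inv ∘ u) = fun ξ : E => c * (Qf m ω ξ)⁻¹ := by
    funext ξ
    simp only [Function.comp_apply, hu, mul_inv, inv_inv]
  have hcompc : ContDiff ℝ (⊤ : ℕ∞) (Inv.inv ∘ u) := by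
    rw [hcompeq]; exact contDiff_const.mul hPc
  -- rewrite p as c⁻¹ • (inv ∘ u)
  have hfun : (fun ξ : E => (Qf m ω ξ)⁻¹) = fun ξ : E => c⁻¹ • ((Inv.inv ∘ u) ξ) := by
    funext ξ
    rw [hcompeq]
    simp only [smul_eq_mul]
    field_simp
  have hsmul : iteratedFDeriv ℝ j (fun ξ : E => (Qf m ω ξ)⁻¹) ξ₀
      = c⁻¹ • iteratedFDeriv ℝ j (Inv.inv ∘ u) ξ₀ := by
    rw [hfun]
    exact iteratedFDeriv_const_smul_apply' (hcompc.contDiffAt.of_le (by exact_mod_cast le_top))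
  -- bound on the composition
  set D : ℝ := A * (1 + ‖ξ₀‖)⁻¹ with hD
  have hpowinv : ∀ k : ℕ, ((1 + ‖ξ₀‖) ^ (k:ℕ))⁻¹ = (1 + ‖ξ₀‖) ^ (-(k:ℝ)) := by
    intro k
    rw [← Real.rpow_natCast (1 + ‖ξ₀‖) k, ← Real.rpow_neg hr0.le]
  have hcomp : ‖iteratedFDeriv ℝ j (Inv.inv ∘ u) ξ₀‖ ≤ (j ! : ℝ) * (i ! : ℝ) * D ^ j := by
    rw [← iteratedFDerivWithin_univ]
    apply norm_iteratedFDerivWithin_comp_le (N := (j : WithTop ℕ∞))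
      (contDiffOn_inv ℝ) (huc.contDiffOn.of_le (mod_cast le_top)) le_rfl
      isOpen_compl_singleton.uniqueDiffOn uniqueDiffOn_univ
      (fun ξ _ => by
        simp only [Set.mem_compl_iff, Set.mem_singleton_iff]
        exact ne_of_gt (mul_pos (inv_pos.2 hcpos) (hQpos ξ)))
      (Set.mem_univ ξ₀)
    · intro k hk
      rw [hu1, inv_iter_norm]
      exact_mod_cast Nat.factorial_le (le_trans hk hj)
    · intro k hk1 hkj
      rw [iteratedFDerivWithin_univ]
      have hsm : iteratedFDeriv ℝ k u ξ₀ = c⁻¹ • iteratedFDeriv ℝ k (Qf m ω) ξ₀ := by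
        have h5 := iteratedFDeriv_const_smul_apply' (𝕜 := ℝ) (a := c⁻¹) (f := Qf m ω)
          (x := ξ₀) (i := k) (hQc.contDiffAt.of_le (by exact_mod_cast le_top))
        simp only [smul_eq_mul] at h5
        rw [hu]
        exact h5
      rw [hsm]
      have hns := norm_smul c⁻¹ (iteratedFDeriv ℝ k (Qf m ω) ξ₀)
      rw [hns, Real.norm_eq_abs, abs_of_pos (inv_pos.mpr hcpos)]
      have h1 : ‖iteratedFDeriv ℝ k (Qf m ω) ξ₀‖ ≤ Kq * (1 + ‖ξ₀‖) ^ ((2*(m:ℝ)-2) - (k:ℝ)) :=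
        hQb ω hω k (le_trans hkj hj) ξ₀
      have h2 : c⁻¹ ≤ (4:ℝ)^(2*(m-1)) * (1 + ‖ξ₀‖) ^ (-(2*(m:ℝ) - 2)) :=
        Qf_inv_le m hm ω ξ₀ hω
      calc c⁻¹ * ‖iteratedFDeriv ℝ k (Qf m ω) ξ₀‖
          ≤ ((4:ℝ)^(2*(m-1)) * (1 + ‖ξ₀‖) ^ (-(2*(m:ℝ) - 2))) *
              (Kq * (1 + ‖ξ₀‖) ^ ((2*(m:ℝ)-2) - (k:ℝ))) := by
            apply mul_le_mul h2 h1 (norm_nonneg _) (by positivity)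
        _ = ((4:ℝ)^(2*(m-1)) * Kq) * (1 + ‖ξ₀‖) ^ (-(k:ℝ)) := by
            rw [show (-(k:ℝ)) = (-(2*(m:ℝ) - 2)) + ((2*(m:ℝ)-2) - (k:ℝ)) by ring,
              Real.rpow_add hr0]
            ring
        _ ≤ A^k * (1 + ‖ξ₀‖) ^ (-(k:ℝ)) := by
            apply mul_le_mul_of_nonneg_right _ (by positivity)
            calc (4:ℝ)^(2*(m-1)) * Kq ≤ A := hA2
              _ ≤ A^k := le_self_pow₀ (by linarith) (by omega)
        _ = D^k := by
            rw [hD, mul_pow, inv_pow, hpowinv k]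
  -- put everything together
  rw [hsmul]
  have hns := norm_smul c⁻¹ (iteratedFDeriv ℝ j (Inv.inv ∘ u) ξ₀)
  rw [hns, Real.norm_eq_abs, abs_of_pos (inv_pos.mpr hcpos)]
  have h2 : c⁻¹ ≤ (4:ℝ)^(2*(m-1)) * (1 + ‖ξ₀‖) ^ (-(2*(m:ℝ) - 2)) :=
    Qf_inv_le m hm ω ξ₀ hω
  calc c⁻¹ * ‖iteratedFDeriv ℝ j (Inv.inv ∘ u) ξ₀‖
      ≤ ((4:ℝ)^(2*(m-1)) * (1 + ‖ξ₀‖) ^ (-(2*(m:ℝ) - 2))) * ((j ! : ℝ) * (i ! : ℝ) * D ^ j) := by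
        apply mul_le_mul h2 hcomp (norm_nonneg _) (by positivity)
    _ ≤ ((4:ℝ)^(2*(m-1)) * (1 + ‖ξ₀‖) ^ (-(2*(m:ℝ) - 2))) *
          ((i ! : ℝ) * (i ! : ℝ) * (A^i * (1 + ‖ξ₀‖) ^ (-(j:ℝ)))) := by
        apply mul_le_mul_of_nonneg_left _ (by positivity)
        have hDj : D ^ j = A^j * (1 + ‖ξ₀‖) ^ (-(j:ℝ)) := by
          rw [hD, mul_pow, inv_pow, hpowinv j]
        rw [hDj]
        have hfj : (j ! : ℝ) ≤ (i ! : ℝ) := by exact_mod_cast Nat.factorial_le hj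
        have hAj : A^j ≤ A^i := pow_le_pow_right₀ hA1 hj
        have hfj0 : (0:ℝ) < (j ! : ℝ) := by exact_mod_cast Nat.factorial_pos j
        have h4 : A^j * (1 + ‖ξ₀‖) ^ (-(j:ℝ)) ≤ A^i * (1 + ‖ξ₀‖) ^ (-(j:ℝ)) :=
          mul_le_mul_of_nonneg_right hAj (by positivity)
        calc (j ! : ℝ) * (i ! : ℝ) * (A^j * (1 + ‖ξ₀‖) ^ (-(j:ℝ)))
            ≤ (i ! : ℝ) * (i ! : ℝ) * (A^j * (1 + ‖ξ₀‖) ^ (-(j:ℝ))) := by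
              apply mul_le_mul_of_nonneg_right
                (mul_le_mul_of_nonneg_right hfj (by positivity)) (by positivity)
          _ ≤ (i ! : ℝ) * (i ! : ℝ) * (A^i * (1 + ‖ξ₀‖) ^ (-(j:ℝ))) := by
              apply mul_le_mul_of_nonneg_left h4 (by positivity)
    _ = ((4:ℝ)^(2*(m-1)) * (i ! : ℝ) * (i ! : ℝ) * A^i) *
          (1 + ‖ξ₀‖) ^ (-(2*(m:ℝ) - 2) - (j:ℝ)) := by
        rw [show (-(2*(m:ℝ) - 2) - (j:ℝ)) = (-(2*(m:ℝ) - 2)) + (-(j:ℝ)) by ring,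
          Real.rpow_add hr0]
        ring
end

lemma Qf_contDiff (m : ℕ) (hm : 1 ≤ m) (ω : E) : ContDiff ℝ (⊤ : ℕ∞) (Qf m ω) :=
  (PF_q m hm).1 ω

lemma g_bound (c : ℝ) (hc : 0 ≤ c) (N k : ℕ) (hk : k ≤ N) :
    ‖iteratedFDeriv ℝ k (fun t : ℝ => t * Real.exp (-c * t)) 1‖ ≤ 2*(N ! : ℝ) + 1 := by
  rw [norm_iteratedFDeriv_eq_norm_iteratedDeriv, Real.norm_eq_abs]
  have hN1 : (1:ℝ) ≤ (N ! : ℝ) := by exact_mod_cast Nat.one_le_iff_ne_zero.mpr (Nat.factorial_ne_zero N)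
  match k with
  | 0 =>
      rw [iteratedDeriv_zero]
      have : (1:ℝ) * Real.exp (-c * 1) = Real.exp (-c) := by rw [one_mul, mul_one]
      rw [this, abs_of_pos (Real.exp_pos _)]
      have := Real.exp_le_one_iff.mpr (by linarith : -c ≤ 0)
      linarith
  | (j+1) =>
      rw [g_iteratedDeriv c j]
      have hj1 : j + 1 ≤ N := hk
      have habs : |(-1:ℝ)^j * c^j * Real.exp (-c*1) * (((j:ℝ)+1) - c*1)|
          = c^j * Real.exp (-c) * |((j:ℝ)+1) - c| := by
        rw [mul_one, mul_one, abs_mul, abs_mul, abs_mul, abs_pow, abs_neg, abs_one, one_pow,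
          one_mul, abs_of_nonneg (pow_nonneg hc j), abs_of_nonneg (Real.exp_pos _).le]
      rw [habs]
      have h1 : |((j:ℝ)+1) - c| ≤ ((j:ℝ)+1) + c := by
        refine le_trans (abs_sub _ _) ?_
        rw [abs_of_nonneg (by positivity : (0:ℝ) ≤ (j:ℝ)+1), abs_of_nonneg hc]
      have hexp : (0:ℝ) < Real.exp (-c) := Real.exp_pos _
      have hcj : (0:ℝ) ≤ c^j * Real.exp (-c) := by positivity
      have h2 : c^j * Real.exp (-c) * |((j:ℝ)+1) - c|
          ≤ c^j * Real.exp (-c) * (((j:ℝ)+1) + c) := mul_le_mul_of_nonneg_left h1 hcj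
      refine le_trans h2 ?_
      have h3 : c^j * Real.exp (-c) ≤ (j ! : ℝ) := pow_mul_exp_neg_le c hc j
      have h4 : c^(j+1) * Real.exp (-c) ≤ ((j+1) ! : ℝ) := pow_mul_exp_neg_le c hc (j+1)
      have h5 : c^j * Real.exp (-c) * (((j:ℝ)+1) + c)
          = ((j:ℝ)+1) * (c^j * Real.exp (-c)) + c^(j+1) * Real.exp (-c) := by ring
      rw [h5]
      have h6 : ((j:ℝ)+1) * (c^j * Real.exp (-c)) ≤ ((j:ℝ)+1) * (j ! : ℝ) :=
        mul_le_mul_of_nonneg_left h3 (by positivity)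
      have h7 : ((j:ℝ)+1) * (j ! : ℝ) = ((j+1)! : ℝ) := by
        rw [Nat.factorial_succ]; push_cast; ring
      have h8 : ((j+1)! : ℝ) ≤ (N ! : ℝ) := by exact_mod_cast Nat.factorial_le hj1
      linarith

end Aux2

set_option maxHeartbeats 1000000 in
theorem stmt_10 (n m : ℕ) (hn : 1 ≤ n) (hm : 1 ≤ m) (N : ℕ) :
    ∃ C > 0, ∀ ε : ℝ, 0 < ε → ∀ ω : EuclideanSpace ℝ (Fin n), ‖ω‖ = 1 →
      ContDiff ℝ (⊤ : ℕ∞) (fun ξ : EuclideanSpace ℝ (Fin n) =>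
        (∑ ℓ ∈ Finset.range m, ‖ω - ξ‖ ^ (2 * ℓ) * ‖ξ‖ ^ (2 * (m - 1 - ℓ)))⁻¹ *
          Real.exp (-ε * (∑ ℓ ∈ Finset.range m, ‖ω - ξ‖ ^ (2 * ℓ) * ‖ξ‖ ^ (2 * (m - 1 - ℓ)))⁻¹)) ∧
      ∀ ξ : EuclideanSpace ℝ (Fin n),
        ‖iteratedFDeriv ℝ N (fun ξ : EuclideanSpace ℝ (Fin n) =>
            (∑ ℓ ∈ Finset.range m, ‖ω - ξ‖ ^ (2 * ℓ) * ‖ξ‖ ^ (2 * (m - 1 - ℓ)))⁻¹ *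
              Real.exp (-ε * (∑ ℓ ∈ Finset.range m,
                ‖ω - ξ‖ ^ (2 * ℓ) * ‖ξ‖ ^ (2 * (m - 1 - ℓ)))⁻¹)) ξ‖ ≤
          C * Real.sqrt (1 + ‖ξ‖ ^ 2) ^ (-(2 * (m : ℝ) - 2 + N)) := by
  classical
  obtain ⟨Kp, hKp, hPb⟩ := P_bound (E := EuclideanSpace ℝ (Fin n)) m hm N
  set B : ℝ := max 1 ((m:ℝ) * Kp) with hB
  have hB1 : (1:ℝ) ≤ B := le_max_left _ _
  have hB2 : (m:ℝ) * Kp ≤ B := le_max_right _ _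
  have hBpos : 0 < B := lt_of_lt_of_le one_pos hB1
  set C0 : ℝ := 2*(N ! : ℝ) + 1 with hC0
  have hNfac : (0:ℝ) < (N ! : ℝ) := by exact_mod_cast Nat.factorial_pos N
  have hC0pos : 0 < C0 := by rw [hC0]; linarith
  refine ⟨(4:ℝ)^(2*(m-1)) * ((N ! : ℝ) * C0 * B^N), by positivity, ?_⟩
  intro ε hε ω hω
  have hsum : ∀ ξ : EuclideanSpace ℝ (Fin n),
      (∑ ℓ ∈ Finset.range m, ‖ω - ξ‖ ^ (2 * ℓ) * ‖ξ‖ ^ (2 * (m - 1 - ℓ))) = Qf m ω ξ := by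
    intro ξ
    unfold Qf
    exact Finset.sum_congr rfl fun ℓ _ => by rw [pow_mul, pow_mul]
  have heq : (fun ξ : EuclideanSpace ℝ (Fin n) =>
      (∑ ℓ ∈ Finset.range m, ‖ω - ξ‖ ^ (2 * ℓ) * ‖ξ‖ ^ (2 * (m - 1 - ℓ)))⁻¹ *
        Real.exp (-ε * (∑ ℓ ∈ Finset.range m, ‖ω - ξ‖ ^ (2 * ℓ) * ‖ξ‖ ^ (2 * (m - 1 - ℓ)))⁻¹))
      = fun ξ => (Qf m ω ξ)⁻¹ * Real.exp (-ε * (Qf m ω ξ)⁻¹) := by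
    funext ξ; rw [hsum ξ]
  have hQpos : ∀ ξ, 0 < Qf m ω ξ := fun ξ => Qf_pos m hm ω ξ hω
  have hQc : ContDiff ℝ (⊤:ℕ∞) (Qf m ω) := Qf_contDiff m hm ω
  have hPc : ContDiff ℝ (⊤:ℕ∞) (fun ξ : EuclideanSpace ℝ (Fin n) => (Qf m ω ξ)⁻¹) :=
    hQc.inv fun ξ => (hQpos ξ).ne'
  constructor
  · rw [heq]
    exact hPc.mul (Real.contDiff_exp.comp (contDiff_const.mul hPc))
  · intro ξ₀
    rw [heq]
    have hr0 : (0:ℝ) < 1 + ‖ξ₀‖ := by positivity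
    set c : ℝ := (Qf m ω ξ₀)⁻¹ with hcdef
    have hcpos : 0 < c := inv_pos.mpr (hQpos ξ₀)
    set v : EuclideanSpace ℝ (Fin n) → ℝ := fun ξ => c⁻¹ * (Qf m ω ξ)⁻¹ with hv
    set ce : ℝ := ε * c with hce
    have hce0 : (0:ℝ) ≤ ce := by positivity
    set g : ℝ → ℝ := fun s => s * Real.exp (-ce * s) with hg
    have hgc : ContDiff ℝ (⊤:ℕ∞) g :=
      contDiff_id.mul (Real.contDiff_exp.comp (contDiff_const.mul contDiff_id))
    have hvc : ContDiff ℝ (⊤:ℕ∞) v := contDiff_const.mul hPc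
    have hcompc : ContDiff ℝ (⊤:ℕ∞) (g ∘ v) := hgc.comp hvc
    have hfeq : (fun ξ : EuclideanSpace ℝ (Fin n) =>
        (Qf m ω ξ)⁻¹ * Real.exp (-ε * (Qf m ω ξ)⁻¹)) = fun ξ => c • ((g ∘ v) ξ) := by
      funext ξ
      simp only [hg, hv, hce, Function.comp_apply, smul_eq_mul]
      have hc0 : c ≠ 0 := hcpos.ne'
      have harg : -(ε * c) * (c⁻¹ * (Qf m ω ξ)⁻¹) = -ε * (Qf m ω ξ)⁻¹ := by
        rw [show -(ε * c) * (c⁻¹ * (Qf m ω ξ)⁻¹)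
            = -ε * (c * c⁻¹) * (Qf m ω ξ)⁻¹ by ring, mul_inv_cancel₀ hc0]
        ring
      rw [harg]
      rw [show c * (c⁻¹ * (Qf m ω ξ)⁻¹ * Real.exp (-ε * (Qf m ω ξ)⁻¹))
          = (c * c⁻¹) * ((Qf m ω ξ)⁻¹ * Real.exp (-ε * (Qf m ω ξ)⁻¹)) by ring,
        mul_inv_cancel₀ hc0, one_mul]
    rw [hfeq]
    have hsmul := iteratedFDeriv_const_smul_apply' (𝕜 := ℝ) (a := c) (f := g ∘ v) (x := ξ₀)
      (i := N) (hcompc.contDiffAt.of_le (by exact_mod_cast le_top))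
    rw [hsmul]
    have hns := norm_smul c (iteratedFDeriv ℝ N (g ∘ v) ξ₀)
    rw [hns, Real.norm_eq_abs, abs_of_pos hcpos]
    have hv1 : v ξ₀ = 1 := by
      rw [hv]; exact inv_mul_cancel₀ hcpos.ne'
    have hpow : ((1:ℝ)+‖ξ₀‖)^(2*(m-1)) = (1+‖ξ₀‖) ^ (2*(m:ℝ)-2) := by
      rw [← Real.rpow_natCast (1+‖ξ₀‖) (2*(m-1))]
      congr 1
      rw [Nat.cast_mul, Nat.cast_sub hm]; push_cast; ring
    have hcinv : c⁻¹ ≤ (m:ℝ) * (1+‖ξ₀‖) ^ (2*(m:ℝ)-2) := by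
      rw [hcdef, inv_inv, ← hpow]
      exact q_up m hm ω ξ₀ hω
    have hcomp : ‖iteratedFDeriv ℝ N (g ∘ v) ξ₀‖
        ≤ (N ! : ℝ) * C0 * (B * (1+‖ξ₀‖)⁻¹)^N := by
      apply norm_iteratedFDeriv_comp_le (N := (N : WithTop ℕ∞))
        (hgc.of_le (mod_cast le_top)) (hvc.of_le (mod_cast le_top)) le_rfl ξ₀
      · intro k hk
        rw [hv1]
        exact g_bound ce hce0 N k hk
      · intro k hk1 hkN
        have hsm := iteratedFDeriv_const_smul_apply' (𝕜 := ℝ) (a := c⁻¹)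
          (f := fun ξ : EuclideanSpace ℝ (Fin n) => (Qf m ω ξ)⁻¹) (x := ξ₀) (i := k)
          (hPc.contDiffAt.of_le (by exact_mod_cast le_top))
        simp only [smul_eq_mul] at hsm
        rw [hv, hsm]
        have hns2 := norm_smul c⁻¹
          (iteratedFDeriv ℝ k (fun ξ : EuclideanSpace ℝ (Fin n) => (Qf m ω ξ)⁻¹) ξ₀)
        rw [hns2, Real.norm_eq_abs, abs_of_pos (inv_pos.mpr hcpos)]
        have h1 := hPb ω hω k hkN ξ₀
        have hpowinv : ((1 + ‖ξ₀‖) ^ (k:ℕ))⁻¹ = (1 + ‖ξ₀‖) ^ (-(k:ℝ)) := by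
          rw [← Real.rpow_natCast (1 + ‖ξ₀‖) k, ← Real.rpow_neg hr0.le]
        calc c⁻¹ * ‖iteratedFDeriv ℝ k (fun ξ : EuclideanSpace ℝ (Fin n) => (Qf m ω ξ)⁻¹) ξ₀‖
            ≤ ((m:ℝ) * (1+‖ξ₀‖) ^ (2*(m:ℝ)-2)) *
                (Kp * (1 + ‖ξ₀‖) ^ (-(2*(m:ℝ) - 2) - (k:ℝ))) :=
              mul_le_mul hcinv h1 (norm_nonneg _) (by positivity)
          _ = ((m:ℝ) * Kp) * (1 + ‖ξ₀‖) ^ (-(k:ℝ)) := by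
              rw [show (-(k:ℝ)) = (2*(m:ℝ)-2) + (-(2*(m:ℝ) - 2) - (k:ℝ)) by ring,
                Real.rpow_add hr0]
              ring
          _ ≤ B^k * (1 + ‖ξ₀‖) ^ (-(k:ℝ)) := by
              apply mul_le_mul_of_nonneg_right _ (by positivity)
              calc (m:ℝ) * Kp ≤ B := hB2
                _ ≤ B^k := le_self_pow₀ (by linarith) (by omega)
          _ = (B * (1+‖ξ₀‖)⁻¹)^k := by
              rw [mul_pow, inv_pow, hpowinv]
    -- final assembly
    have hcle : c ≤ (4:ℝ)^(2*(m-1)) * (1 + ‖ξ₀‖) ^ (-(2*(m:ℝ) - 2)) := by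
      rw [hcdef]; exact Qf_inv_le m hm ω ξ₀ hω
    have hpowinvN : ((1 + ‖ξ₀‖) ^ (N:ℕ))⁻¹ = (1 + ‖ξ₀‖) ^ (-(N:ℝ)) := by
      rw [← Real.rpow_natCast (1 + ‖ξ₀‖) N, ← Real.rpow_neg hr0.le]
    have hstep : c * ‖iteratedFDeriv ℝ N (g ∘ v) ξ₀‖
        ≤ ((4:ℝ)^(2*(m-1)) * ((N ! : ℝ) * C0 * B^N)) * (1 + ‖ξ₀‖) ^ (-(2*(m:ℝ)-2+N)) := by
      calc c * ‖iteratedFDeriv ℝ N (g ∘ v) ξ₀‖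
          ≤ ((4:ℝ)^(2*(m-1)) * (1 + ‖ξ₀‖) ^ (-(2*(m:ℝ) - 2))) *
              ((N ! : ℝ) * C0 * (B * (1+‖ξ₀‖)⁻¹)^N) :=
            mul_le_mul hcle hcomp (norm_nonneg _) (by positivity)
        _ = ((4:ℝ)^(2*(m-1)) * ((N ! : ℝ) * C0 * B^N)) * ((1 + ‖ξ₀‖) ^ (-(2*(m:ℝ) - 2)) * (1 + ‖ξ₀‖) ^ (-(N:ℝ))) := by
            rw [mul_pow, inv_pow, hpowinvN]
            ring
        _ = ((4:ℝ)^(2*(m-1)) * ((N ! : ℝ) * C0 * B^N)) * (1 + ‖ξ₀‖) ^ (-(2*(m:ℝ)-2+N)) := by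
            rw [← Real.rpow_add hr0]
            congr 2
            ring
    refine le_trans hstep ?_
    apply mul_le_mul_of_nonneg_left _ (by positivity)
    have hs0 : 0 < Real.sqrt (1+‖ξ₀‖^2) := Real.sqrt_pos.mpr (by positivity)
    have hs1 : Real.sqrt (1+‖ξ₀‖^2) ≤ 1 + ‖ξ₀‖ := by
      rw [show (1:ℝ)+‖ξ₀‖ = Real.sqrt ((1+‖ξ₀‖)^2) from (Real.sqrt_sq hr0.le).symm]
      apply Real.sqrt_le_sqrt
      nlinarith [norm_nonneg ξ₀]
    have hm1 : (1:ℝ) ≤ (m:ℝ) := by exact_mod_cast hm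
    exact Real.rpow_le_rpow_of_nonpos hs0 hs1 (by push_cast; nlinarith [Nat.cast_nonneg (α := ℝ) N])
end
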